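/- arXiv:1104.3024 — 5 statements merged into one kernel-verified Lean document; each statement's English description precedes it below -/
import Mathlib

section
/- Let m ≥ 1. The 2m elements w_k := s_k s_{k+1}⋯s_{m−1} s_m s_{m−1} s_{m−2}⋯s_1 for 1 ≤ k ≤ m−1 and w_{2m−k} := s_k s_{k−1}⋯s_1 for 0 ≤ k ≤ m (so w_{2m} is the identity) are pairwise distinct and are exactly the final elements of W_B^m; moreover each of these products is a reduced expression, i.e. ℓ(w_j) = 2m − j for all 1 ≤ j ≤ 2m. -/
/-! Weyl groups of type B, C, D realized as permutation groups of `ℕ`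
(using indices `1,…,2m+1` resp. `1,…,2m`; all other natural numbers are fixed). -/

/-- The simple reflections `s_i` of `W_B^m`: `s_i = (i,i+1)(2m+1−i,2m+2−i)` for
`i = 1,…,m−1` and `s_m = (m,m+2)`. -/
def sB (m i : ℕ) : Equiv.Perm ℕ :=
  if i = m then Equiv.swap m (m + 2)
  else Equiv.swap i (i + 1) * Equiv.swap (2 * m + 1 - i) (2 * m + 2 - i)

/-- The simple reflections of `W_C^m`: `s_i = (i,i+1)(2m−i,2m+1−i)` for
`i = 1,…,m−1` and `s'_m = (m,m+1)`. -/
def sC (m i : ℕ) : Equiv.Perm ℕ :=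
  if i = m then Equiv.swap m (m + 1)
  else Equiv.swap i (i + 1) * Equiv.swap (2 * m - i) (2 * m + 1 - i)

/-- The simple reflections of `W_D^m`: `s_i = (i,i+1)(2m−i,2m+1−i)` for
`i = 1,…,m−1` and `s_m = (m−1,m+1)(m,m+2)`. -/
def sD (m i : ℕ) : Equiv.Perm ℕ :=
  if i = m then Equiv.swap (m - 1) (m + 1) * Equiv.swap m (m + 2)
  else Equiv.swap i (i + 1) * Equiv.swap (2 * m - i) (2 * m + 1 - i)

/-- The Weyl group `W_B^m` of type `B_m`: permutations of `{1,…,2m+1}` with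
`σ(i) + σ(2m+2−i) = 2m+2` for all `1 ≤ i ≤ 2m+1`. -/
def WB (m : ℕ) : Set (Equiv.Perm ℕ) :=
  {σ | σ 0 = 0 ∧ (∀ i, 2 * m + 1 < i → σ i = i) ∧
      ∀ i, 1 ≤ i → i ≤ 2 * m + 1 → σ i + σ (2 * m + 2 - i) = 2 * m + 2}

/-- The Weyl group `W_C^m` of type `C_m`: permutations of `{1,…,2m}` with
`σ(i) + σ(2m+1−i) = 2m+1` for all `1 ≤ i ≤ 2m`. -/
def WC (m : ℕ) : Set (Equiv.Perm ℕ) :=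
  {σ | σ 0 = 0 ∧ (∀ i, 2 * m < i → σ i = i) ∧
      ∀ i, 1 ≤ i → i ≤ 2 * m → σ i + σ (2 * m + 1 - i) = 2 * m + 1}

/-- The Weyl group `W_D^m` of type `D_m`: elements of `W_C^m` for which
`#{1 ≤ i ≤ m : σ(i) > m}` is even. -/
def WD (m : ℕ) : Set (Equiv.Perm ℕ) :=
  {σ | σ ∈ WC m ∧ Even (((Finset.Icc 1 m).filter (fun i => m < σ i)).card)}

/-- The length of `w ∈ W_B^m`:
`ℓ(w) = #{1 ≤ i ≤ j ≤ m : w(i) > w(j)} + #{1 ≤ i ≤ j ≤ m : w(i)+w(j) > 2m+2}`. -/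
def lenB (m : ℕ) (w : Equiv.Perm ℕ) : ℕ :=
  ((Finset.Icc 1 m ×ˢ Finset.Icc 1 m).filter
    (fun p => p.1 ≤ p.2 ∧ w p.2 < w p.1)).card +
  ((Finset.Icc 1 m ×ˢ Finset.Icc 1 m).filter
    (fun p => p.1 ≤ p.2 ∧ 2 * m + 2 < w p.1 + w p.2)).card

/-- The length of `w ∈ W_C^m`:
`ℓ(w) = #{1 ≤ i < j ≤ m : w(i) > w(j)} + #{1 ≤ i ≤ j ≤ m : w(i)+w(j) > 2m+1}`. -/
def lenC (m : ℕ) (w : Equiv.Perm ℕ) : ℕ :=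
  ((Finset.Icc 1 m ×ˢ Finset.Icc 1 m).filter
    (fun p => p.1 < p.2 ∧ w p.2 < w p.1)).card +
  ((Finset.Icc 1 m ×ˢ Finset.Icc 1 m).filter
    (fun p => p.1 ≤ p.2 ∧ 2 * m + 1 < w p.1 + w p.2)).card

/-- The `D`-length of `w ∈ W_D^m`:
`ℓ_D(w) = #{1 ≤ i < j ≤ m : w(i) > w(j)} + #{1 ≤ i < j ≤ m : w(i)+w(j) > 2m+1}`. -/
def lenD (m : ℕ) (w : Equiv.Perm ℕ) : ℕ :=
  ((Finset.Icc 1 m ×ˢ Finset.Icc 1 m).filter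
    (fun p => p.1 < p.2 ∧ w p.2 < w p.1)).card +
  ((Finset.Icc 1 m ×ˢ Finset.Icc 1 m).filter
    (fun p => p.1 < p.2 ∧ 2 * m + 1 < w p.1 + w p.2)).card

/-- The ascending product `s_a s_{a+1} ⋯ s_b` (the empty product `1` if `b < a`). -/
def prodAsc (s : ℕ → Equiv.Perm ℕ) (a b : ℕ) : Equiv.Perm ℕ :=
  ((List.range' a (b + 1 - a)).map s).prod

/-- The descending product `s_b s_{b−1} ⋯ s_a` (the empty product `1` if `b < a`). -/
def prodDesc (s : ℕ → Equiv.Perm ℕ) (a b : ℕ) : Equiv.Perm ℕ :=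
  (((List.range' a (b + 1 - a)).map s).reverse).prod

/-- `w ∈ W_B^m` is final if `w(1) ≠ m+1` and `w(2) < ⋯ < w(m)` are the `m−1`
smallest positive integers distinct from `w(1)` and from `2m+2−w(1)`. -/
def FinalB (m : ℕ) (w : Equiv.Perm ℕ) : Prop :=
  w 1 ≠ m + 1 ∧
  (∀ i j, 2 ≤ i → i < j → j ≤ m → w i < w j) ∧
  (∀ b i, 2 ≤ i → i ≤ m → 1 ≤ b → b ≠ w 1 → b ≠ 2 * m + 2 - w 1 → b < w i →
    ∃ j, 2 ≤ j ∧ j ≤ m ∧ w j = b)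

/-- The `j`-th final element of `W_B^m` (for `1 ≤ j ≤ 2m`):
`w_j = s_j s_{j+1} ⋯ s_{m-1} s_m s_{m-1} ⋯ s_1` for `1 ≤ j ≤ m−1` and
`w_{2m−k} = s_k s_{k-1} ⋯ s_1` for `0 ≤ k ≤ m`. -/
def wBfin (m j : ℕ) : Equiv.Perm ℕ :=
  if j < m then prodAsc (sB m) j m * prodDesc (sB m) 1 (m - 1)
  else prodDesc (sB m) 1 (2 * m - j)

/-! ### Auxiliary material for the proof -/

set_option maxHeartbeats 4000000 in
theorem _dummyHeartbeatAnchor : True := trivial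

section StmtAux

/-- Explicit description of the `j`-th final element `wBfin m j`. -/
def gfunX (m j x : ℕ) : ℕ :=
  if x = 0 then 0
  else if x = 1 then (if j ≤ m then 2*m+2-j else 2*m+1-j)
  else if x = 2*m+1 then (if j ≤ m then j else j+1)
  else if x ≤ (if j ≤ m then j else 2*m+1-j) then x - 1
  else if 2*m+2 - (if j ≤ m then j else 2*m+1-j) ≤ x ∧ x ≤ 2*m then x + 1
  else x

/-- Explicit description of `prodDesc (sB m) 1 k`. -/
def dfunX (m k x : ℕ) : ℕ :=
  if x = 0 then 0
  else if x = 1 then (if k = m then m + 2 else k + 1)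
  else if x = 2*m+1 then (if k = m then m else 2*m+1 - k)
  else if x ≤ k + 1 ∧ x ≤ m then x - 1
  else if 2*m+1 - k ≤ x ∧ m + 2 ≤ x ∧ x ≤ 2*m then x + 1
  else x

/-- Explicit description of `prodAsc (sB m) j m`. -/
def afunX (m j x : ℕ) : ℕ :=
  if x = m then 2*m+2-j
  else if x = m+2 then j
  else if j ≤ x ∧ x ≤ m-1 then x+1
  else if m+3 ≤ x ∧ x ≤ 2*m+2-j then x-1
  else x

set_option maxHeartbeats 4000000
set_option linter.unusedVariables false
set_option linter.unreachableTactic false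
set_option linter.unusedTactic false

lemma prodDesc_succX (s : ℕ → Equiv.Perm ℕ) (k : ℕ) :
    prodDesc s 1 (k+1) = s (k+1) * prodDesc s 1 k := by
  unfold prodDesc
  have h1 : k + 1 + 1 - 1 = k + 1 := by omega
  have h2 : k + 1 - 1 = k := by omega
  rw [h1, h2, show List.range' 1 (k+1) = List.range' 1 k ++ [1+k] by
    simpa using List.range'_concat (s := 1) (n := k) (step := 1)]
  simp [Nat.add_comm 1 k]

lemma prodAsc_succX (s : ℕ → Equiv.Perm ℕ) (j m : ℕ) (h : j ≤ m) :
    prodAsc s j m = s j * prodAsc s (j+1) m := by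
  unfold prodAsc
  have h1 : m + 1 - j = (m - j) + 1 := by omega
  have h2 : m + 1 - (j + 1) = m - j := by omega
  rw [h1, h2, show List.range' j (m-j+1) = j :: List.range' (j+1) (m-j) by
    simpa using List.range'_succ (s := j) (n := m - j) (step := 1)]
  simp

lemma dlemX (m : ℕ) (hm : 1 ≤ m) : ∀ k, k ≤ m → ∀ x, prodDesc (sB m) 1 k x = dfunX m k x := by
  intro k
  induction k with
  | zero =>
    intro _ x
    have h0 : prodDesc (sB m) 1 0 = 1 := by unfold prodDesc; norm_num
    rw [h0]
    unfold dfunX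
    simp only [Equiv.Perm.one_apply]
    split_ifs <;> first | omega | exact (‹False›).elim
  | succ k IH =>
    intro hk x
    rw [prodDesc_succX, Equiv.Perm.mul_apply, IH (by omega)]
    by_cases hkm : k + 1 = m
    · rw [show sB m (k+1) = Equiv.swap m (m+2) from if_pos hkm]
      unfold dfunX
      split_ifs <;>
        (simp only [Equiv.swap_apply_def]; split_ifs <;> first | omega | exact (‹False›).elim)
    · rw [show sB m (k+1) = Equiv.swap (k+1) (k+1+1) * Equiv.swap (2*m+1-(k+1)) (2*m+2-(k+1)) from if_neg hkm]
      rw [Equiv.Perm.mul_apply]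
      unfold dfunX
      split_ifs <;>
        (simp only [Equiv.swap_apply_def]; split_ifs <;> first | omega | exact (‹False›).elim)

lemma alemX (m : ℕ) (hm : 1 ≤ m) :
    ∀ n j, 1 ≤ j → j + n = m → ∀ x, prodAsc (sB m) j m x = afunX m j x := by
  intro n
  induction n with
  | zero =>
    intro j hj1 hjm x
    have hjm' : j = m := by omega
    rw [hjm']
    have h0 : prodAsc (sB m) m m = sB m m := by
      unfold prodAsc
      have h1 : m + 1 - m = 1 := by omega
      rw [h1]
      simp
    rw [h0, show sB m m = Equiv.swap m (m+2) from if_pos rfl]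
    unfold afunX
    simp only [Equiv.swap_apply_def]
    split_ifs <;> first | omega | exact (‹False›).elim
  | succ n IH =>
    intro j hj1 hjm x
    rw [prodAsc_succX _ _ _ (by omega), Equiv.Perm.mul_apply, IH (j+1) (by omega) (by omega)]
    rw [show sB m j = Equiv.swap j (j+1) * Equiv.swap (2*m+1-j) (2*m+2-j) from if_neg (by omega)]
    rw [Equiv.Perm.mul_apply]
    unfold afunX
    split_ifs <;>
      (simp only [Equiv.swap_apply_def]; split_ifs <;> first | omega | exact (‹False›).elim)

lemma hptX (m : ℕ) (hm : 1 ≤ m) :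
    ∀ j, 1 ≤ j → j ≤ 2*m → ∀ x, wBfin m j x = gfunX m j x := by
  intro j hj1 hj2 x
  by_cases hjm : j < m
  · rw [show wBfin m j = prodAsc (sB m) j m * prodDesc (sB m) 1 (m-1) from if_pos hjm]
    rw [Equiv.Perm.mul_apply, dlemX m hm (m-1) (by omega) x,
      alemX m hm (m - j) j hj1 (by omega) _]
    unfold dfunX gfunX
    split_ifs <;>
      (unfold afunX; split_ifs <;> first | omega | exact (‹False›).elim)
  · rw [show wBfin m j = prodDesc (sB m) 1 (2*m-j) from if_neg hjm]
    rw [dlemX m hm (2*m-j) (by omega) x]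
    unfold dfunX gfunX
    split_ifs <;> first | omega | exact (‹False›).elim

lemma gsymX (m j : ℕ) (hm : 1 ≤ m) (hj1 : 1 ≤ j) (hj2 : j ≤ 2*m) :
    ∀ x, 1 ≤ x → x ≤ 2*m+1 → gfunX m j x + gfunX m j (2*m+2-x) = 2*m+2 := by
  intro x h1 h2
  unfold gfunX
  split_ifs <;> first | omega | exact (‹False›).elim

lemma gfixX (m j : ℕ) (hm : 1 ≤ m) (hj1 : 1 ≤ j) (hj2 : j ≤ 2*m) :
    ∀ x, 2*m+1 < x → gfunX m j x = x := by
  intro x hx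
  unfold gfunX
  split_ifs <;> first | omega | exact (‹False›).elim

lemma g0X (m j : ℕ) : gfunX m j 0 = 0 := by
  unfold gfunX
  split_ifs <;> first | omega | exact (‹False›).elim

lemma gleX (m j : ℕ) (hm : 1 ≤ m) (hj1 : 1 ≤ j) (hj2 : j ≤ 2*m) :
    ∀ i, 2 ≤ i → i ≤ m → gfunX m j i ≤ m := by
  intro i h1 h2
  unfold gfunX
  split_ifs <;> first | omega | exact (‹False›).elim

lemma wb_memX (m j : ℕ) (hm : 1 ≤ m) (hj1 : 1 ≤ j) (hj2 : j ≤ 2*m) :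
    wBfin m j ∈ WB m := by
  have hp := hptX m hm j hj1 hj2
  refine ⟨?_, ?_, ?_⟩
  · rw [hp]; exact g0X m j
  · intro i hi; rw [hp]; exact gfixX m j hm hj1 hj2 i hi
  · intro i h1 h2; rw [hp, hp]; exact gsymX m j hm hj1 hj2 i h1 h2

lemma wb_finalX (m j : ℕ) (hm : 1 ≤ m) (hj1 : 1 ≤ j) (hj2 : j ≤ 2*m) :
    FinalB m (wBfin m j) := by
  have hp := hptX m hm j hj1 hj2
  refine ⟨?_, ?_, ?_⟩
  · rw [hp]; unfold gfunX; split_ifs <;> first | omega | exact (‹False›).elim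
  · intro i i' h2 hlt hle
    rw [hp, hp]
    unfold gfunX
    split_ifs <;> first | omega | exact (‹False›).elim
  · intro b i h2i him hb1 hba hbb hbi
    rw [hp] at hba hbb hbi
    have hgi : gfunX m j i ≤ m := gleX m j hm hj1 hj2 i h2i him
    have hbm : b ≤ m := by omega
    by_cases hc : j ≤ m
    · have h1v : gfunX m j 1 = 2*m+2-j := by
        unfold gfunX; split_ifs <;> first | omega | exact (‹False›).elim
      rw [h1v] at hba hbb
      have hbt : b ≠ j := by omega
      refine ⟨if b < j then b+1 else b, ?_, ?_, ?_⟩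
      · split_ifs <;> omega
      · split_ifs <;> omega
      · rw [hp]; unfold gfunX; split_ifs <;> first | omega | exact (‹False›).elim
    · have h1v : gfunX m j 1 = 2*m+1-j := by
        unfold gfunX; split_ifs <;> first | omega | exact (‹False›).elim
      rw [h1v] at hba hbb
      have hbt : b ≠ 2*m+1-j := hba
      refine ⟨if b < 2*m+1-j then b+1 else b, ?_, ?_, ?_⟩
      · split_ifs <;> omega
      · split_ifs <;> omega
      · rw [hp]; unfold gfunX; split_ifs <;> first | omega | exact (‹False›).elim

lemma wb_lenX (m j : ℕ) (hm : 1 ≤ m) (hj1 : 1 ≤ j) (hj2 : j ≤ 2*m) :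
    lenB m (wBfin m j) = 2*m - j := by
  have hp := hptX m hm j hj1 hj2
  unfold lenB
  by_cases hc : j ≤ m
  · have e1 : ((Finset.Icc 1 m ×ˢ Finset.Icc 1 m).filter
        (fun p => p.1 ≤ p.2 ∧ wBfin m j p.2 < wBfin m j p.1))
        = {1} ×ˢ Finset.Icc 2 m := by
      ext ⟨i, i'⟩
      simp only [Finset.mem_filter, Finset.mem_product, Finset.mem_Icc,
        Finset.mem_singleton, hp]
      unfold gfunX
      split_ifs <;> first | omega | exact (‹False›).elim
    have e2 : ((Finset.Icc 1 m ×ˢ Finset.Icc 1 m).filter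
        (fun p => p.1 ≤ p.2 ∧ 2 * m + 2 < wBfin m j p.1 + wBfin m j p.2))
        = {1} ×ˢ insert 1 (Finset.Icc (j+1) m) := by
      ext ⟨i, i'⟩
      simp only [Finset.mem_filter, Finset.mem_product, Finset.mem_Icc,
        Finset.mem_singleton, Finset.mem_insert, hp]
      unfold gfunX
      split_ifs <;> first | omega | exact (‹False›).elim
    rw [e1, e2, Finset.card_product, Finset.card_product,
      Finset.card_insert_of_notMem (by simp; omega), Finset.card_singleton,
      Nat.card_Icc, Nat.card_Icc]
    omega
  · have e1 : ((Finset.Icc 1 m ×ˢ Finset.Icc 1 m).filter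
        (fun p => p.1 ≤ p.2 ∧ wBfin m j p.2 < wBfin m j p.1))
        = {1} ×ˢ Finset.Icc 2 (2*m+1-j) := by
      ext ⟨i, i'⟩
      simp only [Finset.mem_filter, Finset.mem_product, Finset.mem_Icc,
        Finset.mem_singleton, hp]
      unfold gfunX
      split_ifs <;> first | omega | exact (‹False›).elim
    have e2 : ((Finset.Icc 1 m ×ˢ Finset.Icc 1 m).filter
        (fun p => p.1 ≤ p.2 ∧ 2 * m + 2 < wBfin m j p.1 + wBfin m j p.2))
        = ∅ := by
      ext ⟨i, i'⟩
      simp only [Finset.mem_filter, Finset.mem_product, Finset.mem_Icc,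
        Finset.notMem_empty, iff_false, not_and]
      intro h1 h2 h3
      rw [hp, hp] at h3
      unfold gfunX at h3
      split_ifs at h3 <;> first | omega | exact (‹False›).elim | exact ‹False›
    rw [e1, e2, Finset.card_product, Finset.card_singleton, Finset.card_empty,
      Nat.card_Icc]
    omega

lemma wb_surjX (m : ℕ) (hm : 1 ≤ m) :
    ∀ w ∈ WB m, FinalB m w → ∃ j, 1 ≤ j ∧ j ≤ 2 * m ∧ wBfin m j = w := by
  intro w hw hf
  obtain ⟨hw0, hwfix, hwsum⟩ := hw
  obtain ⟨hne, hmono, hclo⟩ := hf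
  have hinj : Function.Injective w := w.injective
  have ha1 : 1 ≤ w 1 := by
    rcases Nat.eq_zero_or_pos (w 1) with h | h
    · exact absurd (hinj (h.trans hw0.symm)) one_ne_zero
    · exact h
  have ha2 : w 1 ≤ 2*m+1 := by
    by_contra h
    push_neg at h
    have h2 : w (w 1) = w 1 := hwfix (w 1) h
    have := hinj h2
    omega
  have h2m1 : w 1 + w (2*m+1) = 2*m+2 := by
    have h := hwsum 1 (le_refl 1) (by omega)
    rwa [show 2*m+2-1 = 2*m+1 by omega] at h
  obtain ⟨j, hj1, hj2, hjc⟩ :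
      ∃ j, 1 ≤ j ∧ j ≤ 2*m ∧
        ((w 1 ≤ m ∧ j + w 1 = 2*m+1) ∨ (m+2 ≤ w 1 ∧ j + w 1 = 2*m+2)) := by
    by_cases hc : w 1 ≤ m
    · exact ⟨2*m+1 - w 1, by omega, by omega, Or.inl ⟨hc, by omega⟩⟩
    · exact ⟨2*m+2 - w 1, by omega, by omega, Or.inr ⟨by omega, by omega⟩⟩
  obtain ⟨t, htc⟩ : ∃ t, ((j ≤ m ∧ t = j) ∨ (m < j ∧ t + j = 2*m+1)) := by
    by_cases hc : j ≤ m
    · exact ⟨j, Or.inl ⟨hc, rfl⟩⟩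
    · exact ⟨2*m+1-j, Or.inr ⟨by omega, by omega⟩⟩
  have ht1 : 1 ≤ t ∧ t ≤ m := by omega
  have htw : (t = w 1 ∧ 2*m+2 - t = w (2*m+1)) ∨ (t = w (2*m+1) ∧ 2*m+2 - t = w 1) := by
    omega
  have hwt : ∀ i, 2 ≤ i → i ≤ m → w i ≠ t := by
    intro i h2 him heq
    rcases htw with ⟨hteq, _⟩ | ⟨hteq, _⟩
    · have h : w i = w 1 := by omega
      have := hinj h; omega
    · have h : w i = w (2*m+1) := by omega
      have := hinj h; omega
  have hwpos : ∀ i : ℕ, 1 ≤ i → 1 ≤ w i := by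
    intro i h1
    rcases Nat.eq_zero_or_pos (w i) with h | h
    · have h' : w i = w 0 := by rw [hw0]; omega
      have := hinj h'; omega
    · exact h
  have key : ∀ i, 2 ≤ i → i ≤ m → w i = (if i ≤ t then i - 1 else i) := by
    intro i
    induction i using Nat.strong_induction_on with
    | _ i IH =>
      intro h2 him
      have hwti : w i ≠ t := hwt i h2 him
      have hipos : 1 ≤ w i := hwpos i (by omega)
      have hlb : (if i ≤ t then i - 1 else i) ≤ w i := by
        by_cases hi2 : i = 2
        · subst hi2
          split_ifs <;> omega
        · have hprev := IH (i-1) (by omega) (by omega) (by omega)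
          have hmlt : w (i-1) < w i := hmono (i-1) i (by omega) (by omega) him
          have hwtp : w (i-1) ≠ t := hwt (i-1) (by omega) (by omega)
          split_ifs at hprev ⊢ <;> omega
      rcases Nat.lt_or_ge (if i ≤ t then i-1 else i) (w i) with hgt | hge
      · exfalso
        have hb1 : 1 ≤ (if i ≤ t then i-1 else i) := by split_ifs <;> omega
        have hbne1 : (if i ≤ t then i-1 else i) ≠ w 1 := by
          rcases htw with ⟨hteq, _⟩ | ⟨_, hteq⟩ <;> split_ifs <;> omega
        have hbne2 : (if i ≤ t then i-1 else i) ≠ 2*m+2 - w 1 := by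
          rcases htw with ⟨hteq, hteq2⟩ | ⟨hteq, hteq2⟩ <;> split_ifs <;> omega
        obtain ⟨j', hj'2, hj'm, hj'v⟩ := hclo _ i h2 him hb1 hbne1 hbne2 hgt
        rcases lt_trichotomy j' i with hlt | heq | hgt'
        · have hprev := IH j' hlt hj'2 hj'm
          rw [hj'v] at hprev
          split_ifs at hprev ⊢ <;> omega
        · subst heq
          omega
        · have := hmono i j' h2 hgt' hj'm
          omega
      · split_ifs at hlb hge ⊢ <;> omega
  refine ⟨j, hj1, hj2, Equiv.ext fun x => ?_⟩
  rw [hptX m hm j hj1 hj2 x]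
  have hlow : ∀ i, 1 ≤ i → i ≤ m → gfunX m j i = w i := by
    intro i h1 h2
    rcases Nat.lt_or_ge 1 i with h | h
    · rw [key i h h2]
      unfold gfunX
      split_ifs <;> first | omega | exact (‹False›).elim
    · have hi1 : i = 1 := by omega
      subst hi1
      unfold gfunX
      split_ifs <;> first | omega | exact (‹False›).elim
  by_cases h0 : x = 0
  · subst h0; rw [hw0]; exact g0X m j
  by_cases hbig : 2*m+1 < x
  · rw [hwfix x hbig]; exact gfixX m j hm hj1 hj2 x hbig
  by_cases hxm : x ≤ m
  · exact hlow x (by omega) hxm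
  by_cases hxm1 : x = m+1
  · subst hxm1
    have h := hwsum (m+1) (by omega) (by omega)
    rw [show 2*m+2-(m+1) = m+1 by omega] at h
    have hg : gfunX m j (m+1) = m+1 := by
      unfold gfunX; split_ifs <;> first | omega | exact (‹False›).elim
    omega
  · have hx : m+2 ≤ x ∧ x ≤ 2*m+1 := by omega
    have hi : 1 ≤ 2*m+2-x ∧ 2*m+2-x ≤ m := by omega
    have hs := hwsum (2*m+2-x) (by omega) (by omega)
    rw [show 2*m+2-(2*m+2-x) = x by omega] at hs
    have hgs := gsymX m j hm hj1 hj2 (2*m+2-x) (by omega) (by omega)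
    rw [show 2*m+2-(2*m+2-x) = x by omega] at hgs
    have hl := hlow (2*m+2-x) hi.1 hi.2
    omega

end StmtAux

/-- The `2m` products `w_j` are pairwise distinct reduced words (`ℓ(w_j) = 2m − j`)
and are exactly the final elements of `W_B^m`. -/

theorem stmt4 (m : ℕ) (hm : 1 ≤ m) :
    (∀ j j', 1 ≤ j → j ≤ 2 * m → 1 ≤ j' → j' ≤ 2 * m → wBfin m j = wBfin m j' → j = j') ∧
    (∀ j, 1 ≤ j → j ≤ 2 * m →
      wBfin m j ∈ WB m ∧ FinalB m (wBfin m j) ∧ lenB m (wBfin m j) = 2 * m - j) ∧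
    (∀ w ∈ WB m, FinalB m w → ∃ j, 1 ≤ j ∧ j ≤ 2 * m ∧ wBfin m j = w)  := by
  refine ⟨?_, ?_, wb_surjX m hm⟩
  · intro j j' hj1 hj2 hj1' hj2' heq
    have h1 : wBfin m j 1 = wBfin m j' 1 := by rw [heq]
    rw [hptX m hm j hj1 hj2 1, hptX m hm j' hj1' hj2' 1] at h1
    unfold gfunX at h1
    split_ifs at h1 <;> first | omega | exact (‹False›).elim
  · intro j hj1 hj2
    exact ⟨wb_memX m j hm hj1 hj2, wb_finalX m j hm hj1 hj2, wb_lenX m j hm hj1 hj2⟩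
end

section
/- Let m ≥ 1. For every w ∈ W_B^m there exists a shuffle sequence starting with w which is ambiguous, final, or cyclic. -/
/-- `v` is an elementary shuffle of `u` by `s_i` (in `W_B^m`): `1 < i ≤ m`,
`ℓ(u s_i) = ℓ(u) − 1`, `ℓ(s_i u s_i) = ℓ(u)` and `v = s_i u s_i`. -/
def ElemShuffleB (m i : ℕ) (u v : Equiv.Perm ℕ) : Prop :=
  1 < i ∧ i ≤ m ∧ lenB m (u * sB m i) + 1 = lenB m u ∧
    lenB m (sB m i * u * sB m i) = lenB m u ∧ v = sB m i * u * sB m i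

/-- `u 1, …, u r` is a shuffle sequence in `W_B^m`. -/
def IsShuffleSeqB (m r : ℕ) (u : ℕ → Equiv.Perm ℕ) : Prop :=
  1 ≤ r ∧ ∀ k, 1 ≤ k → k < r → ∃ i, ElemShuffleB m i (u k) (u (k + 1))

/-- The shuffle sequence `u 1, …, u r` is ambiguous: for some `1 < i ≤ m` one has
`ℓ(u_r s_i) = ℓ(u_r) − 1` and `ℓ(s_i u_r s_i) = ℓ(u_r) − 2`. -/
def SeqAmbiguousB (m r : ℕ) (u : ℕ → Equiv.Perm ℕ) : Prop :=
  ∃ i, 1 < i ∧ i ≤ m ∧ lenB m (u r * sB m i) + 1 = lenB m (u r) ∧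
    lenB m (sB m i * u r * sB m i) + 2 = lenB m (u r)

/-- The sequence `u 1, …, u r` is cyclic: `u j = u k` for some `1 ≤ j < k ≤ r`. -/
def SeqCyclic (r : ℕ) (u : ℕ → Equiv.Perm ℕ) : Prop :=
  ∃ j k, 1 ≤ j ∧ j < k ∧ k ≤ r ∧ u j = u k

/-- `w` is one of the `2m` final elements of `W_B^m`. -/
def IsFinalEltB (m : ℕ) (w : Equiv.Perm ℕ) : Prop :=
  (∃ k, 1 ≤ k ∧ k ≤ m - 1 ∧ w = prodAsc (sB m) k m * prodDesc (sB m) 1 (m - 1)) ∨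
  (∃ k, k ≤ m ∧ w = prodDesc (sB m) 1 k)

/-- `w` is degenerate: some shuffle sequence starting with `w` is ambiguous or cyclic. -/
def DegenerateB (m : ℕ) (w : Equiv.Perm ℕ) : Prop :=
  ∃ r u, IsShuffleSeqB m r u ∧ u 1 = w ∧ (SeqAmbiguousB m r u ∨ SeqCyclic r u)

/-- `w` is of final shuffle type: some shuffle sequence starting with `w` is final. -/
def FinalShuffleTypeB (m : ℕ) (w : Equiv.Perm ℕ) : Prop :=
  ∃ r u, IsShuffleSeqB m r u ∧ u 1 = w ∧ IsFinalEltB m (u r)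

namespace Stmt13
open Equiv Finset

lemma wb_one (m : ℕ) : (1 : Equiv.Perm ℕ) ∈ WB m := by
  refine ⟨rfl, fun i _ => rfl, fun i h1 h2 => ?_⟩
  simp only [Equiv.Perm.one_apply]
  omega

lemma wb_mul {m : ℕ} {σ τ : Equiv.Perm ℕ} (hσ : σ ∈ WB m) (hτ : τ ∈ WB m) :
    σ * τ ∈ WB m := by
  obtain ⟨h0, hfix, hsym⟩ := hσ
  obtain ⟨h0', hfix', hsym'⟩ := hτ
  have hb : ∀ i, 1 ≤ i → i ≤ 2*m+1 → 1 ≤ τ i ∧ τ i ≤ 2*m+1 := by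
    intro i hi1 hi2
    constructor
    · rcases Nat.eq_zero_or_pos (τ i) with h | h
      · exfalso; have := τ.injective (h.trans h0'.symm); omega
      · exact h
    · by_contra hgt
      push_neg at hgt
      have := hfix' _ hgt
      have := τ.injective this
      omega
  refine ⟨?_, ?_, ?_⟩
  · simp [Equiv.Perm.mul_apply, h0', h0]
  · intro i hi
    simp [Equiv.Perm.mul_apply, hfix' i hi, hfix i hi]
  · intro i h1 h2
    simp only [Equiv.Perm.mul_apply]
    have h3 := hsym' i h1 h2
    have hb1 := hb i h1 h2
    have : τ (2*m+2-i) = 2*m+2 - τ i := by omega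
    rw [this]
    exact hsym (τ i) hb1.1 hb1.2

lemma wb_bounds {m : ℕ} {σ : Equiv.Perm ℕ} (hσ : σ ∈ WB m) {i : ℕ}
    (h1 : 1 ≤ i) (h2 : i ≤ 2*m+1) : 1 ≤ σ i ∧ σ i ≤ 2*m+1 := by
  obtain ⟨h0, hfix, _⟩ := hσ
  constructor
  · rcases Nat.eq_zero_or_pos (σ i) with h | h
    · exfalso; have := σ.injective (h.trans h0.symm); omega
    · exact h
  · by_contra hgt
    push_neg at hgt
    have := σ.injective (hfix _ hgt)
    omega

lemma wb_mid {m : ℕ} {σ : Equiv.Perm ℕ} (hσ : σ ∈ WB m) : σ (m+1) = m+1 := by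
  have := hσ.2.2 (m+1) (by omega) (by omega)
  have h : 2*m+2-(m+1) = m+1 := by omega
  rw [h] at this
  omega

lemma wb_ext {m : ℕ} {σ τ : Equiv.Perm ℕ} (hσ : σ ∈ WB m) (hτ : τ ∈ WB m)
    (h : ∀ j, 1 ≤ j → j ≤ m → σ j = τ j) : σ = τ := by
  ext j
  rcases Nat.eq_zero_or_pos j with h0 | h1
  · subst h0; rw [hσ.1, hτ.1]
  rcases le_or_gt j m with hm | hm
  · exact h j h1 hm
  rcases eq_or_lt_of_le (show m+1 ≤ j by omega) with he | hgt
  · rw [← he, wb_mid hσ, wb_mid hτ]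
  rcases le_or_gt j (2*m+1) with hle | hgt2
  · have h1' := hσ.2.2 (2*m+2-j) (by omega) (by omega)
    have h2' := hτ.2.2 (2*m+2-j) (by omega) (by omega)
    have hj : 2*m+2-(2*m+2-j) = j := by omega
    rw [hj] at h1' h2'
    have := h (2*m+2-j) (by omega) (by omega)
    omega
  · rw [hσ.2.1 _ hgt2, hτ.2.1 _ hgt2]

lemma swap_eval (a b j : ℕ) : Equiv.swap a b j = if j = a then b else if j = b then a else j := by
  split_ifs with d1 d2
  · rw [d1]; exact Equiv.swap_apply_left a b
  · rw [d2]; exact Equiv.swap_apply_right a b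
  · exact Equiv.swap_apply_of_ne_of_ne d1 d2

lemma sB_lt_apply {m i : ℕ} (h1 : 1 ≤ i) (h2 : i < m) (j : ℕ) :
    sB m i j = if j = i then i+1 else if j = i+1 then i
      else if j = 2*m+1-i then 2*m+2-i else if j = 2*m+2-i then 2*m+1-i else j := by
  have hne : i ≠ m := by omega
  rw [sB, if_neg hne, Equiv.Perm.mul_apply, swap_eval, swap_eval]
  split_ifs <;> first | contradiction | omega

lemma sB_m_apply (m j : ℕ) :
    sB m m j = if j = m then m+2 else if j = m+2 then m else j := by
  rw [sB, if_pos rfl, swap_eval]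

lemma sB_mem {m i : ℕ} (hm : 1 ≤ m) (h1 : 1 ≤ i) (h2 : i ≤ m) : sB m i ∈ WB m := by
  rcases eq_or_lt_of_le h2 with he | hlt
  · subst he
    refine ⟨?_, ?_, ?_⟩
    · rw [sB_m_apply _]; split_ifs <;> first | contradiction | omega
    · intro j hj; rw [sB_m_apply _]; split_ifs <;> first | contradiction | omega
    · intro j hj1 hj2
      rw [sB_m_apply _, sB_m_apply _]
      split_ifs <;> first | contradiction | omega
  · refine ⟨?_, ?_, ?_⟩
    · rw [sB_lt_apply h1 hlt]; split_ifs <;> first | contradiction | omega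
    · intro j hj; rw [sB_lt_apply h1 hlt]; split_ifs <;> first | contradiction | omega
    · intro j hj1 hj2
      rw [sB_lt_apply h1 hlt, sB_lt_apply h1 hlt]
      split_ifs <;> first | contradiction | omega

def Fm (m : ℕ) (w : Equiv.Perm ℕ) (p : ℕ × ℕ) : ℕ :=
  (if p.1 ≤ p.2 ∧ w p.2 < w p.1 then 1 else 0) +
  (if p.1 ≤ p.2 ∧ 2*m+2 < w p.1 + w p.2 then 1 else 0)

def Sq (m : ℕ) : Finset (ℕ × ℕ) := Finset.Icc 1 m ×ˢ Finset.Icc 1 m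

lemma mem_Sq {m : ℕ} {p : ℕ × ℕ} : p ∈ Sq m ↔ (1 ≤ p.1 ∧ p.1 ≤ m) ∧ (1 ≤ p.2 ∧ p.2 ≤ m) := by
  simp [Sq, Finset.mem_product, Finset.mem_Icc]

lemma lenB_eq_sum (m : ℕ) (w : Equiv.Perm ℕ) : lenB m w = ∑ p ∈ Sq m, Fm m w p := by
  rw [lenB, Finset.card_filter, Finset.card_filter, ← Finset.sum_add_distrib]
  rfl

lemma sum_onept {m : ℕ} (v w : Equiv.Perm ℕ) (pt : ℕ × ℕ) (hpt : pt ∈ Sq m)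
    (h : ∀ p ∈ Sq m, p ≠ pt → Fm m v p = Fm m w p) :
    lenB m v + Fm m w pt = lenB m w + Fm m v pt := by
  rw [lenB_eq_sum, lenB_eq_sum, ← Finset.add_sum_erase _ _ hpt, ← Finset.add_sum_erase _ _ hpt]
  have : ∑ p ∈ (Sq m).erase pt, Fm m v p = ∑ p ∈ (Sq m).erase pt, Fm m w p := by
    apply Finset.sum_congr rfl
    intro p hp
    exact h p (Finset.mem_of_mem_erase hp) (Finset.ne_of_mem_erase hp)
  omega

lemma sum_twopt {m : ℕ} (v w : Equiv.Perm ℕ) (pt1 pt2 : ℕ × ℕ) (hpt1 : pt1 ∈ Sq m)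
    (hpt2 : pt2 ∈ Sq m) (hne : pt1 ≠ pt2)
    (h : ∀ p ∈ Sq m, p ≠ pt1 → p ≠ pt2 → Fm m v p = Fm m w p) :
    lenB m v + Fm m w pt1 + Fm m w pt2 = lenB m w + Fm m v pt1 + Fm m v pt2 := by
  have hpt2' : pt2 ∈ (Sq m).erase pt1 := Finset.mem_erase.2 ⟨fun h => hne h.symm, hpt2⟩
  rw [lenB_eq_sum, lenB_eq_sum, ← Finset.add_sum_erase _ _ hpt1, ← Finset.add_sum_erase _ _ hpt1,
    ← Finset.add_sum_erase _ _ hpt2', ← Finset.add_sum_erase _ _ hpt2']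
  have : ∑ p ∈ ((Sq m).erase pt1).erase pt2, Fm m v p
      = ∑ p ∈ ((Sq m).erase pt1).erase pt2, Fm m w p := by
    apply Finset.sum_congr rfl
    intro p hp
    have hp1 := Finset.mem_of_mem_erase hp
    exact h p (Finset.mem_of_mem_erase hp1) (Finset.ne_of_mem_erase hp1) (Finset.ne_of_mem_erase hp)
  omega
def tsw (i j : ℕ) : ℕ := if j = i then i+1 else if j = i+1 then i else j

lemma lenB_mul_sBm {m : ℕ} (hm : 1 ≤ m) {w : Equiv.Perm ℕ} (hw : w ∈ WB m) :
    lenB m (w * sB m m) + Fm m w (m, m) = lenB m w + Fm m (w * sB m m) (m, m) := by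
  have hvk : ∀ k, k ≤ m → k ≠ m → (w * sB m m) k = w k := by
    intro k hk hkm
    rw [Equiv.Perm.mul_apply]
    congr 1
    rw [sB_m_apply]
    split_ifs <;> omega
  have hvm : (w * sB m m) m = w (m+2) := by
    rw [Equiv.Perm.mul_apply]
    congr 1
    rw [sB_m_apply]
    split_ifs <;> omega
  have hsum : w m + w (m+2) = 2*m+2 := by
    have := hw.2.2 m (by omega) (by omega)
    have h2 : 2*m+2-m = m+2 := by omega
    rwa [h2] at this
  apply sum_onept
  · exact mem_Sq.2 ⟨⟨hm, le_refl m⟩, ⟨hm, le_refl m⟩⟩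
  · rintro ⟨x, y⟩ hp hne
    obtain ⟨⟨hx1, hx2⟩, ⟨hy1, hy2⟩⟩ := mem_Sq.1 hp
    by_cases hxm : x = m
    · by_cases hym : y = m
      · exact absurd (by rw [hxm, hym]) hne
      · simp only [Fm]
        split_ifs <;> omega
    · by_cases hym : y = m
      · have h3 := hvk x hx2 hxm
        have h4 : w x ≠ w m := fun h => hxm (w.injective h)
        have h5 : w x ≠ w (m+2) := fun h => by have := w.injective h; omega
        have hb1 := wb_bounds hw hx1 (show x ≤ 2*m+1 by omega)
        have hb2 := wb_bounds hw (show 1 ≤ m by omega) (show m ≤ 2*m+1 by omega)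
        simp only [Fm]
        rw [hym, hvm, h3]
        split_ifs <;> omega
      · have h3 := hvk x hx2 hxm
        have h4 := hvk y hy2 hym
        simp only [Fm]
        rw [h3, h4]

lemma descR_m {m : ℕ} (hm : 1 ≤ m) {w : Equiv.Perm ℕ} (hw : w ∈ WB m)
    (hd : m+1 < w m) : lenB m (w * sB m m) + 1 = lenB m w := by
  have core := lenB_mul_sBm hm hw
  have hvm : (w * sB m m) m = w (m+2) := by
    rw [Equiv.Perm.mul_apply]
    congr 1
    rw [sB_m_apply]
    split_ifs <;> omega
  have hsum : w m + w (m+2) = 2*m+2 := by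
    have := hw.2.2 m (by omega) (by omega)
    have h2 : 2*m+2-m = m+2 := by omega
    rwa [h2] at this
  simp only [Fm] at core
  rw [hvm] at core
  split_ifs at core <;> omega

lemma ascR_m {m : ℕ} (hm : 1 ≤ m) {w : Equiv.Perm ℕ} (hw : w ∈ WB m)
    (hd : w m < m+1) : lenB m (w * sB m m) = lenB m w + 1 := by
  have core := lenB_mul_sBm hm hw
  have hvm : (w * sB m m) m = w (m+2) := by
    rw [Equiv.Perm.mul_apply]
    congr 1
    rw [sB_m_apply]
    split_ifs <;> omega
  have hsum : w m + w (m+2) = 2*m+2 := by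
    have := hw.2.2 m (by omega) (by omega)
    have h2 : 2*m+2-m = m+2 := by omega
    rwa [h2] at this
  simp only [Fm] at core
  rw [hvm] at core
  split_ifs at core <;> omega

lemma lenB_mul_sBlt {m i : ℕ} (h1 : 1 ≤ i) (h2 : i < m) (w : Equiv.Perm ℕ) :
    lenB m (w * sB m i) + Fm m w (i, i+1) = lenB m w + Fm m (w * sB m i) (i, i+1) := by
  have hvj : ∀ j, 1 ≤ j → j ≤ m → (w * sB m i) j = w (tsw i j) := by
    intro j hj1 hj2
    rw [Equiv.Perm.mul_apply]
    congr 1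
    rw [sB_lt_apply h1 h2]
    unfold tsw
    split_ifs <;> omega
  have hpt1 : (i, i+1) ∈ Sq m := mem_Sq.2 ⟨⟨h1, by omega⟩, ⟨by omega, by omega⟩⟩
  have hpt2 : (i+1, i) ∈ Sq m := mem_Sq.2 ⟨⟨by omega, by omega⟩, ⟨h1, by omega⟩⟩
  have hne : ((i:ℕ), i+1) ≠ (i+1, i) := by
    intro h; exact absurd (congrArg Prod.fst h) (by simp)
  have hpt2' : (i+1, i) ∈ (Sq m).erase (i, i+1) :=
    Finset.mem_erase.2 ⟨fun h => hne h.symm, hpt2⟩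
  have key : ∑ p ∈ ((Sq m).erase (i, i+1)).erase (i+1, i), Fm m (w * sB m i) p
      = ∑ p ∈ ((Sq m).erase (i, i+1)).erase (i+1, i), Fm m w p := by
    apply Finset.sum_nbij' (i := fun p => (tsw i p.1, tsw i p.2))
      (j := fun p => (tsw i p.1, tsw i p.2))
    · rintro ⟨x, y⟩ hp
      simp only [Finset.mem_erase, mem_Sq, ne_eq, Prod.mk.injEq] at hp ⊢
      unfold tsw
      split_ifs <;> omega
    · rintro ⟨x, y⟩ hp
      simp only [Finset.mem_erase, mem_Sq, ne_eq, Prod.mk.injEq] at hp ⊢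
      unfold tsw
      split_ifs <;> omega
    · rintro ⟨x, y⟩ _
      simp only [Prod.mk.injEq]
      constructor <;> (unfold tsw; split_ifs <;> omega)
    · rintro ⟨x, y⟩ _
      simp only [Prod.mk.injEq]
      constructor <;> (unfold tsw; split_ifs <;> omega)
    · rintro ⟨x, y⟩ hp
      simp only [Finset.mem_erase, mem_Sq, ne_eq, Prod.mk.injEq] at hp
      obtain ⟨hne2, hne1, ⟨⟨hx1, hx2⟩, ⟨hy1, hy2⟩⟩⟩ := hp
      have e1 := hvj x hx1 hx2
      have e2 := hvj y hy1 hy2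
      have hord : x ≤ y ↔ tsw i x ≤ tsw i y := by
        unfold tsw
        split_ifs <;> omega
      simp only [Fm]
      rw [e1, e2]
      split_ifs <;> omega
  rw [lenB_eq_sum, lenB_eq_sum, ← Finset.add_sum_erase _ _ hpt1, ← Finset.add_sum_erase _ _ hpt1,
    ← Finset.add_sum_erase _ _ hpt2', ← Finset.add_sum_erase _ _ hpt2']
  have z1 : Fm m (w * sB m i) (i+1, i) = 0 := by
    simp only [Fm]
    split_ifs <;> first | omega | rfl
  have z2 : Fm m w (i+1, i) = 0 := by
    simp only [Fm]
    split_ifs <;> first | omega | rfl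
  omega

lemma descR_lt {m i : ℕ} (h1 : 1 ≤ i) (h2 : i < m) (w : Equiv.Perm ℕ)
    (hd : w (i+1) < w i) : lenB m (w * sB m i) + 1 = lenB m w := by
  have core := lenB_mul_sBlt h1 h2 w
  have e1 : (w * sB m i) i = w (i+1) := by
    rw [Equiv.Perm.mul_apply]; congr 1; rw [sB_lt_apply h1 h2]; split_ifs <;> omega
  have e2 : (w * sB m i) (i+1) = w i := by
    rw [Equiv.Perm.mul_apply]; congr 1; rw [sB_lt_apply h1 h2]; split_ifs <;> omega
  simp only [Fm] at core
  rw [e1, e2] at core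
  split_ifs at core <;> omega

lemma ascR_lt {m i : ℕ} (h1 : 1 ≤ i) (h2 : i < m) (w : Equiv.Perm ℕ)
    (hd : w i < w (i+1)) : lenB m (w * sB m i) = lenB m w + 1 := by
  have core := lenB_mul_sBlt h1 h2 w
  have e1 : (w * sB m i) i = w (i+1) := by
    rw [Equiv.Perm.mul_apply]; congr 1; rw [sB_lt_apply h1 h2]; split_ifs <;> omega
  have e2 : (w * sB m i) (i+1) = w i := by
    rw [Equiv.Perm.mul_apply]; congr 1; rw [sB_lt_apply h1 h2]; split_ifs <;> omega
  simp only [Fm] at core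
  rw [e1, e2] at core
  split_ifs at core <;> omega
lemma findpos {m : ℕ} {v : Equiv.Perm ℕ} (hv : v ∈ WB m) {t : ℕ}
    (ht1 : 1 ≤ t) (ht2 : t ≤ m) :
    ∃ A, 1 ≤ A ∧ A ≤ m ∧ (v A = t ∨ v A + t = 2*m+2) ∧
      (∀ k, 1 ≤ k → k ≤ m → k ≠ A → v k ≠ t ∧ v k + t ≠ 2*m+2) := by
  set α := v.symm t with hα
  have hvα : v α = t := v.apply_symm_apply t
  have hα0 : α ≠ 0 := by
    intro h; rw [h, hv.1] at hvα; omega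
  have hαb : α ≤ 2*m+1 := by
    by_contra hgt
    push_neg at hgt
    rw [hv.2.1 α hgt] at hvα
    omega
  have hαm : α ≠ m+1 := by
    intro h; rw [h, wb_mid hv] at hvα; omega
  have hsymα : ∀ k, 1 ≤ k → k ≤ 2*m+1 → v k + t = 2*m+2 → k = 2*m+2-α := by
    intro k hk1 hk2 hvk
    have hs := hv.2.2 k hk1 hk2
    have h3 : v (2*m+2-k) = t := by omega
    have h4 : (2*m+2-k) = α := by
      rw [← hvα] at h3
      exact v.injective h3
    omega
  rcases le_or_gt α m with hle | hgt
  · refine ⟨α, by omega, hle, Or.inl hvα, ?_⟩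
    intro k hk1 hk2 hkA
    constructor
    · intro h
      exact hkA (v.injective (h.trans hvα.symm))
    · intro h
      have := hsymα k hk1 (by omega) h
      omega
  · have hαr : m+2 ≤ α := by omega
    have hs := hv.2.2 (2*m+2-α) (by omega) (by omega)
    have h2 : 2*m+2-(2*m+2-α) = α := by omega
    rw [h2, hvα] at hs
    refine ⟨2*m+2-α, by omega, by omega, Or.inr (by omega), ?_⟩
    intro k hk1 hk2 hkA
    constructor
    · intro h
      have := v.injective (h.trans hvα.symm)
      omega
    · intro h
      have := hsymα k hk1 (by omega) h
      omega

lemma lenB_sBm_mul {m : ℕ} (hm : 1 ≤ m) {v : Equiv.Perm ℕ} (hv : v ∈ WB m) :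
    lenB m (sB m m * v) + 1 = lenB m v ∨ lenB m (sB m m * v) = lenB m v + 1 := by
  obtain ⟨A, hA1, hA2, hvA, hun⟩ := findpos hv hm (le_refl m)
  have hmid := wb_mid hv
  have hk_ne : ∀ k, 1 ≤ k → k ≤ m → k ≠ A → v k ≠ m ∧ v k ≠ m+1 ∧ v k ≠ m+2 := by
    intro k hk1 hk2 hkA
    obtain ⟨u1, u2⟩ := hun k hk1 hk2 hkA
    refine ⟨u1, ?_, by omega⟩
    intro h
    have : k = m+1 := v.injective (h.trans hmid.symm)
    omega
  have hcase : (v A = m ∧ (sB m m * v) A = m+2) ∨ (v A = m+2 ∧ (sB m m * v) A = m) := by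
    rcases hvA with h | h
    · left
      refine ⟨h, ?_⟩
      rw [Equiv.Perm.mul_apply, h, sB_m_apply]
      split_ifs <;> omega
    · right
      have hA' : v A = m+2 := by omega
      refine ⟨hA', ?_⟩
      rw [Equiv.Perm.mul_apply, hA', sB_m_apply]
      split_ifs <;> omega
  have hfix : ∀ k, 1 ≤ k → k ≤ m → k ≠ A → (sB m m * v) k = v k := by
    intro k hk1 hk2 hkA
    obtain ⟨u1, u2, u3⟩ := hk_ne k hk1 hk2 hkA
    rw [Equiv.Perm.mul_apply, sB_m_apply]
    split_ifs <;> omega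
  have core := sum_onept (m := m) (sB m m * v) v (A, A)
    (mem_Sq.2 ⟨⟨hA1, hA2⟩, ⟨hA1, hA2⟩⟩) ?_
  · simp only [Fm] at core
    rcases hcase with ⟨e1, e2⟩ | ⟨e1, e2⟩ <;>
      (rw [e1, e2] at core; split_ifs at core <;> omega)
  · rintro ⟨x, y⟩ hp hne
    obtain ⟨⟨hx1, hx2⟩, ⟨hy1, hy2⟩⟩ := mem_Sq.1 hp
    by_cases hxA : x = A
    · by_cases hyA : y = A
      · exact absurd (by rw [hxA, hyA]) hne
      · rw [hxA]
        obtain ⟨u1, u2, u3⟩ := hk_ne y hy1 hy2 hyA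
        have hf := hfix y hy1 hy2 hyA
        rcases hcase with ⟨e1, e2⟩ | ⟨e1, e2⟩ <;>
          (simp only [Fm]; split_ifs <;> omega)
    · by_cases hyA : y = A
      · rw [hyA]
        obtain ⟨u1, u2, u3⟩ := hk_ne x hx1 hx2 hxA
        have hf := hfix x hx1 hx2 hxA
        rcases hcase with ⟨e1, e2⟩ | ⟨e1, e2⟩ <;>
          (simp only [Fm]; split_ifs <;> omega)
      · have hf1 := hfix x hx1 hx2 hxA
        have hf2 := hfix y hy1 hy2 hyA
        simp only [Fm]
        rw [hf1, hf2]

set_option maxHeartbeats 1600000 in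
lemma lenB_sBlt_mul {m i : ℕ} (h1 : 1 ≤ i) (h2 : i < m) {v : Equiv.Perm ℕ}
    (hv : v ∈ WB m) :
    lenB m (sB m i * v) + 1 = lenB m v ∨ lenB m (sB m i * v) = lenB m v + 1 := by
  obtain ⟨A, hA1, hA2, hvA, hunA⟩ := findpos hv h1 (by omega)
  obtain ⟨B, hB1, hB2, hvB, hunB⟩ := findpos hv (show 1 ≤ i+1 by omega) (by omega)
  have hAB : A ≠ B := by
    intro h
    rcases hvA with e | e <;> rcases hvB with f | f <;> (rw [h] at e; omega)
  have hcA : (v A = i ∧ (sB m i * v) A = i+1) ∨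
      (v A + i = 2*m+2 ∧ (sB m i * v) A + i + 1 = 2*m+2) := by
    rcases hvA with e | e
    · left
      refine ⟨e, ?_⟩
      rw [Equiv.Perm.mul_apply, e, sB_lt_apply h1 h2]
      split_ifs <;> omega
    · right
      refine ⟨e, ?_⟩
      rw [Equiv.Perm.mul_apply, sB_lt_apply h1 h2]
      split_ifs <;> omega
  have hcB : (v B = i+1 ∧ (sB m i * v) B = i) ∨
      (v B + i + 1 = 2*m+2 ∧ (sB m i * v) B + i = 2*m+2) := by
    rcases hvB with e | e
    · left
      refine ⟨e, ?_⟩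
      rw [Equiv.Perm.mul_apply, e, sB_lt_apply h1 h2]
      split_ifs <;> omega
    · right
      refine ⟨by omega, ?_⟩
      rw [Equiv.Perm.mul_apply, sB_lt_apply h1 h2]
      split_ifs <;> omega
  have hker : ∀ k, 1 ≤ k → k ≤ m → k ≠ A → k ≠ B → (sB m i * v) k = v k ∧
      v k ≠ i ∧ v k ≠ i+1 ∧ v k + i ≠ 2*m+2 ∧ v k + i + 1 ≠ 2*m+2 := by
    intro k hk1 hk2 hkA hkB
    obtain ⟨u1, u2⟩ := hunA k hk1 hk2 hkA
    obtain ⟨u3, u4⟩ := hunB k hk1 hk2 hkB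
    refine ⟨?_, u1, u3, u2, by omega⟩
    rw [Equiv.Perm.mul_apply, sB_lt_apply h1 h2]
    split_ifs <;> omega
  have hpt1 : (A, B) ∈ Sq m := mem_Sq.2 ⟨⟨hA1, hA2⟩, ⟨hB1, hB2⟩⟩
  have hpt2 : (B, A) ∈ Sq m := mem_Sq.2 ⟨⟨hB1, hB2⟩, ⟨hA1, hA2⟩⟩
  have hnepts : ((A : ℕ), B) ≠ (B, A) := by
    intro h
    exact hAB (congrArg Prod.fst h)
  have core := sum_twopt (m := m) (sB m i * v) v (A, B) (B, A) hpt1 hpt2 hnepts ?_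
  · simp only [Fm] at core
    rcases hcA with ⟨e1, e2⟩ | ⟨e1, e2⟩ <;> rcases hcB with ⟨f1, f2⟩ | ⟨f1, f2⟩ <;>
      (split_ifs at core <;> omega)
  · rintro ⟨x, y⟩ hp hne1 hne2
    obtain ⟨⟨hx1, hx2⟩, ⟨hy1, hy2⟩⟩ := mem_Sq.1 hp
    by_cases hxA : x = A
    · by_cases hyA : y = A
      · rw [hxA, hyA]
        rcases hcA with ⟨e1, e2⟩ | ⟨e1, e2⟩ <;>
          (simp only [Fm]; split_ifs <;> omega)
      · by_cases hyB : y = B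
        · exact absurd (by rw [hxA, hyB]) hne1
        · rw [hxA]
          obtain ⟨u0, u1, u2, u3, u4⟩ := hker y hy1 hy2 hyA hyB
          rcases hcA with ⟨e1, e2⟩ | ⟨e1, e2⟩ <;>
            (simp only [Fm]; split_ifs <;> omega)
    · by_cases hxB : x = B
      · by_cases hyA : y = A
        · exact absurd (by rw [hxB, hyA]) hne2
        · by_cases hyB : y = B
          · rw [hxB, hyB]
            rcases hcB with ⟨f1, f2⟩ | ⟨f1, f2⟩ <;>
              (simp only [Fm]; split_ifs <;> omega)
          · rw [hxB]
            obtain ⟨u0, u1, u2, u3, u4⟩ := hker y hy1 hy2 hyA hyB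
            rcases hcB with ⟨f1, f2⟩ | ⟨f1, f2⟩ <;>
              (simp only [Fm]; split_ifs <;> omega)
      · by_cases hyA : y = A
        · rw [hyA]
          obtain ⟨u0, u1, u2, u3, u4⟩ := hker x hx1 hx2 hxA hxB
          rcases hcA with ⟨e1, e2⟩ | ⟨e1, e2⟩ <;>
            (simp only [Fm]; split_ifs <;> omega)
        · by_cases hyB : y = B
          · rw [hyB]
            obtain ⟨u0, u1, u2, u3, u4⟩ := hker x hx1 hx2 hxA hxB
            rcases hcB with ⟨f1, f2⟩ | ⟨f1, f2⟩ <;>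
              (simp only [Fm]; split_ifs <;> omega)
          · obtain ⟨u0, _, _, _, _⟩ := hker x hx1 hx2 hxA hxB
            obtain ⟨u0', _, _, _, _⟩ := hker y hy1 hy2 hyA hyB
            simp only [Fm]
            rw [u0, u0']

lemma lenB_sB_mul {m i : ℕ} (hm : 1 ≤ m) (h1 : 1 ≤ i) (h2 : i ≤ m)
    {v : Equiv.Perm ℕ} (hv : v ∈ WB m) :
    lenB m (sB m i * v) + 1 = lenB m v ∨ lenB m (sB m i * v) = lenB m v + 1 := by
  rcases eq_or_lt_of_le h2 with he | hlt
  · subst he; exact lenB_sBm_mul hm hv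
  · exact lenB_sBlt_mul h1 hlt hv
lemma prodDesc_zero (s : ℕ → Equiv.Perm ℕ) : prodDesc s 1 0 = 1 := by
  simp [prodDesc]

lemma prodDesc_succ (s : ℕ → Equiv.Perm ℕ) (k : ℕ) :
    prodDesc s 1 (k+1) = s (k+1) * prodDesc s 1 k := by
  unfold prodDesc
  rw [show k+1+1-1 = k+1 from rfl, show k+1-1 = k from rfl, List.range'_concat,
    List.map_append, List.reverse_append]
  simp [Nat.add_comm]

lemma prodAsc_last (s : ℕ → Equiv.Perm ℕ) (b : ℕ) : prodAsc s b b = s b := by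
  rw [prodAsc, show b+1-b = 1 by omega]
  simp

lemma prodAsc_succ (s : ℕ → Equiv.Perm ℕ) (k b : ℕ) (h : k ≤ b) :
    prodAsc s k b = s k * prodAsc s (k+1) b := by
  unfold prodAsc
  rw [show b+1-k = (b-k)+1 by omega, List.range'_succ, show b+1-(k+1) = b-k by omega]
  simp

lemma prodDesc_mem {m : ℕ} (hm : 1 ≤ m) : ∀ k, k ≤ m → prodDesc (sB m) 1 k ∈ WB m := by
  intro k
  induction k with
  | zero => intro _; rw [prodDesc_zero]; exact wb_one m
  | succ k ih =>
    intro hk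
    rw [prodDesc_succ]
    exact wb_mul (sB_mem hm (by omega) hk) (ih (by omega))

lemma prodAsc_mem {m : ℕ} (hm : 1 ≤ m) : ∀ d k, m - k ≤ d → 1 ≤ k → k ≤ m →
    prodAsc (sB m) k m ∈ WB m := by
  intro d
  induction d with
  | zero =>
    intro k hd h1 h2
    have : k = m := by omega
    subst this
    rw [prodAsc_last]
    exact sB_mem hm h1 h2
  | succ d ih =>
    intro k hd h1 h2
    rcases eq_or_lt_of_le h2 with he | hlt
    · subst he
      rw [prodAsc_last]
      exact sB_mem hm h1 le_rfl
    · rw [prodAsc_succ _ _ _ (by omega)]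
      exact wb_mul (sB_mem hm h1 h2) (ih (k+1) (by omega) (by omega) (by omega))

lemma prodDesc_win {m : ℕ} (hm : 1 ≤ m) : ∀ k, k ≤ m-1 → ∀ j, 1 ≤ j → j ≤ m →
    prodDesc (sB m) 1 k j = if j = 1 then k+1 else if j ≤ k+1 then j-1 else j := by
  intro k
  induction k with
  | zero =>
    intro _ j h1 h2
    rw [prodDesc_zero]
    simp only [Equiv.Perm.one_apply]
    split_ifs <;> omega
  | succ k ih =>
    intro hk j h1 h2
    rw [prodDesc_succ, Equiv.Perm.mul_apply, ih (by omega) j h1 h2,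
      sB_lt_apply (show 1 ≤ k+1 by omega) (show k+1 < m by omega)]
    split_ifs <;> omega

lemma prodDesc_win_m {m : ℕ} (hm : 1 ≤ m) : ∀ j, 1 ≤ j → j ≤ m →
    prodDesc (sB m) 1 m j = if j = 1 then m+2 else j-1 := by
  intro j h1 h2
  have hrec := prodDesc_succ (sB m) (m-1)
  rw [show m-1+1 = m by omega] at hrec
  rw [hrec, Equiv.Perm.mul_apply, prodDesc_win hm (m-1) le_rfl j h1 h2, sB_m_apply]
  split_ifs <;> omega

lemma prodAsc_win {m : ℕ} (hm : 1 ≤ m) : ∀ d k, m - k ≤ d → 1 ≤ k → k ≤ m →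
    (∀ x, 1 ≤ x → x ≤ m-1 → prodAsc (sB m) k m x = if x < k then x else x+1) ∧
      prodAsc (sB m) k m m = 2*m+2-k := by
  intro d
  induction d with
  | zero =>
    intro k hd h1 h2
    have : k = m := by omega
    subst this
    rw [prodAsc_last]
    constructor
    · intro x hx1 hx2
      rw [sB_m_apply]
      split_ifs <;> omega
    · rw [sB_m_apply]
      split_ifs <;> omega
  | succ d ih =>
    intro k hd h1 h2
    rcases eq_or_lt_of_le h2 with he | hlt
    · subst he
      rw [prodAsc_last]
      constructor
      · intro x hx1 hx2
        rw [sB_m_apply]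
        split_ifs <;> omega
      · rw [sB_m_apply]
        split_ifs <;> omega
    · obtain ⟨ihx, ihm⟩ := ih (k+1) (by omega) (by omega) (by omega)
      rw [prodAsc_succ _ _ _ (by omega)]
      constructor
      · intro x hx1 hx2
        rw [Equiv.Perm.mul_apply, ihx x hx1 hx2, sB_lt_apply h1 hlt]
        split_ifs <;> omega
      · rw [Equiv.Perm.mul_apply, ihm, sB_lt_apply h1 hlt]
        split_ifs <;> omega

lemma no_descent_final {m : ℕ} (hm : 1 ≤ m) {σ : Equiv.Perm ℕ} (hσ : σ ∈ WB m)
    (hchain : ∀ i, 2 ≤ i → i < m → σ i < σ (i+1)) (hlast : 2 ≤ m → σ m ≤ m) :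
    IsFinalEltB m σ := by
  have hub : ∀ t j, 2 ≤ j → j ≤ m → m - j ≤ t → σ j ≤ j := by
    intro t
    induction t with
    | zero =>
      intro j h2 hjm hd
      have : j = m := by omega
      subst this
      exact hlast h2
    | succ t ih =>
      intro j h2 hjm hd
      rcases eq_or_lt_of_le hjm with he | hlt
      · subst he; exact hlast h2
      · have := hchain j h2 hlt
        have := ih (j+1) (by omega) (by omega) (by omega)
        omega
  have hlb : ∀ j, 2 ≤ j → j ≤ m → j - 1 ≤ σ j := by
    intro j
    induction j with
    | zero => omega
    | succ j ih =>
      intro h2 hjm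
      rcases le_or_gt j 1 with hj1 | hj2
      · have := (wb_bounds hσ (show 1 ≤ j+1 by omega) (show j+1 ≤ 2*m+1 by omega)).1
        omega
      · have := ih (by omega) (by omega)
        have := hchain j (by omega) (by omega)
        omega
  have hstep : ∀ j, 2 ≤ j → j ≤ m → σ j = j - 1 ∨ σ j = j := by
    intro j h2 hjm
    have := hub (m - j) j h2 hjm le_rfl
    have := hlb j h2 hjm
    omega
  have hmono : ∀ j, 2 ≤ j → j ≤ m → σ j = j → ∀ j', j ≤ j' → j' ≤ m → σ j' = j' := by
    intro j h2 hjm hj j' hjj' hj'm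
    induction j' with
    | zero => omega
    | succ j' ih =>
      rcases eq_or_lt_of_le hjj' with he | hlt
      · rw [← he]; exact hj
      · have hih := ih (by omega) (by omega)
        rcases hstep (j'+1) (by omega) hj'm with h | h
        · exfalso
          have : σ (j'+1) = σ j' := by omega
          have := σ.injective this
          omega
        · exact h
  have hdc : ∀ j, 2 ≤ j → j ≤ m → σ j = j - 1 → ∀ j', 2 ≤ j' → j' ≤ j → σ j' = j' - 1 := by
    intro j h2 hjm hj j' h2' hj'j
    rcases hstep j' h2' (by omega) with h | h
    · exact h
    · exfalso
      have := hmono j' h2' (by omega) h j hj'j hjm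
      omega
  have hb1 := wb_bounds hσ (show (1:ℕ) ≤ 1 by omega) (show (1:ℕ) ≤ 2*m+1 by omega)
  have hmid := wb_mid hσ
  rcases le_or_gt (σ 1) m with hc1 | hc2
  · -- σ 1 = k ≤ m, final element prodDesc 1 (k-1)
    set k := σ 1 with hk
    have hA : ∀ j, 2 ≤ j → j ≤ k → σ j = j - 1 := by
      intro j h2 hjk
      rcases hstep j h2 (by omega) with h | h
      · exact h
      · exfalso
        have := hmono j h2 (by omega) h k (by omega) (by omega)
        have : k = 1 := σ.injective (by omega : σ k = σ 1)
        omega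
    have hB : ∀ j, 2 ≤ j → j ≤ m → k+1 ≤ j → σ j = j := by
      intro j h2 hjm hkj
      rcases hstep j h2 hjm with h | h
      · exfalso
        have hc1' : σ (k+1) = k := hdc j h2 hjm h (k+1) (by omega) (by omega)
        have : k+1 = 1 := σ.injective (by omega : σ (k+1) = σ 1)
        omega
      · exact h
    refine Or.inr ⟨k-1, by omega, ?_⟩
    apply wb_ext hσ (prodDesc_mem hm (k-1) (by omega))
    intro j hj1 hjm
    rw [prodDesc_win hm (k-1) (by omega) j hj1 hjm]
    have hval : (j = 1 ∧ σ j = k) ∨ (2 ≤ j ∧ j ≤ k ∧ σ j = j - 1) ∨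
        (2 ≤ j ∧ k+1 ≤ j ∧ σ j = j) := by
      rcases eq_or_lt_of_le hj1 with he | hgt
      · left; exact ⟨he.symm, by rw [← he]⟩
      · rcases le_or_gt j k with h | h
        · right; left; exact ⟨by omega, h, hA j (by omega) h⟩
        · right; right; exact ⟨by omega, by omega, hB j (by omega) hjm (by omega)⟩
    split_ifs <;> omega
  · -- σ 1 = 2m+2-k with k = 2m+2-σ 1
    have hbig : m+2 ≤ σ 1 := by
      rcases eq_or_lt_of_le (show m+1 ≤ σ 1 by omega) with he | h
      · exfalso
        have : (1:ℕ) = m+1 := σ.injective (by omega : σ 1 = σ (m+1))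
        omega
      · omega
    set k := 2*m+2 - σ 1 with hkdef
    have hk1 : 1 ≤ k := by omega
    have hk2 : k ≤ m := by omega
    have hs21 : σ (2*m+1) = k := by
      have := hσ.2.2 1 (by omega) (by omega)
      have h2 : 2*m+2-1 = 2*m+1 := by omega
      rw [h2] at this
      omega
    have hA : ∀ j, 2 ≤ j → j ≤ k → σ j = j - 1 := by
      intro j h2 hjk
      rcases hstep j h2 (by omega) with h | h
      · exact h
      · exfalso
        have := hmono j h2 (by omega) h k (by omega) (by omega)
        have : k = 2*m+1 := σ.injective (by omega : σ k = σ (2*m+1))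
        omega
    have hB : ∀ j, 2 ≤ j → j ≤ m → k+1 ≤ j → σ j = j := by
      intro j h2 hjm hkj
      rcases hstep j h2 hjm with h | h
      · exfalso
        have hc1' : σ (k+1) = k := hdc j h2 hjm h (k+1) (by omega) (by omega)
        have : k+1 = 2*m+1 := σ.injective (by omega : σ (k+1) = σ (2*m+1))
        omega
      · exact h
    rcases eq_or_lt_of_le hk2 with hkm | hklt
    · -- k = m : prodDesc 1 m
      refine Or.inr ⟨m, le_rfl, ?_⟩
      apply wb_ext hσ (prodDesc_mem hm m le_rfl)
      intro j hj1 hjm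
      rw [prodDesc_win_m hm j hj1 hjm]
      have hval : (j = 1 ∧ σ j + k = 2*m+2) ∨ (2 ≤ j ∧ j ≤ k ∧ σ j = j - 1) := by
        rcases eq_or_lt_of_le hj1 with he | hgt
        · left; constructor; omega
          rw [← he]; omega
        · right; exact ⟨by omega, by omega, hA j (by omega) (by omega)⟩
      split_ifs <;> omega
    · -- k ≤ m-1 : prodAsc k m * prodDesc 1 (m-1)
      refine Or.inl ⟨k, hk1, by omega, ?_⟩
      obtain ⟨hwx, hwm⟩ := prodAsc_win hm (m-k) k le_rfl hk1 hk2
      apply wb_ext hσ (wb_mul (prodAsc_mem hm (m-k) k le_rfl hk1 hk2)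
        (prodDesc_mem hm (m-1) (by omega)))
      intro j hj1 hjm
      rw [Equiv.Perm.mul_apply, prodDesc_win hm (m-1) le_rfl j hj1 hjm]
      rcases eq_or_lt_of_le hj1 with he | hgt
      · rw [show (if j = 1 then m-1+1 else if j ≤ m-1+1 then j-1 else j) = m by
          split_ifs <;> omega, hwm]
        rw [← he]
        omega
      · rw [show (if j = 1 then m-1+1 else if j ≤ m-1+1 then j-1 else j) = j-1 by
          split_ifs <;> omega, hwx (j-1) (by omega) (by omega)]
        rcases le_or_gt j k with h | h
        · have := hA j (by omega) h
          split_ifs <;> omega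
        · have := hB j (by omega) hjm (by omega)
          split_ifs <;> omega
lemma wb_finite (m : ℕ) : (WB m).Finite := by
  apply Set.Finite.of_finite_image (f := fun (σ : Equiv.Perm ℕ) (x : Fin (2*m+2)) => σ x)
  · apply Set.Finite.subset
      (Set.Finite.pi (fun _ : Fin (2*m+2) => Set.finite_Iic (2*m+1)))
    rintro f ⟨σ, hσ, rfl⟩
    rw [Set.mem_pi]
    intro x _
    rcases Nat.eq_zero_or_pos (x : ℕ) with h0 | h1
    · show σ x ∈ Set.Iic (2*m+1)
      rw [h0, hσ.1]
      simp
    · exact Set.mem_Iic.2 (wb_bounds hσ h1 (by omega : (x:ℕ) ≤ 2*m+1)).2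
  · intro σ hσ τ hτ h
    apply wb_ext hσ hτ
    intro j hj1 hj2
    exact congrFun h ⟨j, by omega⟩

lemma main_step {m : ℕ} (hm : 1 ≤ m) {v : Equiv.Perm ℕ} (hv : v ∈ WB m) :
    (∃ i, 1 < i ∧ i ≤ m ∧ lenB m (v * sB m i) + 1 = lenB m v ∧
       lenB m (sB m i * v * sB m i) + 2 = lenB m v) ∨ IsFinalEltB m v ∨
    (∃ i, 1 < i ∧ i ≤ m ∧ lenB m (v * sB m i) + 1 = lenB m v ∧
       lenB m (sB m i * v * sB m i) = lenB m v) := by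
  by_cases hd : ∃ i, 1 < i ∧ i ≤ m ∧ lenB m (v * sB m i) + 1 = lenB m v
  · obtain ⟨i, hi1, hi2, hlen⟩ := hd
    have hmem : v * sB m i ∈ WB m := wb_mul hv (sB_mem hm (by omega) hi2)
    have hlr := lenB_sB_mul hm (by omega : 1 ≤ i) hi2 hmem
    rw [← mul_assoc] at hlr
    rcases hlr with h | h
    · left; exact ⟨i, hi1, hi2, hlen, by omega⟩
    · right; right; exact ⟨i, hi1, hi2, hlen, by omega⟩
  · right; left
    push_neg at hd
    apply no_descent_final hm hv
    · intro i h2 him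
      have hne : v i ≠ v (i+1) := fun h => by have := v.injective h; omega
      rcases lt_or_gt_of_ne hne with h | h
      · exact h
      · exact absurd (descR_lt (by omega) him v h) (hd i (by omega) (by omega))
    · intro h2m
      have hne : v m ≠ m+1 := fun h => by
        have := v.injective (h.trans (wb_mid hv).symm); omega
      rcases lt_or_gt_of_ne hne with h | h
      · omega
      · exact absurd (descR_m hm hv h) (hd m (by omega) le_rfl)
end Stmt13

open Stmt13 in
/-- For every `w ∈ W_B^m` there is a shuffle sequence starting with `w` which is
ambiguous, final, or cyclic. -/
theorem stmt13 (m : ℕ) (hm : 1 ≤ m) (w : Equiv.Perm ℕ) (hw : w ∈ WB m) :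
    ∃ r u, IsShuffleSeqB m r u ∧ u 1 = w ∧
      (SeqAmbiguousB m r u ∨ IsFinalEltB m (u r) ∨ SeqCyclic r u) := by
  classical
  set Cnd : Equiv.Perm ℕ → Prop := fun v => ∃ i, 1 < i ∧ i ≤ m ∧
    lenB m (v * sB m i) + 1 = lenB m v ∧ lenB m (sB m i * v * sB m i) = lenB m v
    with hCnd
  set nxt : Equiv.Perm ℕ → Equiv.Perm ℕ :=
    fun v => if h : Cnd v then sB m h.choose * v * sB m h.choose else v with hnxt
  set seq : ℕ → Equiv.Perm ℕ := fun n => nxt^[n] w with hseq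
  have hseq0 : seq 0 = w := rfl
  have hseqS : ∀ n, seq (n+1) = nxt (seq n) := by
    intro n
    rw [hseq]
    exact Function.iterate_succ_apply' nxt n w
  have hshuf : ∀ v, Cnd v → ∃ i, ElemShuffleB m i v (nxt v) := by
    intro v hc
    refine ⟨hc.choose, ?_⟩
    obtain ⟨h1, h2, h3, h4⟩ := hc.choose_spec
    refine ⟨h1, h2, h3, h4, ?_⟩
    rw [hnxt]
    simp only
    rw [dif_pos hc]
  have hWBstep : ∀ v, v ∈ WB m → nxt v ∈ WB m := by
    intro v hv
    rw [hnxt]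
    simp only
    split_ifs with hc
    · obtain ⟨h1, h2, _, _⟩ := hc.choose_spec
      exact wb_mul (wb_mul (sB_mem hm (by omega) h2) hv) (sB_mem hm (by omega) h2)
    · exact hv
  have hseqmem : ∀ n, seq n ∈ WB m := by
    intro n
    induction n with
    | zero => rw [hseq0]; exact hw
    | succ n ih => rw [hseqS]; exact hWBstep _ ih
  have hseqIs : ∀ r, 1 ≤ r → (∀ n, n < r - 1 → Cnd (seq n)) →
      IsShuffleSeqB m r (fun k => seq (k-1)) := by
    intro r hr hc
    refine ⟨hr, ?_⟩
    intro k hk1 hk2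
    obtain ⟨i, hel⟩ := hshuf _ (hc (k-1) (by omega))
    refine ⟨i, ?_⟩
    have he : seq (k+1-1) = nxt (seq (k-1)) := by
      rw [show k+1-1 = (k-1)+1 by omega]
      exact hseqS (k-1)
    show ElemShuffleB m i (seq (k-1)) (seq (k+1-1))
    rw [he]
    exact hel
  by_cases hstop : ∃ n, ¬ Cnd (seq n)
  · have hn₀ : ¬ Cnd (seq (Nat.find hstop)) := Nat.find_spec hstop
    set n₀ := Nat.find hstop with hn₀def
    have hlt : ∀ n, n < n₀ → Cnd (seq n) := fun n hn => not_not.1 (Nat.find_min hstop hn)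
    refine ⟨n₀ + 1, fun k => seq (k-1), hseqIs (n₀+1) (by omega) (by simpa using hlt), rfl, ?_⟩
    have hmain := main_step hm (hseqmem n₀)
    rcases hmain with h | h | h
    · left
      simpa [SeqAmbiguousB, Nat.add_sub_cancel] using h
    · right; left
      simpa [Nat.add_sub_cancel] using h
    · exact absurd h hn₀
  · push_neg at hstop
    obtain ⟨a, -, b, -, hab, heq⟩ := Set.Infinite.exists_ne_map_eq_of_mapsTo
      (Set.infinite_univ : (Set.univ : Set ℕ).Infinite)
      (fun n _ => hseqmem n) (wb_finite m)
    rcases lt_or_gt_of_ne hab with hlt | hlt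
    · refine ⟨b + 1, fun k => seq (k-1),
        hseqIs (b+1) (by omega) (fun n _ => hstop n), rfl,
        Or.inr (Or.inr ⟨a+1, b+1, by omega, by omega, le_rfl, by
          simpa [Nat.add_sub_cancel] using heq⟩)⟩
    · refine ⟨a + 1, fun k => seq (k-1),
        hseqIs (a+1) (by omega) (fun n _ => hstop n), rfl,
        Or.inr (Or.inr ⟨b+1, a+1, by omega, by omega, le_rfl, by
          simpa [Nat.add_sub_cancel] using heq.symm⟩)⟩
end

section
/- Let 𝕜 be a field of characteristic ≠ 2 and V a 2m-dimensional 𝕜-vector space with a nondegenerate alternating bilinear form ⟨·,·⟩. For any two complete totally isotropic flags F_• and D_• in V, extended to complete self-dual flags, there exist an element w ∈ W_C^m and a basis e_1,…,e_{2m} of V with ⟨e_i,e_j⟩ = 1 if i < j and i+j = 2m+1, ⟨e_i,e_j⟩ = −1 if i > j and i+j = 2m+1, and ⟨e_i,e_j⟩ = 0 otherwise, such that F_i = span(e_1,…,e_i) and D_i = span(e_{w⁻¹(1)},…,e_{w⁻¹(i)}) for all 1 ≤ i ≤ 2m; moreover the element w is uniquely determined by the pair (F_•, D_•). -/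
/-- `F 1 ⊂ ⋯ ⊂ F (2m) = V` is a complete self-dual flag extending a complete
totally isotropic flag: `dim F i = i` for `1 ≤ i ≤ m`, the form vanishes on `F m`,
and `F (2m−j) = (F j)^⊥` for `0 ≤ j ≤ m−1` (with `F 0 = ⊥`). -/
def IsSelfDualFlag {k V : Type*} [Field k] [AddCommGroup V] [Module k V]
    (m : ℕ) (B : LinearMap.BilinForm k V) (F : ℕ → Submodule k V) : Prop :=
  F 0 = ⊥ ∧
  (∀ i, 1 ≤ i → i ≤ m → Module.finrank k (F i) = i) ∧
  (∀ i, i < m → F i ≤ F (i + 1)) ∧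
  (∀ x ∈ F m, ∀ y ∈ F m, B x y = 0) ∧
  (∀ j, j ≤ m - 1 → F (2 * m - j) = B.orthogonal (F j))

/-- `e 1, …, e (2m)` is a basis of `V` adapted to the pair of flags `(F, D)` with
relative position `w`: the pairings are `⟨e i, e j⟩ = 1` if `i < j`, `i+j = 2m+1`,
`⟨e i, e j⟩ = −1` if `i > j`, `i+j = 2m+1`, and `0` otherwise, and
`F i = span(e 1,…,e i)`, `D i = span(e (w⁻¹ 1),…,e (w⁻¹ i))`. -/
def Adapted {k V : Type*} [Field k] [AddCommGroup V] [Module k V]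
    (m : ℕ) (B : LinearMap.BilinForm k V) (F D : ℕ → Submodule k V)
    (w : Equiv.Perm ℕ) : Prop :=
  ∃ e : ℕ → V,
    LinearIndependent k (fun i : (Set.Icc 1 (2 * m) : Set ℕ) => e (i : ℕ)) ∧
    Submodule.span k (e '' Set.Icc 1 (2 * m)) = ⊤ ∧
    (∀ i j, 1 ≤ i → i ≤ 2 * m → 1 ≤ j → j ≤ 2 * m →
      B (e i) (e j) =
        if i + j = 2 * m + 1 then (if i < j then (1 : k) else -1) else 0) ∧
    (∀ i, 1 ≤ i → i ≤ 2 * m → F i = Submodule.span k (e '' Set.Icc 1 i)) ∧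
    (∀ i, 1 ≤ i → i ≤ 2 * m →
      D i = Submodule.span k ((fun j => e (w⁻¹ j)) '' Set.Icc 1 i))

set_option linter.unusedSectionVars false
set_option linter.unusedVariables false
set_option linter.unnecessarySimpa false

open Module Submodule LinearMap

/-! ### Symplectic Gram–Schmidt recursion -/

noncomputable def symGS {k V : Type*} [Field k] [AddCommGroup V] [Module k V]
    (B : LinearMap.BilinForm k V) (m : ℕ) (e : ℕ → V) : ℕ → V
  | a => e a - ∑ b ∈ (Finset.Ioo (2*m+1-a) a).attach,
      ((B (symGS B m e b) (e a)) / (B (symGS B m e b) (symGS B m e (2*m+1-(b:ℕ))))) •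
        symGS B m e (2*m+1-(b:ℕ))
  termination_by a => a
  decreasing_by
  · have := Finset.mem_Ioo.mp b.2; omega
  · have := Finset.mem_Ioo.mp b.2; omega

theorem symGS_eq {k V : Type*} [Field k] [AddCommGroup V] [Module k V]
    (B : LinearMap.BilinForm k V) (m : ℕ) (e : ℕ → V) (a : ℕ) :
    symGS B m e a = e a - ∑ b ∈ (Finset.Ioo (2*m+1-a) a).attach,
      ((B (symGS B m e b) (e a)) / (B (symGS B m e b) (symGS B m e (2*m+1-(b:ℕ))))) •
        symGS B m e (2*m+1-(b:ℕ)) := by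
  conv_lhs => rw [symGS]

section Lemmas
variable {k : Type*} [Field k] {V : Type*} [AddCommGroup V] [Module k V] [FiniteDimensional k V]
variable {m : ℕ} {B : LinearMap.BilinForm k V} {F D : ℕ → Submodule k V}

/-! ### Flag extension facts -/

theorem flag_orth (hm : 1 ≤ m) (hdim : Module.finrank k V = 2 * m)
    (hrefl : B.IsRefl) (hnd : B.Nondegenerate) (hF : IsSelfDualFlag m B F) :
    ∀ j, j ≤ 2 * m → B.orthogonal (F j) = F (2 * m - j) := by
  obtain ⟨h0, hrk, hmono, hiso, horth⟩ := hF
  intro j hj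
  rcases lt_trichotomy j m with hjm | hjm | hjm
  · exact (horth j (by omega)).symm
  · rw [hjm, show 2 * m - m = m by omega]
    have hle : F m ≤ B.orthogonal (F m) := by
      intro x hx
      rw [LinearMap.BilinForm.mem_orthogonal_iff]
      intro n hn
      exact hiso n hn x hx
    have h1 : Module.finrank k (B.orthogonal (F m)) = m := by
      rw [LinearMap.BilinForm.finrank_orthogonal hnd, hdim, hrk m hm le_rfl]
      omega
    have h2 : F m = B.orthogonal (F m) :=
      Submodule.eq_of_le_of_finrank_le hle (by rw [h1, hrk m hm le_rfl])
    exact h2.symm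
  · have h1 : F j = B.orthogonal (F (2 * m - j)) := by
      have := horth (2 * m - j) (by omega)
      rw [show 2 * m - (2 * m - j) = j by omega] at this
      exact this
    rw [h1, LinearMap.BilinForm.orthogonal_orthogonal hnd hrefl]

theorem flag_rank (hm : 1 ≤ m) (hdim : Module.finrank k V = 2 * m)
    (hrefl : B.IsRefl) (hnd : B.Nondegenerate) (hF : IsSelfDualFlag m B F) :
    ∀ i, i ≤ 2 * m → Module.finrank k (F i) = i := by
  intro i hi
  rcases Nat.eq_zero_or_pos i with rfl | hi1
  · rw [hF.1]; exact finrank_bot k V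
  rcases le_or_gt i m with him | him
  · exact hF.2.1 i hi1 him
  · have h1 : F i = B.orthogonal (F (2 * m - i)) := by
      have := flag_orth hm hdim hrefl hnd hF (2 * m - i) (by omega)
      rw [show 2 * m - (2 * m - i) = i by omega] at this
      exact this.symm
    rw [h1, LinearMap.BilinForm.finrank_orthogonal hnd, hdim]
    rcases Nat.eq_zero_or_pos (2 * m - i) with h2 | h2
    · rw [h2, hF.1, finrank_bot]; omega
    · rw [hF.2.1 _ h2 (by omega)]; omega

theorem flag_mono (hm : 1 ≤ m) (hdim : Module.finrank k V = 2 * m)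
    (hrefl : B.IsRefl) (hnd : B.Nondegenerate) (hF : IsSelfDualFlag m B F) :
    ∀ i j, i ≤ j → j ≤ 2 * m → F i ≤ F j := by
  have step : ∀ i, i < 2 * m → F i ≤ F (i + 1) := by
    intro i hi
    rcases lt_or_ge i m with him | him
    · exact hF.2.2.1 i him
    · have h1 : F i = B.orthogonal (F (2 * m - i)) := by
        have := flag_orth hm hdim hrefl hnd hF (2 * m - i) (by omega)
        rw [show 2 * m - (2 * m - i) = i by omega] at this
        exact this.symm
      have h2 : F (i + 1) = B.orthogonal (F (2 * m - (i + 1))) := by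
        have := flag_orth hm hdim hrefl hnd hF (2 * m - (i+1)) (by omega)
        rw [show 2 * m - (2 * m - (i+1)) = i + 1 by omega] at this
        exact this.symm
      rw [h1, h2]
      apply LinearMap.BilinForm.orthogonal_le
      have : 2 * m - (i + 1) + 1 = 2 * m - i := by omega
      rw [← this]
      exact hF.2.2.1 _ (by omega)
  intro i j hij hj
  induction j with
  | zero => simpa [Nat.le_zero.mp hij] using le_rfl
  | succ n ih =>
    rcases Nat.lt_or_ge i (n+1) with h | h
    · exact le_trans (ih (by omega) (by omega)) (step n (by omega))
    · have : i = n + 1 := by omega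
      rw [this]

theorem flag_top (hm : 1 ≤ m) (hdim : Module.finrank k V = 2 * m)
    (hrefl : B.IsRefl) (hnd : B.Nondegenerate) (hF : IsSelfDualFlag m B F) :
    F (2 * m) = ⊤ :=
  Submodule.eq_top_of_finrank_eq (by rw [flag_rank hm hdim hrefl hnd hF (2*m) le_rfl, hdim])

/-! ### span gadgets -/

theorem sup_span_gadget {P Q : Submodule k V} (hle : Q ≤ P)
    (hrk : Module.finrank k P ≤ Module.finrank k Q + 1) {x : V} (hxP : x ∈ P) (hxQ : x ∉ Q) :
    Q ⊔ Submodule.span k {x} = P := by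
  have h1 : Q ⊔ Submodule.span k {x} ≤ P :=
    sup_le hle ((Submodule.span_singleton_le_iff_mem x P).mpr hxP)
  apply Submodule.eq_of_le_of_finrank_le h1
  have h2 : Q < Q ⊔ Submodule.span k {x} := by
    refine lt_of_le_of_ne le_sup_left (fun h => hxQ ?_)
    rw [h]
    exact le_sup_right (α := Submodule k V) (Submodule.mem_span_singleton_self x)
  have h3 := Submodule.finrank_lt_finrank_of_lt h2
  omega

theorem flag_basis (hm : 1 ≤ m) (hdim : Module.finrank k V = 2 * m)
    (hrk : ∀ i, i ≤ 2 * m → Module.finrank k (F i) = i)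
    (hmono : ∀ i j, i ≤ j → j ≤ 2 * m → F i ≤ F j)
    (x : ℕ → V) (hx : ∀ i, 1 ≤ i → i ≤ 2 * m → x i ∈ F i ∧ x i ∉ F (i - 1)) :
    (∀ i, i ≤ 2 * m → F i = Submodule.span k (x '' Set.Icc 1 i)) ∧
    LinearIndependent k (fun i : (Set.Icc 1 (2 * m) : Set ℕ) => x (i : ℕ)) ∧
    Submodule.span k (x '' Set.Icc 1 (2 * m)) = ⊤ := by
  have hspan : ∀ i, i ≤ 2 * m → F i = Submodule.span k (x '' Set.Icc 1 i) := by
    intro i hi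
    induction i with
    | zero =>
      rw [Set.Icc_eq_empty (by omega), Set.image_empty, Submodule.span_empty]
      have : Module.finrank k (F 0) = 0 := hrk 0 (by omega)
      exact Submodule.finrank_eq_zero.mp this
    | succ n ih =>
      have hIcc : Set.Icc 1 (n+1) = Set.Icc 1 n ∪ {n+1} := by
        ext a; simp [Set.mem_Icc]; omega
      rw [hIcc, Set.image_union, Set.image_singleton, Submodule.span_union, ← ih (by omega)]
      symm
      apply sup_span_gadget (hmono n (n+1) (by omega) hi)
        (by rw [hrk n (by omega), hrk (n+1) hi])
        (hx (n+1) (by omega) hi).1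
      simpa using (hx (n+1) (by omega) hi).2
  have htop : Submodule.span k (x '' Set.Icc 1 (2 * m)) = ⊤ := by
    rw [← hspan (2*m) le_rfl]
    exact Submodule.eq_top_of_finrank_eq (by rw [hrk (2*m) le_rfl, hdim])
  refine ⟨hspan, ?_, htop⟩
  apply linearIndependent_of_top_le_span_of_card_eq_finrank
  · rw [← Set.image_eq_range, htop]
  · rw [hdim, ← Set.toFinset_card]
    simp [Set.toFinset_Icc]

/-! ### Phase 1: greedy construction of an adapted family -/

theorem phase1 (hm : 1 ≤ m)
    (hFrk : ∀ i, i ≤ 2 * m → Module.finrank k (F i) = i)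
    (hFmono : ∀ i j, i ≤ j → j ≤ 2 * m → F i ≤ F j)
    (hDrk : ∀ i, i ≤ 2 * m → Module.finrank k (D i) = i)
    (hDmono : ∀ i j, i ≤ j → j ≤ 2 * m → D i ≤ D j)
    (hDtop : D (2 * m) = ⊤) :
    ∃ (w₀ : ℕ → ℕ) (e : ℕ → V), ∀ i, 1 ≤ i → i ≤ 2 * m →
      (1 ≤ w₀ i ∧ w₀ i ≤ 2 * m) ∧
      (e i ∈ F i ∧ e i ∉ F (i - 1) ∧ e i ∈ D (w₀ i) ∧ e i ∉ D (w₀ i - 1)) ∧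
      (∀ i', 1 ≤ i' → i' < i → w₀ i' ≠ w₀ i) := by
  classical
  have hex : ∀ i, ∃ j, (F i ≤ F (i-1) ⊔ D j ∨ 2 * m < i) := by
    intro i
    by_cases h : i ≤ 2 * m
    · exact ⟨2 * m, Or.inl (le_trans le_top (by rw [hDtop]; exact le_sup_right))⟩
    · exact ⟨0, Or.inr (by omega)⟩
  set w₀ : ℕ → ℕ := fun i => Nat.find (hex i) with hw₀
  have hspec : ∀ i, 1 ≤ i → i ≤ 2 * m → F i ≤ F (i-1) ⊔ D (w₀ i) := by
    intro i h1 h2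
    rcases Nat.find_spec (hex i) with h | h
    · exact h
    · omega
  have hmin : ∀ i, ∀ j < w₀ i, i ≤ 2 * m → ¬ (F i ≤ F (i-1) ⊔ D j) := by
    intro i j hj hi h
    exact (Nat.find_min (hex i) hj) (Or.inl h)
  have hwle : ∀ i, 1 ≤ i → i ≤ 2 * m → w₀ i ≤ 2 * m := by
    intro i h1 h2
    exact Nat.find_le (Or.inl (le_trans le_top (by rw [hDtop]; exact le_sup_right)))
  have hFlt : ∀ i, 1 ≤ i → i ≤ 2 * m → F (i-1) < F i := by
    intro i h1 h2
    refine lt_of_le_of_ne (hFmono (i-1) i (by omega) h2) (fun h => ?_)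
    have := hFrk (i-1) (by omega)
    rw [h, hFrk i h2] at this
    omega
  have hwge : ∀ i, 1 ≤ i → i ≤ 2 * m → 1 ≤ w₀ i := by
    intro i h1 h2
    by_contra h
    have h0 : w₀ i = 0 := by omega
    have := hspec i h1 h2
    rw [h0] at this
    have hD0 : D 0 = ⊥ := Submodule.finrank_eq_zero.mp (hDrk 0 (by omega))
    rw [hD0, sup_bot_eq] at this
    exact absurd (le_antisymm this (hFlt i h1 h2).le) (hFlt i h1 h2).ne'
  have key : ∀ i, 1 ≤ i → i ≤ 2 * m → ∃ v : V,
      v ∈ F i ∧ v ∉ F (i-1) ∧ v ∈ D (w₀ i) := by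
    intro i h1 h2
    obtain ⟨f, hf1, hf2⟩ := SetLike.exists_of_lt (hFlt i h1 h2)
    obtain ⟨g, hg, d, hd, hsum⟩ := Submodule.mem_sup.mp (hspec i h1 h2 hf1)
    refine ⟨d, ?_, ?_, hd⟩
    · have : d = f - g := by rw [← hsum]; abel
      rw [this]
      exact Submodule.sub_mem _ hf1 (hFmono (i-1) i (by omega) h2 hg)
    · intro hdm
      apply hf2
      rw [← hsum]
      exact Submodule.add_mem _ hg hdm
  choose e he1 he2 he3 using fun i (h : 1 ≤ i ∧ i ≤ 2 * m) => key i h.1 h.2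
  have hFspan : ∀ i (h : 1 ≤ i ∧ i ≤ 2 * m), F (i-1) ⊔ Submodule.span k {e i h} = F i := by
    intro i h
    exact sup_span_gadget (hFmono (i-1) i (by omega) h.2)
      (by rw [hFrk (i-1) (by omega), hFrk i h.2]; omega) (he1 i h) (he2 i h)
  have heD' : ∀ i (h : 1 ≤ i ∧ i ≤ 2 * m), e i h ∉ D (w₀ i - 1) := by
    intro i h hmem
    apply hmin i (w₀ i - 1) (by have := hwge i h.1 h.2; omega) h.2
    rw [← hFspan i h]
    refine sup_le (le_sup_left) ?_
    rw [Submodule.span_singleton_le_iff_mem]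
    exact Submodule.mem_sup_right hmem
  have hinj : ∀ i (h : 1 ≤ i ∧ i ≤ 2 * m) i' (h' : 1 ≤ i' ∧ i' ≤ 2 * m), i' < i →
      w₀ i' ≠ w₀ i := by
    intro i h i' h' hlt heq
    set j := w₀ i with hj
    have hj1 : 1 ≤ j := hwge i h.1 h.2
    have hj2 : j ≤ 2 * m := hwle i h.1 h.2
    have hDspan : D (j-1) ⊔ Submodule.span k {e i' h'} = D j := by
      apply sup_span_gadget (hDmono (j-1) j (by omega) hj2)
        (by rw [hDrk (j-1) (by omega), hDrk j hj2]; omega)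
      · exact heq ▸ he3 i' h'
      · rw [show j - 1 = w₀ i' - 1 by rw [heq]]
        exact heD' i' h'
    apply hmin i (j - 1) (by omega) h.2
    rw [← hFspan i h]
    refine sup_le le_sup_left ?_
    rw [Submodule.span_singleton_le_iff_mem]
    have : e i h ∈ D (j-1) ⊔ Submodule.span k {e i' h'} := by rw [hDspan]; exact he3 i h
    obtain ⟨d', hd', c, hc, hsum⟩ := Submodule.mem_sup.mp this
    rw [← hsum]
    apply Submodule.add_mem _ (Submodule.mem_sup_right hd')
    apply Submodule.mem_sup_left
    obtain ⟨a, rfl⟩ := Submodule.mem_span_singleton.mp hc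
    exact Submodule.smul_mem _ a (hFmono i' (i-1) (by omega) (by omega) (he1 i' h'))
  refine ⟨w₀, fun i => if h : 1 ≤ i ∧ i ≤ 2 * m then e i h else 0, fun i h1 h2 => ?_⟩
  have h : 1 ≤ i ∧ i ≤ 2 * m := ⟨h1, h2⟩
  simp only [dif_pos h]
  exact ⟨⟨hwge i h1 h2, hwle i h1 h2⟩, ⟨he1 i h, he2 i h, he3 i h, heD' i h⟩,
    fun i' h1' hlt => by
      have h' : 1 ≤ i' ∧ i' ≤ 2 * m := ⟨h1', by omega⟩
      exact hinj i h i' h' hlt⟩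

/-! ### orthogonality patterns -/

theorem ortho_flag (hFo : ∀ j, j ≤ 2 * m → B.orthogonal (F j) = F (2 * m - j))
    (hFmono : ∀ i j, i ≤ j → j ≤ 2 * m → F i ≤ F j)
    {i j : ℕ} (hij : i + j ≤ 2 * m) {x y : V} (hx : x ∈ F i) (hy : y ∈ F j) :
    B x y = 0 := by
  have h1 : y ∈ F (2 * m - i) := hFmono j (2 * m - i) (by omega) (by omega) hy
  rw [← hFo i (by omega)] at h1
  exact h1 x hx

theorem antidiag_ne (halt : B.IsAlt)
    (hFo : ∀ j, j ≤ 2 * m → B.orthogonal (F j) = F (2 * m - j))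
    (hFmono : ∀ i j, i ≤ j → j ≤ 2 * m → F i ≤ F j)
    {e : ℕ → V}
    (hFspan : ∀ i, 1 ≤ i → i ≤ 2 * m → F i = Submodule.span k (e '' Set.Icc 1 i))
    (he : ∀ i, 1 ≤ i → i ≤ 2 * m → e i ∈ F i ∧ e i ∉ F (i - 1))
    {i : ℕ} (hi1 : 1 ≤ i) (hi2 : i ≤ 2 * m) (hm : 1 ≤ m) :
    B (e i) (e (2 * m + 1 - i)) ≠ 0 := by
  intro h0
  set i' := 2 * m + 1 - i with hi'
  have hmem : e i ∈ B.orthogonal (F i') := by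
    rw [LinearMap.BilinForm.mem_orthogonal_iff]
    intro n hn
    rw [hFspan i' (by omega) (by omega)] at hn
    have hker : Submodule.span k (e '' Set.Icc 1 i') ≤ LinearMap.ker (B.flip (e i)) := by
      rw [Submodule.span_le]
      rintro v ⟨j, hj, rfl⟩
      simp only [Set.mem_Icc] at hj
      simp only [SetLike.mem_coe, LinearMap.mem_ker, LinearMap.flip_apply]
      show B (e j) (e i) = 0
      rcases eq_or_lt_of_le hj.2 with hje | hjlt
      · rw [hje]
        exact halt.isRefl _ _ h0
      · exact ortho_flag hFo hFmono (by omega) (he j hj.1 (by omega)).1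
          (he i hi1 hi2).1
    have := hker hn
    simpa using this
  rw [hFo i' (by omega), show 2 * m - i' = i - 1 by omega] at hmem
  exact (he i hi1 hi2).2 hmem

theorem perm_sum {m : ℕ} (w₀ : ℕ → ℕ)
    (hrange : ∀ i ∈ Finset.Icc 1 (2 * m), w₀ i ∈ Finset.Icc 1 (2 * m))
    (hinj : ∀ i ∈ Finset.Icc 1 (2*m), ∀ j ∈ Finset.Icc 1 (2*m), w₀ i = w₀ j → i = j)
    (hge : ∀ i ∈ Finset.Icc 1 (2 * m), 2 * m + 1 ≤ w₀ i + w₀ (2 * m + 1 - i)) :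
    ∀ i ∈ Finset.Icc 1 (2 * m), w₀ i + w₀ (2 * m + 1 - i) = 2 * m + 1 := by
  set S := Finset.Icc 1 (2 * m) with hS
  have himg : Finset.image w₀ S = S := by
    apply Finset.eq_of_subset_of_card_le
    · intro j hj
      obtain ⟨i, hi, rfl⟩ := Finset.mem_image.mp hj
      exact hrange i hi
    · rw [Finset.card_image_of_injOn hinj]
  have hsum1 : ∑ i ∈ S, w₀ i = ∑ i ∈ S, i := by
    conv_rhs => rw [← himg]
    rw [Finset.sum_image hinj]
  have hmem : ∀ a ∈ S, 2 * m + 1 - a ∈ S := by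
    intro a ha
    simp only [hS, Finset.mem_Icc] at *
    omega
  have hinv : ∀ a ∈ S, 2 * m + 1 - (2 * m + 1 - a) = a := by
    intro a ha
    simp only [hS, Finset.mem_Icc] at ha
    omega
  have hsum2 : ∑ i ∈ S, w₀ (2 * m + 1 - i) = ∑ i ∈ S, w₀ i :=
    Finset.sum_nbij' (fun i => 2 * m + 1 - i) (fun i => 2 * m + 1 - i)
      hmem hmem hinv hinv (fun a _ => rfl)
  have hsum3 : ∑ i ∈ S, (2 * m + 1 - i) = ∑ i ∈ S, i :=
    Finset.sum_nbij' (fun i => 2 * m + 1 - i) (fun i => 2 * m + 1 - i)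
      hmem hmem hinv hinv (fun a _ => rfl)
  have htot : ∑ i ∈ S, (w₀ i + w₀ (2 * m + 1 - i)) = ∑ i ∈ S, (2 * m + 1) := by
    rw [Finset.sum_add_distrib, hsum2, hsum1]
    calc ∑ i ∈ S, i + ∑ i ∈ S, i
        = ∑ i ∈ S, i + ∑ i ∈ S, (2 * m + 1 - i) := by rw [hsum3]
      _ = ∑ i ∈ S, (i + (2 * m + 1 - i)) := Finset.sum_add_distrib.symm
      _ = ∑ i ∈ S, (2 * m + 1) := by
          apply Finset.sum_congr rfl
          intro i hi
          simp only [hS, Finset.mem_Icc] at hi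
          omega
  intro i hi
  by_contra hne
  have hlt : ∑ j ∈ S, (2*m+1) < ∑ j ∈ S, (w₀ j + w₀ (2 * m + 1 - j)) := by
    apply Finset.sum_lt_sum hge
    exact ⟨i, hi, by have := hge i hi; omega⟩
  omega

/-! ### symGS invariants -/

theorem symGS_inv (hm : 1 ≤ m) (halt : B.IsAlt)
    (hFo : ∀ j, j ≤ 2 * m → B.orthogonal (F j) = F (2 * m - j))
    (hFmono : ∀ i j, i ≤ j → j ≤ 2 * m → F i ≤ F j)
    (hDo : ∀ j, j ≤ 2 * m → B.orthogonal (D j) = D (2 * m - j))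
    (hDmono : ∀ i j, i ≤ j → j ≤ 2 * m → D i ≤ D j)
    {e : ℕ → V} {w₀ : ℕ → ℕ}
    (he1 : ∀ i, 1 ≤ i → i ≤ 2 * m → e i ∈ F i)
    (he2 : ∀ i, 1 ≤ i → i ≤ 2 * m → e i ∉ F (i - 1))
    (he3 : ∀ i, 1 ≤ i → i ≤ 2 * m → e i ∈ D (w₀ i))
    (hsup : ∀ i, 1 ≤ i → i ≤ 2 * m → F (i - 1) ⊔ Submodule.span k {e i} = F i)
    (hw : ∀ i, 1 ≤ i → i ≤ 2 * m → 1 ≤ w₀ i ∧ w₀ i ≤ 2 * m)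
    (hwsum : ∀ i, 1 ≤ i → i ≤ 2 * m → w₀ i + w₀ (2 * m + 1 - i) = 2 * m + 1) :
    ∀ a, 1 ≤ a → a ≤ 2 * m →
      (symGS B m e a - e a ∈ F (a - 1)) ∧
      (symGS B m e a ∈ F a) ∧ (symGS B m e a ∉ F (a - 1)) ∧
      (symGS B m e a ∈ D (w₀ a)) ∧
      (∀ b, 1 ≤ b → b < a →
        (b + a ≠ 2 * m + 1 → B (symGS B m e b) (symGS B m e a) = 0) ∧
        (b + a = 2 * m + 1 → B (symGS B m e b) (symGS B m e a) ≠ 0)) := by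
  set u : ℕ → V := symGS B m e with hu
  intro a
  induction a using Nat.strong_induction_on with
  | _ a IH =>
  intro ha1 ha2
  have pairZero : ∀ b c, 1 ≤ b → 1 ≤ c → b < a → c < a → b + c ≠ 2 * m + 1 →
      B (u b) (u c) = 0 := by
    intro b c hb hc hba hca hbc
    rcases lt_trichotomy b c with h | h | h
    · exact ((IH c hca hc (by omega)).2.2.2.2 b hb h).1 hbc
    · rw [h]; exact halt (u c)
    · exact halt.isRefl _ _ (((IH b hba hb (by omega)).2.2.2.2 c hc h).1 (by omega))
  have pairNe : ∀ b c, 1 ≤ b → 1 ≤ c → b < a → c < a → b + c = 2 * m + 1 →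
      B (u b) (u c) ≠ 0 := by
    intro b c hb hc hba hca hbc
    rcases lt_trichotomy b c with h | h | h
    · exact ((IH c hca hc (by omega)).2.2.2.2 b hb h).2 hbc
    · omega
    · have h2 := ((IH b hba hb (by omega)).2.2.2.2 c hc h).2 (by omega)
      intro h0
      exact h2 (halt.isRefl _ _ h0)
  have hIoo : ∀ b : ℕ, b ∈ Finset.Ioo (2*m+1-a) a →
      1 ≤ b ∧ b < a ∧ 2*m+1-b < a ∧ 1 ≤ 2*m+1-b ∧ b ≤ 2*m ∧ 2*m+1-b ≤ 2*m ∧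
      b + (2*m+1-b) = 2*m+1 := by
    intro b hb
    have := Finset.mem_Ioo.mp hb
    omega
  have hrec := symGS_eq B m e a
  rw [← hu] at hrec
  have h1 : u a - e a ∈ F (a - 1) := by
    rw [hrec]
    have : e a - (∑ b ∈ (Finset.Ioo (2*m+1-a) a).attach,
        ((B (u b) (e a)) / (B (u b) (u (2*m+1-(b:ℕ))))) • u (2*m+1-(b:ℕ))) - e a
        = -(∑ b ∈ (Finset.Ioo (2*m+1-a) a).attach,
        ((B (u b) (e a)) / (B (u b) (u (2*m+1-(b:ℕ))))) • u (2*m+1-(b:ℕ))) := by abel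
    rw [this]
    apply Submodule.neg_mem
    apply Submodule.sum_mem
    intro b _
    apply Submodule.smul_mem
    obtain ⟨hb1, hb2, hb3, hb4, hb5, hb6, hb7⟩ := hIoo b b.2
    exact hFmono _ (a-1) (by omega) (by omega) (IH _ hb3 hb4 (by omega)).2.1
  have h2 : u a ∈ F a := by
    have := Submodule.add_mem (F a) (hFmono (a-1) a (by omega) ha2 h1)
      (he1 a ha1 ha2)
    simpa using this
  have h3 : u a ∉ F (a - 1) := by
    intro hmem
    apply he2 a ha1 ha2
    have := Submodule.sub_mem (F (a-1)) hmem h1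
    simpa using this
  have h4 : u a ∈ D (w₀ a) := by
    rw [hrec]
    apply Submodule.sub_mem
    · exact he3 a ha1 ha2
    apply Submodule.sum_mem
    intro b _
    obtain ⟨hb1, hb2, hb3, hb4, hb5, hb6, hb7⟩ := hIoo b b.2
    by_cases hc : (B (u b) (e a)) / (B (u b) (u (2*m+1-(b:ℕ)))) = 0
    · rw [hc, zero_smul]; exact Submodule.zero_mem _
    apply Submodule.smul_mem
    have hnum : B (u (b:ℕ)) (e a) ≠ 0 := fun h => hc (by rw [h, zero_div])
    have hwba : 2 * m + 1 ≤ w₀ b + w₀ a := by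
      by_contra hlt
      exact hnum (ortho_flag hDo hDmono (by omega)
        ((IH b hb2 hb1 (by omega)).2.2.2.1) (he3 a ha1 ha2))
    have hwb' : w₀ (2*m+1-(b:ℕ)) = 2*m+1 - w₀ b := by
      have := hwsum b hb1 hb5
      omega
    have : w₀ (2*m+1-(b:ℕ)) ≤ w₀ a := by
      rw [hwb']
      have := (hw a ha1 ha2).2
      have := (hw b hb1 hb5).1
      omega
    exact hDmono _ _ this (hw a ha1 ha2).2 ((IH _ hb3 hb4 (by omega)).2.2.2.1)
  refine ⟨h1, h2, h3, h4, ?_⟩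
  intro b hb1 hba
  have hb2m : b ≤ 2 * m := by omega
  have hcomp : B (u b) (u a) = B (u b) (e a) -
      ∑ c ∈ (Finset.Ioo (2*m+1-a) a).attach,
        ((B (u c) (e a)) / (B (u c) (u (2*m+1-(c:ℕ))))) * B (u b) (u (2*m+1-(c:ℕ))) := by
    rw [hrec, map_sub, map_sum]
    congr 1
    apply Finset.sum_congr rfl
    intro c _
    rw [map_smul, smul_eq_mul]
  by_cases hbIn : b ∈ Finset.Ioo (2*m+1-a) a
  · obtain ⟨_, _, hb3, hb4, hb5, hb6, hb7⟩ := hIoo b hbIn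
    have hsum : ∑ c ∈ (Finset.Ioo (2*m+1-a) a).attach,
        ((B (u c) (e a)) / (B (u c) (u (2*m+1-(c:ℕ))))) * B (u b) (u (2*m+1-(c:ℕ)))
        = B (u b) (e a) := by
      rw [Finset.sum_eq_single_of_mem (⟨b, hbIn⟩ : {x // x ∈ Finset.Ioo (2*m+1-a) a})
        (Finset.mem_attach _ _)]
      · have hden : B (u b) (u (2*m+1-b)) ≠ 0 :=
          pairNe b (2*m+1-b) hb1 hb4 hba hb3 hb7
        field_simp
      · intro c _ hc
        obtain ⟨hc1, hc2, hc3, hc4, hc5, hc6, hc7⟩ := hIoo c c.2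
        have hne : (c : ℕ) ≠ b := fun h => hc (Subtype.ext h)
        have : B (u b) (u (2*m+1-(c:ℕ))) = 0 :=
          pairZero b _ hb1 hc4 hba hc3 (by omega)
        rw [this, mul_zero]
    have : B (u b) (u a) = 0 := by rw [hcomp, hsum, sub_self]
    have hba2 : b + a ≠ 2 * m + 1 := by
      have := Finset.mem_Ioo.mp hbIn
      omega
    exact ⟨fun _ => this, fun h => absurd h hba2⟩
  · have hble : b ≤ 2*m+1-a := by
      rcases Finset.mem_Ioo.not.mp hbIn with h
      omega
    have hsum0 : ∑ c ∈ (Finset.Ioo (2*m+1-a) a).attach,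
        ((B (u c) (e a)) / (B (u c) (u (2*m+1-(c:ℕ))))) * B (u b) (u (2*m+1-(c:ℕ))) = 0 := by
      apply Finset.sum_eq_zero
      intro c _
      obtain ⟨hc1, hc2, hc3, hc4, hc5, hc6, hc7⟩ := hIoo c c.2
      have : B (u b) (u (2*m+1-(c:ℕ))) = 0 := by
        apply pairZero b _ hb1 hc4 hba hc3
        have hne : b ≠ (c : ℕ) := by omega
        omega
      rw [this, mul_zero]
    have hval : B (u b) (u a) = B (u b) (e a) := by rw [hcomp, hsum0, sub_zero]
    constructor
    · intro hne
      have hlt : b + a ≤ 2 * m := by omega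
      rw [hval]
      exact ortho_flag hFo hFmono (by omega) ((IH b hba hb1 (by omega)).2.1)
        (he1 a ha1 ha2)
    · intro heq
      rw [hval]
      intro h0
      have hmem : u b ∈ B.orthogonal (F a) := by
        rw [LinearMap.BilinForm.mem_orthogonal_iff]
        intro n hn
        rw [← hsup a ha1 ha2] at hn
        obtain ⟨n1, hn1, n2, hn2, rfl⟩ := Submodule.mem_sup.mp hn
        have hz1 : B n1 (u b) = 0 := by
          apply halt.isRefl
          exact ortho_flag hFo hFmono (by omega) ((IH b hba hb1 (by omega)).2.1) hn1
        have hz2 : B n2 (u b) = 0 := by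
          obtain ⟨t, rfl⟩ := Submodule.mem_span_singleton.mp hn2
          rw [map_smul]
          have : B (e a) (u b) = 0 := halt.isRefl _ _ h0
          rw [LinearMap.smul_apply, this, smul_zero]
        show B (n1 + n2) (u b) = 0
        rw [map_add, LinearMap.add_apply, hz1, hz2, add_zero]
      rw [hFo a ha2] at hmem
      have : 2 * m - a = b - 1 := by omega
      rw [this] at hmem
      exact (IH b hba hb1 (by omega)).2.2.1 hmem

/-! ### spans of subfamilies, permutation building, uniqueness -/

theorem eq_span_subfamily {W : Submodule k V} {v : ℕ → V} {T : Set ℕ} [Fintype T]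
    (hli : LinearIndependent k (fun i : T => v (i : ℕ)))
    (hmem : ∀ i ∈ T, v i ∈ W) (hrk : Module.finrank k W = Fintype.card T) :
    W = Submodule.span k (v '' T) := by
  have hle : Submodule.span k (v '' T) ≤ W := by
    rw [Submodule.span_le]
    rintro x ⟨i, hi, rfl⟩
    exact hmem i hi
  have hfr : Module.finrank k (Submodule.span k (v '' T)) = Fintype.card T := by
    rw [Set.image_eq_range]
    exact finrank_span_eq_card hli
  exact (Submodule.eq_of_le_of_finrank_le hle (by rw [hfr, ← hrk])).symm

theorem indep_not_mem_span {e : ℕ → V}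
    (hli : LinearIndependent k (fun i : (Set.Icc 1 (2 * m) : Set ℕ) => e (i : ℕ)))
    {U : Set ℕ} (hU : U ⊆ Set.Icc 1 (2 * m)) {i : ℕ} (hi : i ∈ Set.Icc 1 (2 * m))
    (hiU : i ∉ U) : e i ∉ Submodule.span k (e '' U) := by
  have h1 : e '' U = (fun x : (Set.Icc 1 (2 * m) : Set ℕ) => e (x : ℕ)) ''
      {x : (Set.Icc 1 (2 * m) : Set ℕ) | (x : ℕ) ∈ U} := by
    ext y
    constructor
    · rintro ⟨n, hn, rfl⟩
      exact ⟨⟨n, hU hn⟩, hn, rfl⟩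
    · rintro ⟨x, hx, rfl⟩
      exact ⟨(x : ℕ), hx, rfl⟩
  rw [h1]
  exact hli.notMem_span_image (x := ⟨i, hi⟩) hiU

theorem perm_of_injOn {w₀ : ℕ → ℕ}
    (hrange : ∀ i, 1 ≤ i → i ≤ 2 * m → 1 ≤ w₀ i ∧ w₀ i ≤ 2 * m)
    (hinj : ∀ i, 1 ≤ i → i ≤ 2 * m → ∀ j, 1 ≤ j → j ≤ 2 * m → w₀ i = w₀ j → i = j) :
    ∃ w : Equiv.Perm ℕ, (∀ i, 1 ≤ i → i ≤ 2 * m → w i = w₀ i) ∧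
      (∀ i, ¬(1 ≤ i ∧ i ≤ 2 * m) → w i = i) := by
  classical
  set w₁ : ℕ → ℕ := fun i => if 1 ≤ i ∧ i ≤ 2 * m then w₀ i else i with hw₁
  have hr : ∀ i, 1 ≤ i → i ≤ 2*m → (1 ≤ w₁ i ∧ w₁ i ≤ 2*m) := by
    intro i h1 h2
    simp only [hw₁, if_pos (⟨h1, h2⟩ : 1 ≤ i ∧ i ≤ 2*m)]
    exact hrange i h1 h2
  have hinj1 : Function.Injective w₁ := by
    intro x y hxy
    by_cases hx : 1 ≤ x ∧ x ≤ 2 * m <;> by_cases hy : 1 ≤ y ∧ y ≤ 2 * m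
    · simp only [hw₁, if_pos hx, if_pos hy] at hxy
      exact hinj x hx.1 hx.2 y hy.1 hy.2 hxy
    · exfalso
      have h1 := hr x hx.1 hx.2
      simp only [hw₁, if_pos hx, if_neg hy] at hxy h1
      omega
    · exfalso
      have h1 := hr y hy.1 hy.2
      simp only [hw₁, if_neg hx, if_pos hy] at hxy h1
      omega
    · simpa only [hw₁, if_neg hx, if_neg hy] using hxy
  have hsurj : Function.Surjective w₁ := by
    intro j
    by_cases hj : 1 ≤ j ∧ j ≤ 2 * m
    · have himg : Finset.image w₁ (Finset.Icc 1 (2*m)) = Finset.Icc 1 (2*m) := by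
        apply Finset.eq_of_subset_of_card_le
        · intro y hy
          obtain ⟨i, hi, rfl⟩ := Finset.mem_image.mp hy
          simp only [Finset.mem_Icc] at hi ⊢
          exact hr i hi.1 hi.2
        · rw [Finset.card_image_of_injective _ hinj1]
      have : j ∈ Finset.image w₁ (Finset.Icc 1 (2*m)) := by
        rw [himg]; simp only [Finset.mem_Icc]; exact hj
      obtain ⟨i, _, hij⟩ := Finset.mem_image.mp this
      exact ⟨i, hij⟩
    · refine ⟨j, ?_⟩
      simp only [hw₁, if_neg hj]
  refine ⟨Equiv.ofBijective w₁ ⟨hinj1, hsurj⟩, fun i h1 h2 => ?_, fun i h => ?_⟩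
  · show w₁ i = w₀ i
    simp only [hw₁, if_pos (⟨h1, h2⟩ : 1 ≤ i ∧ i ≤ 2*m)]
  · show w₁ i = i
    simp only [hw₁, if_neg h]

theorem wc_range {σ : Equiv.Perm ℕ} (h0 : σ 0 = 0) (hfix : ∀ i, 2 * m < i → σ i = i)
    {i : ℕ} (h1 : 1 ≤ i) (h2 : i ≤ 2 * m) : 1 ≤ σ i ∧ σ i ≤ 2 * m := by
  constructor
  · rcases Nat.eq_zero_or_pos (σ i) with h | h
    · exfalso
      have : σ i = σ 0 := by rw [h, h0]
      have := σ.injective this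
      omega
    · exact h
  · by_contra h
    push_neg at h
    have := hfix (σ i) h
    have := σ.injective this
    omega

theorem wc_mem_range {σ : Equiv.Perm ℕ} (h0 : σ 0 = 0) (hfix : ∀ i, 2 * m < i → σ i = i)
    {l : ℕ} (h1 : 1 ≤ l) (h2 : l ≤ 2 * m) : 1 ≤ σ⁻¹ l ∧ σ⁻¹ l ≤ 2 * m := by
  set i := σ⁻¹ l with hi
  have hwl : σ i = l := σ.apply_symm_apply l
  constructor
  · rcases Nat.eq_zero_or_pos i with h | h
    · rw [h, h0] at hwl; omega
    · exact h
  · by_contra h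
    push_neg at h
    rw [hfix i h] at hwl
    omega

theorem adapted_char (hm : 1 ≤ m) (hF0 : F 0 = ⊥) (hD0 : D 0 = ⊥)
    (hDmono : ∀ i j, i ≤ j → j ≤ 2 * m → D i ≤ D j)
    {w : Equiv.Perm ℕ} (hw : w ∈ WC m) (had : Adapted m B F D w) :
    ∀ i b, 1 ≤ i → i ≤ 2 * m → b ≤ 2 * m → (F i ≤ F (i - 1) ⊔ D b ↔ w i ≤ b) := by
  obtain ⟨e, hli, htop, hpair, hFsp, hDsp⟩ := had
  obtain ⟨h0, hfix, hsum⟩ := hw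
  intro i b hi1 hi2 hb
  have hwr := wc_range (m := m) h0 hfix hi1 hi2
  have hFim1 : F (i - 1) = Submodule.span k (e '' Set.Icc 1 (i - 1)) := by
    rcases Nat.eq_zero_or_pos (i - 1) with h | h
    · rw [h, hF0, Set.Icc_eq_empty (by omega), Set.image_empty, Submodule.span_empty]
    · exact hFsp (i-1) h (by omega)
  have hDb : ∀ b', 1 ≤ b' → b' ≤ 2 * m →
      D b' = Submodule.span k (e '' ((⇑w⁻¹) '' Set.Icc 1 b')) := by
    intro b' h1 h2
    rw [hDsp b' h1 h2, ← Set.image_comp]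
    rfl
  have hTsub : ∀ b', b' ≤ 2 * m → (⇑w⁻¹) '' Set.Icc 1 b' ⊆ Set.Icc 1 (2 * m) := by
    rintro b' hb' x ⟨l, hl, rfl⟩
    simp only [Set.mem_Icc] at *
    exact wc_mem_range h0 hfix hl.1 (by omega)
  constructor
  · intro hle
    by_contra hlt
    push_neg at hlt
    have hei : e i ∈ F (i-1) ⊔ D b := hle (by
      rw [hFsp i hi1 hi2]
      exact Submodule.subset_span ⟨i, by simp [Set.mem_Icc]; omega, rfl⟩)
    have hDbs : D b = Submodule.span k (e '' ((⇑w⁻¹) '' Set.Icc 1 b)) := by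
      rcases Nat.eq_zero_or_pos b with h | h
      · rw [h, hD0, Set.Icc_eq_empty (by omega), Set.image_empty, Set.image_empty,
          Submodule.span_empty]
      · exact hDb b h hb
    rw [hFim1, hDbs, ← Submodule.span_union, ← Set.image_union] at hei
    apply indep_not_mem_span hli (U := Set.Icc 1 (i-1) ∪ (⇑w⁻¹) '' Set.Icc 1 b)
      ?_ (by simp [Set.mem_Icc]; omega) ?_ hei
    · apply Set.union_subset
      · intro x hx; simp only [Set.mem_Icc] at *; omega
      · exact hTsub b hb
    · intro hmem
      rcases hmem with hx | ⟨l, hl, hlx⟩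
      · simp only [Set.mem_Icc] at hx; omega
      · have : w i = l := by rw [← hlx]; exact (w.apply_symm_apply l).symm ▸ rfl
        simp only [Set.mem_Icc] at hl
        omega
  · intro hwib
    rw [hFsp i hi1 hi2, Submodule.span_le]
    rintro x ⟨j, hj, rfl⟩
    simp only [Set.mem_Icc] at hj
    rcases eq_or_lt_of_le hj.2 with hje | hjlt
    · apply Submodule.mem_sup_right
      have heiD : e i ∈ D (w i) := by
        rw [hDb (w i) hwr.1 hwr.2]
        exact Submodule.subset_span ⟨i, ⟨w i, by simp [Set.mem_Icc]; omega, by simp⟩, rfl⟩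
      rw [hje]
      exact hDmono (w i) b hwib hb heiD
    · apply Submodule.mem_sup_left
      rw [hFim1]
      exact Submodule.subset_span ⟨j, by simp [Set.mem_Icc]; omega, rfl⟩

theorem adapted_unique (hm : 1 ≤ m) (hF0 : F 0 = ⊥) (hD0 : D 0 = ⊥)
    (hDmono : ∀ i j, i ≤ j → j ≤ 2 * m → D i ≤ D j)
    {w w' : Equiv.Perm ℕ} (hw : w ∈ WC m) (had : Adapted m B F D w)
    (hw' : w' ∈ WC m) (had' : Adapted m B F D w') : w' = w := by
  apply Equiv.ext
  intro i
  by_cases hi : 1 ≤ i ∧ i ≤ 2 * m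
  · have hr := wc_range (m := m) hw.1 hw.2.1 hi.1 hi.2
    have hr' := wc_range (m := m) hw'.1 hw'.2.1 hi.1 hi.2
    have c1 := adapted_char hm hF0 hD0 hDmono hw had i (w' i) hi.1 hi.2 hr'.2
    have c2 := adapted_char hm hF0 hD0 hDmono hw' had' i (w i) hi.1 hi.2 hr.2
    have c3 := adapted_char hm hF0 hD0 hDmono hw had i (w i) hi.1 hi.2 hr.2
    have c4 := adapted_char hm hF0 hD0 hDmono hw' had' i (w' i) hi.1 hi.2 hr'.2
    have h1 : w' i ≤ w i := c2.mp (c3.mpr le_rfl)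
    have h2 : w i ≤ w' i := c1.mp (c4.mpr le_rfl)
    omega
  · rcases Nat.eq_zero_or_pos i with h | h
    · rw [h, hw.1, hw'.1]
    · have : 2 * m < i := by omega
      rw [hw.2.1 i this, hw'.2.1 i this]

end Lemmas

/-- Classification of pairs of complete self-dual flags in a `2m`-dimensional
symplectic space: there is a unique `w ∈ W_C^m` admitting an adapted basis. -/
theorem stmt14 {k : Type*} [Field k] (hchar : ringChar k ≠ 2)
    {V : Type*} [AddCommGroup V] [Module k V] [FiniteDimensional k V]
    (m : ℕ) (hm : 1 ≤ m) (hdim : Module.finrank k V = 2 * m)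
    (B : LinearMap.BilinForm k V) (halt : ∀ x, B x x = 0) (hnd : B.Nondegenerate)
    (F D : ℕ → Submodule k V)
    (hF : IsSelfDualFlag m B F) (hD : IsSelfDualFlag m B D) :
    ∃ w ∈ WC m, Adapted m B F D w ∧
      ∀ w' ∈ WC m, Adapted m B F D w' → w' = w := by
  classical
  have halt' : B.IsAlt := halt
  have hrefl : B.IsRefl := halt'.isRefl
  have hFo := flag_orth hm hdim hrefl hnd hF
  have hFrk := flag_rank hm hdim hrefl hnd hF
  have hFmono := flag_mono hm hdim hrefl hnd hF
  have hDo := flag_orth hm hdim hrefl hnd hD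
  have hDrk := flag_rank hm hdim hrefl hnd hD
  have hDmono := flag_mono hm hdim hrefl hnd hD
  have hDtop := flag_top hm hdim hrefl hnd hD
  -- Phase 1
  obtain ⟨w₀, e, hph⟩ := phase1 hm hFrk hFmono hDrk hDmono hDtop
  have hwr : ∀ i, 1 ≤ i → i ≤ 2*m → 1 ≤ w₀ i ∧ w₀ i ≤ 2*m := fun i h1 h2 => (hph i h1 h2).1
  have he1 : ∀ i, 1 ≤ i → i ≤ 2*m → e i ∈ F i := fun i h1 h2 => (hph i h1 h2).2.1.1
  have he2 : ∀ i, 1 ≤ i → i ≤ 2*m → e i ∉ F (i-1) := fun i h1 h2 => (hph i h1 h2).2.1.2.1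
  have he3 : ∀ i, 1 ≤ i → i ≤ 2*m → e i ∈ D (w₀ i) := fun i h1 h2 => (hph i h1 h2).2.1.2.2.1
  have hinj : ∀ i, 1 ≤ i → i ≤ 2*m → ∀ j, 1 ≤ j → j ≤ 2*m → w₀ i = w₀ j → i = j := by
    intro i h1 h2 j h3 h4 heq
    rcases lt_trichotomy i j with h | h | h
    · exact absurd heq ((hph j h3 h4).2.2 i h1 h)
    · exact h
    · exact absurd heq.symm ((hph i h1 h2).2.2 j h3 h)
  -- spans for e
  obtain ⟨hFspanE, hliE, htopE⟩ := flag_basis hm hdim hFrk hFmono e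
    (fun i hg1 hg2 => ⟨he1 i hg1 hg2, he2 i hg1 hg2⟩)
  have hsup : ∀ i, 1 ≤ i → i ≤ 2*m → F (i-1) ⊔ Submodule.span k {e i} = F i := by
    intro i hg1 hg2
    have hIcc : Set.Icc 1 i = Set.Icc 1 (i-1) ∪ {i} := by
      ext a; simp [Set.mem_Icc]; omega
    rw [hFspanE i hg2, hIcc, Set.image_union, Set.image_singleton, Submodule.span_union,
      ← hFspanE (i-1) (by omega)]
  -- WC sums for w₀
  have hne : ∀ i, 1 ≤ i → i ≤ 2*m → B (e i) (e (2*m+1-i)) ≠ 0 := fun i h1 h2 =>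
    antidiag_ne halt' hFo hFmono (fun j hg1 hg2 => hFspanE j hg2)
      (fun j hg1 hg2 => ⟨he1 j hg1 hg2, he2 j hg1 hg2⟩) h1 h2 hm
  have hwsumF : ∀ i ∈ Finset.Icc 1 (2*m), w₀ i + w₀ (2*m+1-i) = 2*m+1 := by
    apply perm_sum w₀
    · intro i hi
      simp only [Finset.mem_Icc] at *
      exact hwr i hi.1 hi.2
    · intro i hi j hj
      simp only [Finset.mem_Icc] at hi hj
      exact hinj i hi.1 hi.2 j hj.1 hj.2
    · intro i hi
      simp only [Finset.mem_Icc] at hi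
      by_contra hcon
      push_neg at hcon
      exact hne i hi.1 hi.2 (ortho_flag hDo hDmono (by omega) (he3 i hi.1 hi.2)
        (he3 (2*m+1-i) (by omega) (by omega)))
  have hwsum : ∀ i, 1 ≤ i → i ≤ 2*m → w₀ i + w₀ (2*m+1-i) = 2*m+1 := by
    intro i h1 h2
    exact hwsumF i (by simp only [Finset.mem_Icc]; omega)
  -- Gram-Schmidt
  set u : ℕ → V := symGS B m e with hu
  have hinv := symGS_inv hm halt' hFo hFmono hDo hDmono he1 he2 he3 hsup hwr hwsum
  have upairZ : ∀ b c, 1 ≤ b → b ≤ 2*m → 1 ≤ c → c ≤ 2*m → b + c ≠ 2*m+1 →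
      B (u b) (u c) = 0 := by
    intro b c h1 h2 h3 h4 h5
    rcases lt_trichotomy b c with h | h | h
    · exact ((hinv c h3 h4).2.2.2.2 b h1 h).1 h5
    · rw [h]; exact halt' (u c)
    · exact halt'.isRefl _ _ (((hinv b h1 h2).2.2.2.2 c h3 h).1 (by omega))
  have upairN : ∀ b c, 1 ≤ b → b ≤ 2*m → 1 ≤ c → c ≤ 2*m → b < c → b + c = 2*m+1 →
      B (u b) (u c) ≠ 0 := by
    intro b c h1 h2 h3 h4 h5 h6
    exact ((hinv c h3 h4).2.2.2.2 b h1 h5).2 h6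
  -- rescale
  set scal : ℕ → k := fun a => if 2*m+1 ≤ 2*a then (B (u (2*m+1-a)) (u a))⁻¹ else 1 with hscaldef
  set v : ℕ → V := fun a => scal a • u a with hv
  have hscal : ∀ a, 1 ≤ a → a ≤ 2*m → scal a ≠ 0 := by
    intro a h1 h2
    by_cases hc : 2*m+1 ≤ 2*a
    · simp only [hscaldef, if_pos hc]
      exact inv_ne_zero (upairN (2*m+1-a) a (by omega) (by omega) h1 h2 (by omega) (by omega))
    · simp only [hscaldef, if_neg hc]
      exact one_ne_zero
  have hv1 : ∀ a, 1 ≤ a → a ≤ 2*m → v a ∈ F a := fun a h1 h2 =>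
    Submodule.smul_mem _ _ (hinv a h1 h2).2.1
  have hv2 : ∀ a, 1 ≤ a → a ≤ 2*m → v a ∉ F (a-1) := by
    intro a h1 h2 hmem
    apply (hinv a h1 h2).2.2.1
    have : u a = (scal a)⁻¹ • v a := by
      simp only [hv, smul_smul, inv_mul_cancel₀ (hscal a h1 h2), one_smul]
    show u a ∈ F (a - 1)
    rw [this]
    exact Submodule.smul_mem _ _ hmem
  have hv3 : ∀ a, 1 ≤ a → a ≤ 2*m → v a ∈ D (w₀ a) := fun a h1 h2 =>
    Submodule.smul_mem _ _ (hinv a h1 h2).2.2.2.1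
  obtain ⟨hFspanV, hliV, htopV⟩ := flag_basis hm hdim hFrk hFmono v
    (fun i hg1 hg2 => ⟨hv1 i hg1 hg2, hv2 i hg1 hg2⟩)
  -- permutation
  obtain ⟨w, hwin, hwout⟩ := perm_of_injOn hwr hinj
  have hwWC : w ∈ WC m := by
    refine ⟨hwout 0 (by omega), fun i hi => hwout i (by omega), fun i h1 h2 => ?_⟩
    rw [hwin i h1 h2, hwin (2*m+1-i) (by omega) (by omega)]
    exact hwsum i h1 h2
  -- pairings of v
  have hpairV : ∀ i j, 1 ≤ i → i ≤ 2*m → 1 ≤ j → j ≤ 2*m →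
      B (v i) (v j) = if i + j = 2*m+1 then (if i < j then (1:k) else -1) else 0 := by
    intro i j h1 h2 h3 h4
    have hB : B (v i) (v j) = scal i * scal j * B (u i) (u j) := by
      simp only [hv, map_smul, LinearMap.smul_apply, smul_eq_mul]
      ring
    by_cases hij : i + j = 2*m+1
    · rw [if_pos hij]
      rcases lt_trichotomy i j with h | h | h
      · rw [if_pos h]
        have him : ¬ (2*m+1 ≤ 2*i) := by omega
        have hjm : 2*m+1 ≤ 2*j := by omega
        have hZ := upairN i j h1 h2 h3 h4 h hij
        rw [hB]
        simp only [hscaldef, if_neg him, if_pos hjm]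
        rw [show 2*m+1-j = i by omega]
        field_simp
      · omega
      · rw [if_neg (by omega)]
        have him : 2*m+1 ≤ 2*i := by omega
        have hjm : ¬ (2*m+1 ≤ 2*j) := by omega
        have hne := upairN j i h3 h4 h1 h2 h (by omega)
        have hskew : (B (u i)) (u j) = -((B (u j)) (u i)) :=
          (LinearMap.IsAlt.neg halt' (u j) (u i)).symm
        rw [hB]
        simp only [hscaldef, if_pos him, if_neg hjm]
        rw [show 2*m+1-i = j by omega, hskew]
        field_simp
    · rw [if_neg hij, hB, upairZ i j h1 h2 h3 h4 hij, mul_zero]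
  -- D spans for v
  have hDspanV : ∀ j, 1 ≤ j → j ≤ 2*m →
      D j = Submodule.span k ((fun l => v (w⁻¹ l)) '' Set.Icc 1 j) := by
    intro j h1 h2
    have himage : (fun l => v (w⁻¹ l)) '' Set.Icc 1 j = v '' ((⇑w⁻¹) '' Set.Icc 1 j) := by
      rw [← Set.image_comp]
      rfl
    rw [himage]
    set T : Set ℕ := (⇑w⁻¹) '' Set.Icc 1 j with hT
    have hTfin : T.Finite := (Set.finite_Icc 1 j).image _
    haveI : Fintype T := hTfin.fintype
    have hTsub : T ⊆ Set.Icc 1 (2*m) := by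
      rintro x ⟨l, hl, rfl⟩
      simp only [Set.mem_Icc] at *
      exact wc_mem_range hwWC.1 hwWC.2.1 hl.1 (by omega)
    apply eq_span_subfamily
    · exact hliV.comp (Set.inclusion hTsub) (Set.inclusion_injective hTsub)
    · rintro x ⟨l, hl, rfl⟩
      simp only [Set.mem_Icc] at hl
      have hx := wc_mem_range (m := m) hwWC.1 hwWC.2.1 hl.1 (by omega)
      have hwx : w (w⁻¹ l) = l := w.apply_symm_apply l
      have hw0x : w₀ (w⁻¹ l) = l := by rw [← hwin _ hx.1 hx.2, hwx]
      have := hv3 (w⁻¹ l) hx.1 hx.2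
      rw [hw0x] at this
      exact hDmono l j hl.2 h2 this
    · rw [hDrk j h2]
      have hc1 : Nat.card T = Nat.card (Set.Icc 1 j) :=
        Nat.card_image_of_injective w⁻¹.injective _
      have hc2 : Nat.card (Set.Icc 1 j : Set ℕ) = j := by
        rw [Nat.card_eq_fintype_card, ← Set.toFinset_card, Set.toFinset_Icc, Nat.card_Icc]
        omega
      rw [← Nat.card_eq_fintype_card, hc1, hc2]
  -- assemble
  have hAd : Adapted m B F D w :=
    ⟨v, hliV, htopV, hpairV, fun i hg1 hg2 => hFspanV i hg2, hDspanV⟩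
  exact ⟨w, hwWC, hAd, fun w' hw' had' =>
    adapted_unique hm hF.1 hD.1 hDmono hwWC hAd hw' had'⟩
end

section
/- Let 𝕜 be a field of characteristic ≠ 2 and V a 2m-dimensional 𝕜-vector space with a nondegenerate symmetric bilinear form ⟨·,·⟩. Let V_• and V'_• be two complete totally isotropic flags in V, extended to complete self-dual flags. Then there exists a linear automorphism g of V with ⟨g x, g y⟩ = ⟨x, y⟩ for all x, y ∈ V, det g = 1, and g(V_i) = V'_i for all 1 ≤ i ≤ 2m, if and only if dim(V_m ∩ V'_m) ≡ m (mod 2). -/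
open Module Submodule LinearMap.BilinForm

section Basics
variable {k : Type*} [Field k] {V : Type*} [AddCommGroup V] [Module k V] [FiniteDimensional k V]
variable {B : LinearMap.BilinForm k V}

lemma map_orthogonal (g : V ≃ₗ[k] V) (hg : ∀ x y, B (g x) (g y) = B x y)
    (W : Submodule k V) :
    Submodule.map (g : V →ₗ[k] V) (B.orthogonal W) = B.orthogonal (Submodule.map (g : V →ₗ[k] V) W) := by
  ext y
  constructor
  · rintro ⟨z, hz, rfl⟩
    rw [LinearMap.BilinForm.mem_orthogonal_iff]
    rintro n ⟨u, hu, rfl⟩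
    simpa [LinearMap.BilinForm.IsOrtho, hg] using (LinearMap.BilinForm.mem_orthogonal_iff.mp hz) u hu
  · intro hy
    refine ⟨g.symm y, ?_, by simp⟩
    show g.symm y ∈ B.orthogonal W
    rw [LinearMap.BilinForm.mem_orthogonal_iff]
    intro n hn
    have := (LinearMap.BilinForm.mem_orthogonal_iff.mp hy) (g n) ⟨n, hn, rfl⟩
    simpa [LinearMap.BilinForm.IsOrtho] using by
      calc B n (g.symm y) = B (g n) (g (g.symm y)) := (hg n (g.symm y)).symm
        _ = B (g n) y := by simp
        _ = 0 := this

end Basics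

set_option linter.unusedSectionVars false

section Basics2
variable {k : Type*} [Field k] {V : Type*} [AddCommGroup V] [Module k V] [FiniteDimensional k V]
variable {B : LinearMap.BilinForm k V}

lemma two_ne_zero_of_ringChar (hchar : ringChar k ≠ 2) : (2 : k) ≠ 0 := by
  intro h
  have h2 : ringChar k ∣ 2 := (CharP.cast_eq_zero_iff k (ringChar k) 2).mp (by exact_mod_cast h)
  rcases (Nat.dvd_prime Nat.prime_two).mp h2 with h1 | h1
  · have : (1 : k) = 0 := by
      have := (CharP.cast_eq_zero_iff k (ringChar k) 1).mpr (by rw [h1])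
      simpa using this
    exact one_ne_zero this
  · exact hchar h1

lemma lagrangian_orthogonal_eq (hnd : B.Nondegenerate) (hrefl : B.IsRefl)
    {L : Submodule k V} (hiso : ∀ x ∈ L, ∀ y ∈ L, B x y = 0)
    (h2 : 2 * Module.finrank k L = Module.finrank k V) : B.orthogonal L = L := by
  have hle : L ≤ B.orthogonal L := by
    intro x hx
    rw [LinearMap.BilinForm.mem_orthogonal_iff]
    intro n hn
    exact hiso n hn x hx
  have hfr : Module.finrank k (B.orthogonal L) = Module.finrank k L := by
    rw [LinearMap.BilinForm.finrank_orthogonal hnd]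
    omega
  exact (Submodule.eq_of_le_of_finrank_le hle (le_of_eq hfr)).symm

end Basics2

section Adapted
variable {k : Type*} [Field k] {V : Type*} [AddCommGroup V] [Module k V] [FiniteDimensional k V]

lemma exists_adapted_family (m : ℕ) (F : ℕ → Submodule k V) (h0 : F 0 = ⊥)
    (hrk : ∀ i, 1 ≤ i → i ≤ m → Module.finrank k (F i) = i)
    (hmono : ∀ i, i < m → F i ≤ F (i + 1)) :
    ∃ b : Fin m → V, ∀ i, i ≤ m → F i = span k (b '' {j : Fin m | (j : ℕ) < i}) := by
  have hrk' : ∀ i, i ≤ m → Module.finrank k (F i) = i := by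
    intro i him
    rcases Nat.eq_zero_or_pos i with h | h
    · subst h; rw [h0]; simp
    · exact hrk i h him
  have hlt : ∀ j : Fin m, F (j : ℕ) < F ((j : ℕ) + 1) := by
    intro j
    refine Submodule.lt_of_le_of_finrank_lt_finrank (hmono _ j.2) ?_
    rw [hrk' _ (le_of_lt j.2), hrk' _ j.2]
    omega
  choose b hb1 hb2 using fun j : Fin m => SetLike.exists_of_lt (hlt j)
  refine ⟨b, ?_⟩
  intro i him
  induction i with
  | zero =>
    have : {j : Fin m | (j : ℕ) < 0} = ∅ := by ext j; simp
    rw [this, h0]; simp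
  | succ i ih =>
    have hi : i < m := him
    have hIH := ih (le_of_lt hi)
    have hset : {j : Fin m | (j : ℕ) < i + 1} = {j : Fin m | (j : ℕ) < i} ∪ {⟨i, hi⟩} := by
      ext j
      simp only [Set.mem_setOf_eq, Set.mem_union, Set.mem_singleton_iff, Fin.ext_iff]
      omega
    rw [hset, Set.image_union, span_union, ← hIH]
    simp only [Set.image_singleton, span_singleton_eq_range]
    have hle : F i ⊔ span k {b ⟨i, hi⟩} ≤ F (i + 1) := by
      refine sup_le (hmono i hi) ?_
      rw [span_le, Set.singleton_subset_iff]
      exact hb1 ⟨i, hi⟩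
    have hlt2 : F i < F i ⊔ span k {b ⟨i, hi⟩} := by
      refine lt_of_le_of_ne le_sup_left ?_
      intro heq
      apply hb2 ⟨i, hi⟩
      rw [heq]
      exact le_sup_right (α := Submodule k V) (Submodule.mem_span_singleton_self _)
    have := Submodule.finrank_lt_finrank_of_lt hlt2
    rw [hrk' _ (le_of_lt hi)] at this
    refine (Submodule.eq_of_le_of_finrank_le hle ?_).symm
    rw [hrk' _ him]
    omega

end Adapted

section Lagr
variable {k : Type*} [Field k] {V : Type*} [AddCommGroup V] [Module k V] [FiniteDimensional k V]
variable {B : LinearMap.BilinForm k V}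

lemma exists_lagrangian_compl (hnd : B.Nondegenerate) (hsymm : ∀ x y, B x y = B y x)
    (h2k : (2 : k) ≠ 0) {L : Submodule k V} (horth : B.orthogonal L = L) :
    ∃ L' : Submodule k V, IsCompl L L' ∧ ∀ x ∈ L', ∀ y ∈ L', B x y = 0 := by
  have hrefl : B.IsRefl := fun x y h => by rw [hsymm]; exact h
  have hisoL : ∀ x ∈ L, ∀ y ∈ L, B x y = 0 := by
    intro x hx y hy
    rw [← horth] at hy
    exact (LinearMap.BilinForm.mem_orthogonal_iff.mp hy) x hx
  have hfrL : 2 * Module.finrank k L = Module.finrank k V := by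
    have := LinearMap.BilinForm.finrank_orthogonal hnd L
    rw [horth] at this
    have := Submodule.finrank_le L
    omega
  obtain ⟨C, hC⟩ := Submodule.exists_isCompl L
  have hfrC : Module.finrank k C = Module.finrank k L := by
    have := Submodule.finrank_add_eq_of_isCompl hC
    omega
  set P : ↥L →ₗ[k] Module.Dual k ↥C := (B.compl₁₂ C.subtype L.subtype).flip with hP
  have hPapp : ∀ (l : ↥L) (c : ↥C), P l c = B (c : V) (l : V) := fun l c => rfl
  have hPinj : Function.Injective P := by
    rw [← LinearMap.ker_eq_bot, Submodule.eq_bot_iff]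
    rintro ⟨l, hl⟩ hker
    have hC0 : ∀ c : ↥C, B (c : V) l = 0 := by
      intro c
      have := LinearMap.congr_fun hker c
      simpa [hPapp] using this
    have hall : ∀ v : V, B v l = 0 := by
      intro v
      obtain ⟨a, c, ha, hc, rfl⟩ := Submodule.codisjoint_iff_exists_add_eq.mp hC.codisjoint v
      rw [map_add, LinearMap.add_apply, hisoL a ha l hl, hC0 ⟨c, hc⟩, add_zero]
    have : l = 0 := hnd.1 l (fun v => by rw [hsymm]; exact hall v)
    simpa using this
  have hfrD : Module.finrank k ↥L = Module.finrank k (Module.Dual k ↥C) := by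
    rw [Subspace.dual_finrank_eq, hfrC]
  have hPsurj : Function.Surjective P :=
    (LinearMap.injective_iff_surjective_of_finrank_eq_finrank hfrD).mp hPinj
  set Pe : ↥L ≃ₗ[k] Module.Dual k ↥C := LinearEquiv.ofBijective P ⟨hPinj, hPsurj⟩ with hPe
  set q : ↥C →ₗ[k] Module.Dual k ↥C := (2 : k)⁻¹ • (B.compl₁₂ C.subtype C.subtype).flip with hq
  set τ : ↥C →ₗ[k] ↥L := Pe.symm.toLinearMap ∘ₗ q with hτ
  have hτkey : ∀ (c₁ c₂ : ↥C), B (c₁ : V) ((τ c₂ : ↥L) : V) = (2 : k)⁻¹ * B (c₁ : V) (c₂ : V) := by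
    intro c₁ c₂
    have : P (τ c₂) = q c₂ := by
      simp only [hτ, LinearMap.comp_apply]
      exact Pe.apply_symm_apply (q c₂)
    have := LinearMap.congr_fun this c₁
    rw [hPapp] at this
    simpa [hq] using this
  set φ : ↥C →ₗ[k] V := C.subtype - L.subtype ∘ₗ τ with hφ
  refine ⟨LinearMap.range φ, ⟨?_, ?_⟩, ?_⟩
  · -- disjoint
    rw [Submodule.disjoint_def]
    rintro x hxL ⟨c, rfl⟩
    have hcL : (c : V) ∈ L := by
      have h1 : φ c = (c : V) - ((τ c : ↥L) : V) := rfl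
      have : (c : V) = φ c + ((τ c : ↥L) : V) := by rw [h1]; abel
      rw [this]
      exact L.add_mem hxL (τ c).2
    have : (c : V) ∈ L ⊓ C := ⟨hcL, c.2⟩
    rw [hC.inf_eq_bot] at this
    have hc0 : c = 0 := by ext; simpa using this
    rw [hc0, map_zero]
  · -- codisjoint
    rw [codisjoint_iff, eq_top_iff, ← hC.sup_eq_top]
    refine sup_le le_sup_left ?_
    intro c hc
    have : c = ((τ ⟨c, hc⟩ : ↥L) : V) + φ ⟨c, hc⟩ := by
      have h1 : φ ⟨c, hc⟩ = c - ((τ ⟨c, hc⟩ : ↥L) : V) := rfl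
      rw [h1]; abel
    rw [this]
    exact Submodule.add_mem _ (Submodule.mem_sup_left (τ ⟨c, hc⟩).2)
      (Submodule.mem_sup_right ⟨⟨c, hc⟩, rfl⟩)
  · -- isotropic
    rintro x ⟨c₁, rfl⟩ y ⟨c₂, rfl⟩
    have h1 : φ c₁ = (c₁ : V) - ((τ c₁ : ↥L) : V) := rfl
    have h2 : φ c₂ = (c₂ : V) - ((τ c₂ : ↥L) : V) := rfl
    rw [h1, h2]
    have e1 : B (c₁ : V) ((τ c₂ : ↥L) : V) = (2 : k)⁻¹ * B (c₁ : V) (c₂ : V) := hτkey c₁ c₂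
    have e2 : B ((τ c₁ : ↥L) : V) (c₂ : V) = (2 : k)⁻¹ * B (c₁ : V) (c₂ : V) := by
      rw [hsymm, hτkey c₂ c₁, hsymm (c₂ : V) (c₁ : V)]
    have e3 : B ((τ c₁ : ↥L) : V) ((τ c₂ : ↥L) : V) = 0 := hisoL _ (τ c₁).2 _ (τ c₂).2
    have expand : B ((c₁ : V) - ((τ c₁ : ↥L) : V)) ((c₂ : V) - ((τ c₂ : ↥L) : V)) =
        B (c₁ : V) (c₂ : V) - B (c₁ : V) ((τ c₂ : ↥L) : V)
          - B ((τ c₁ : ↥L) : V) (c₂ : V) + B ((τ c₁ : ↥L) : V) ((τ c₂ : ↥L) : V) := by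
      simp only [map_sub, LinearMap.sub_apply]
      ring
    rw [expand, e1, e2, e3]
    field_simp
    ring

end Lagr

section GoodBasis
variable {k : Type*} [Field k] {V : Type*} [AddCommGroup V] [Module k V] [FiniteDimensional k V]
variable {B : LinearMap.BilinForm k V}

lemma exists_good_basis (hnd : B.Nondegenerate) (hsymm : ∀ x y, B x y = B y x)
    (h2k : (2 : k) ≠ 0) (m : ℕ) (hdim : Module.finrank k V = 2 * m)
    {L : Submodule k V} (hfrL : Module.finrank k L = m) (horth : B.orthogonal L = L)
    (b : Fin m → V) (hbmem : ∀ j, b j ∈ L) (hbspan : span k (Set.range b) = L) :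
    ∃ e : Basis (Fin m ⊕ Fin m) k V,
      (∀ j, e (Sum.inl j) = b j) ∧
      (∀ i j, B (e (Sum.inl i)) (e (Sum.inl j)) = 0) ∧
      (∀ i j, B (e (Sum.inr i)) (e (Sum.inr j)) = 0) ∧
      (∀ i j, B (e (Sum.inl i)) (e (Sum.inr j)) = if i = j then 1 else 0) := by
  have hisoL : ∀ x ∈ L, ∀ y ∈ L, B x y = 0 := by
    intro x hx y hy
    rw [← horth] at hy
    exact (LinearMap.BilinForm.mem_orthogonal_iff.mp hy) x hx
  obtain ⟨L', hcompl, hisoL'⟩ := exists_lagrangian_compl hnd hsymm h2k horth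
  have hfrL' : Module.finrank k L' = m := by
    have := Submodule.finrank_add_eq_of_isCompl hcompl
    omega
  -- basis of L from b
  set v : Fin m → ↥L := fun j => ⟨b j, hbmem j⟩ with hv
  have hvspan : ⊤ ≤ span k (Set.range v) := by
    have hmap : Submodule.map L.subtype (span k (Set.range v)) = L := by
      rw [Submodule.map_span]
      have : L.subtype '' Set.range v = Set.range b := by
        ext x
        simp [hv, Set.range_comp]
      rw [this, hbspan]
    have htop : Submodule.map L.subtype (⊤ : Submodule k ↥L) = L := by
      simp [Submodule.map_top, Submodule.range_subtype]
    have := Submodule.map_injective_of_injective L.injective_subtype (hmap.trans htop.symm)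
    exact le_of_eq this.symm
  have hcard : Fintype.card (Fin m) = Module.finrank k ↥L := by simp [hfrL]
  set bL : Basis (Fin m) k ↥L := basisOfTopLeSpanOfCardEqFinrank v hvspan hcard with hbL
  have hbLcoe : ∀ j, (bL j : V) = b j := by
    intro j
    rw [hbL, coe_basisOfTopLeSpanOfCardEqFinrank]
  -- pairing L' ≃ Dual L
  set P : ↥L' →ₗ[k] Module.Dual k ↥L := (B.compl₁₂ L.subtype L'.subtype).flip with hP
  have hPapp : ∀ (x : ↥L') (l : ↥L), P x l = B (l : V) (x : V) := fun x l => rfl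
  have hPinj : Function.Injective P := by
    rw [← LinearMap.ker_eq_bot, Submodule.eq_bot_iff]
    rintro ⟨x, hx⟩ hker
    have hL0 : ∀ l : ↥L, B (l : V) x = 0 := by
      intro l
      have := LinearMap.congr_fun hker l
      simpa [hPapp] using this
    have hall : ∀ w : V, B w x = 0 := by
      intro w
      obtain ⟨a, c, ha, hc, rfl⟩ := Submodule.codisjoint_iff_exists_add_eq.mp hcompl.codisjoint w
      rw [map_add, LinearMap.add_apply, hL0 ⟨a, ha⟩, hisoL' c hc x hx, add_zero]
    have : x = 0 := hnd.1 x (fun w => by rw [hsymm]; exact hall w)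
    simpa using this
  have hfrD : Module.finrank k ↥L' = Module.finrank k (Module.Dual k ↥L) := by
    rw [Subspace.dual_finrank_eq, hfrL', hfrL]
  have hPsurj : Function.Surjective P :=
    (LinearMap.injective_iff_surjective_of_finrank_eq_finrank hfrD).mp hPinj
  set Pe : ↥L' ≃ₗ[k] Module.Dual k ↥L := LinearEquiv.ofBijective P ⟨hPinj, hPsurj⟩ with hPe
  set bL' : Basis (Fin m) k ↥L' := bL.dualBasis.map Pe.symm with hbL'
  have hdual : ∀ i j, B ((bL i : ↥L) : V) ((bL' j : ↥L') : V) = if i = j then 1 else 0 := by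
    intro i j
    have h1 : P (bL' j) = bL.dualBasis j := by
      rw [hbL', Basis.map_apply]
      exact Pe.apply_symm_apply _
    have := LinearMap.congr_fun h1 (bL i)
    rw [hPapp] at this
    rw [this, Basis.dualBasis_apply_self]
  set E : (↥L × ↥L') ≃ₗ[k] V := Submodule.prodEquivOfIsCompl L L' hcompl with hE
  set e : Basis (Fin m ⊕ Fin m) k V := (bL.prod bL').map E with he
  have heinl : ∀ j, e (Sum.inl j) = b j := by
    intro j
    rw [he, Basis.map_apply]
    have : (bL.prod bL') (Sum.inl j) = ((bL j : ↥L), (0 : ↥L')) := by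
      exact Prod.ext (Basis.prod_apply_inl_fst _ _ _) (Basis.prod_apply_inl_snd _ _ _)
    rw [this]
    simp only [hE, Submodule.coe_prodEquivOfIsCompl]
    simp [hbLcoe]
  have heinr : ∀ j, e (Sum.inr j) = ((bL' j : ↥L') : V) := by
    intro j
    rw [he, Basis.map_apply]
    have : (bL.prod bL') (Sum.inr j) = ((0 : ↥L), bL' j) := by
      exact Prod.ext (Basis.prod_apply_inr_fst _ _ _) (Basis.prod_apply_inr_snd _ _ _)
    rw [this]
    simp only [hE, Submodule.coe_prodEquivOfIsCompl]
    simp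
  refine ⟨e, heinl, ?_, ?_, ?_⟩
  · intro i j
    rw [heinl, heinl]
    exact hisoL _ (hbmem i) _ (hbmem j)
  · intro i j
    rw [heinr, heinr]
    exact hisoL' _ (bL' i).2 _ (bL' j).2
  · intro i j
    rw [heinl, heinr, ← hbLcoe]
    exact hdual i j

end GoodBasis

section Dickson
open Matrix
variable {k : Type*} [Field k] {V : Type*} [AddCommGroup V] [Module k V] [FiniteDimensional k V]
variable {B : LinearMap.BilinForm k V}

lemma det_one_of_isometry_fixes_lagrangian
    (hsymm : ∀ x y, B x y = B y x)
    {m : ℕ} (e : Basis (Fin m ⊕ Fin m) k V)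
    (h11 : ∀ i j, B (e (Sum.inl i)) (e (Sum.inl j)) = 0)
    (h22 : ∀ i j, B (e (Sum.inr i)) (e (Sum.inr j)) = 0)
    (h12 : ∀ i j, B (e (Sum.inl i)) (e (Sum.inr j)) = if i = j then 1 else 0)
    (g : V ≃ₗ[k] V) (hg : ∀ x y, B (g x) (g y) = B x y)
    (hgL : ∀ j, g (e (Sum.inl j)) ∈ span k (Set.range (fun j => e (Sum.inl j)))) :
    LinearMap.det (g : V →ₗ[k] V) = 1 := by
  classical
  set M := LinearMap.toMatrix e e (g : V →ₗ[k] V) with hMdef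
  have hM21 : M.toBlocks₂₁ = 0 := by
    ext i j
    simp only [Matrix.toBlocks₂₁, Matrix.of_apply, Matrix.zero_apply, hMdef,
      LinearMap.toMatrix_apply]
    obtain ⟨c, hc⟩ := (mem_span_range_iff_exists_fun k).mp (hgL j)
    rw [LinearEquiv.coe_coe, ← hc]
    simp [map_sum, Finsupp.single_apply]
  have hGram : LinearMap.BilinForm.toMatrix e B =
      Matrix.fromBlocks 0 1 1 0 := by
    ext x y
    rcases x with i | i <;> rcases y with j | j <;>
      simp [LinearMap.BilinForm.toMatrix_apply, h11, h22, h12, Matrix.one_apply,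
        hsymm (e (Sum.inr i)) (e (Sum.inl j)), eq_comm]
  have hcomp : B.comp (g : V →ₗ[k] V) (g : V →ₗ[k] V) = B := by
    ext x y
    simp [hg]
  have hmat : Mᵀ * Matrix.fromBlocks 0 1 1 0 * M = Matrix.fromBlocks 0 1 1 0 := by
    rw [← hGram, hMdef, ← LinearMap.BilinForm.toMatrix_comp e e B _ _, hcomp]
  rw [← Matrix.fromBlocks_toBlocks M, hM21] at hmat
  set A := M.toBlocks₁₁
  set X := M.toBlocks₁₂
  set D := M.toBlocks₂₂
  have hexp : (Matrix.fromBlocks A X 0 D)ᵀ * Matrix.fromBlocks 0 1 1 0 *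
      Matrix.fromBlocks A X (0 : Matrix (Fin m) (Fin m) k) D =
      Matrix.fromBlocks 0 (Aᵀ * D) (Dᵀ * A) (Dᵀ * X + Xᵀ * D) := by
    rw [Matrix.fromBlocks_transpose, Matrix.fromBlocks_multiply, Matrix.fromBlocks_multiply]
    congr 1 <;> simp
  rw [hexp] at hmat
  have h1 : Aᵀ * D = 1 := by
    have := congrArg Matrix.toBlocks₁₂ hmat
    simpa [Matrix.toBlocks_fromBlocks₁₂] using this
  have hdetM : M.det = 1 := by
    rw [← Matrix.fromBlocks_toBlocks M, hM21, Matrix.det_fromBlocks_zero₂₁]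
    calc A.det * D.det = (Aᵀ * D).det := by rw [Matrix.det_mul, Matrix.det_transpose]
      _ = 1 := by rw [h1, Matrix.det_one]
  rw [← LinearMap.det_toMatrix e, ← hMdef, hdetM]

end Dickson

section DetCompl
variable {k : Type*} [Field k] {V : Type*} [AddCommGroup V] [Module k V] [FiniteDimensional k V]

lemma det_eq_mul_of_isCompl {A A' : Submodule k V} (hc : IsCompl A A') (φ : V →ₗ[k] V)
    (hA : ∀ x ∈ A, φ x ∈ A) (hA' : ∀ x ∈ A', φ x ∈ A') :
    LinearMap.det φ =
      LinearMap.det (φ.restrict hA) * LinearMap.det (φ.restrict hA') := by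
  classical
  set E : (↥A × ↥A') ≃ₗ[k] V := Submodule.prodEquivOfIsCompl A A' hc with hE
  set P : (↥A × ↥A') →ₗ[k] (↥A × ↥A') := (φ.restrict hA).prodMap (φ.restrict hA') with hPdef
  have key : ∀ p : ↥A × ↥A', φ (E p) = E (P p) := by
    rintro ⟨a, a'⟩
    rw [hE, Submodule.coe_prodEquivOfIsCompl' A A' hc, Submodule.coe_prodEquivOfIsCompl' A A' hc]
    simp only [hPdef, LinearMap.prodMap_apply, LinearMap.restrict_apply, map_add]
  have hφ : φ = (E : (↥A × ↥A') →ₗ[k] V) ∘ₗ P ∘ₗ (E.symm : V →ₗ[k] (↥A × ↥A')) := by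
    ext x
    simp only [LinearMap.comp_apply, LinearEquiv.coe_coe]
    rw [← key, E.apply_symm_apply]
  conv_lhs => rw [hφ]
  rw [LinearMap.det_conj P E]
  set bA := Module.finBasis k ↥A
  set bA' := Module.finBasis k ↥A'
  rw [← LinearMap.det_toMatrix (bA.prod bA'), LinearMap.toMatrix_prodMap,
    Matrix.det_fromBlocks_zero₂₁, LinearMap.det_toMatrix, LinearMap.det_toMatrix]

end DetCompl

section Reflection
variable {k : Type*} [Field k] {V : Type*} [AddCommGroup V] [Module k V] [FiniteDimensional k V]
variable {B : LinearMap.BilinForm k V}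

lemma exists_reflection (hsymm : ∀ x y, B x y = B y x) (h2k : (2 : k) ≠ 0)
    {x y : V} (hx : B x x = 0) (hy : B y y = 0) (hxy : B x y = 1) :
    ∃ h : V ≃ₗ[k] V,
      (∀ u v, B (h u) (h v) = B u v) ∧
      LinearMap.det (h : V →ₗ[k] V) = -1 ∧
      h x = y ∧ (∀ u, B u x = 0 → B u y = 0 → h u = u) ∧
      (∀ u, h u = u + (B u (x - y)) • (x - y)) := by
  have hrefl : B.IsRefl := fun a b h => by rw [hsymm]; exact h
  set r : V := x - y with hr
  have hyx : B y x = 1 := by rw [hsymm] at hxy; exact hxy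
  have hrr : B r r = -2 := by
    simp only [hr, map_sub, LinearMap.sub_apply, hx, hy, hxy, hyx]
    ring
  have hr0 : r ≠ 0 := by
    intro h0
    rw [h0] at hrr
    simp only [map_zero, LinearMap.zero_apply] at hrr
    exact h2k (by linear_combination hrr)
  set f : V →ₗ[k] V := LinearMap.id + (LinearMap.toSpanSingleton k V r).comp (B.flip r) with hf
  have hfapp : ∀ u, f u = u + (B u r) • r := by
    intro u
    simp [hf, LinearMap.toSpanSingleton_apply]
  have hBur : ∀ u, B r u = B u r := fun u => hsymm r u
  have hinv : Function.Involutive f := by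
    intro u
    rw [hfapp, hfapp]
    simp only [map_add, LinearMap.add_apply, map_smul, LinearMap.smul_apply, smul_eq_mul]
    rw [hrr]
    module
  set h : V ≃ₗ[k] V := LinearEquiv.ofInvolutive f hinv with hh
  have hhapp : ∀ u, h u = u + (B u r) • r := hfapp
  have hiso : ∀ u v, B (h u) (h v) = B u v := by
    intro u v
    rw [hhapp, hhapp]
    simp only [map_add, map_smul, LinearMap.add_apply, LinearMap.smul_apply, smul_eq_mul]
    rw [hrr, hBur v]
    ring
  have hxr : B x r = -1 := by
    rw [hr, map_sub, hx, hxy]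
    norm_num
  have hhx : h x = y := by
    rw [hhapp, hxr, hr]
    module
  have hfix : ∀ u, B u x = 0 → B u y = 0 → h u = u := by
    intro u h1 h2
    rw [hhapp]
    have : B u r = 0 := by simp [hr, map_sub, h1, h2]
    rw [this, zero_smul, add_zero]
  -- determinant
  set A : Submodule k V := span k {r} with hA
  have hrestr : (B.restrict A).Nondegenerate := by
    refine LinearMap.BilinForm.Nondegenerate.ofSeparatingLeft ?_
    rintro ⟨w, hw⟩ hww
    obtain ⟨c, rfl⟩ := Submodule.mem_span_singleton.mp hw
    have h1 := hww ⟨r, Submodule.mem_span_singleton_self r⟩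
    have h2 : c * B r r = 0 := by simpa using h1
    rw [hrr] at h2
    have hc : c = 0 := by
      rcases mul_eq_zero.mp h2 with h | h
      · exact h
      · exact absurd (by linear_combination -h) h2k
    apply Subtype.ext
    simp [hc]
  have hcompl : IsCompl A (B.orthogonal A) :=
    LinearMap.BilinForm.isCompl_orthogonal_of_restrict_nondegenerate hrefl hrestr
  have hpresA : ∀ u ∈ A, (h : V →ₗ[k] V) u ∈ A := by
    intro u hu
    obtain ⟨c, rfl⟩ := Submodule.mem_span_singleton.mp hu
    have : h (c • r) = c • r + (c * B r r) • r := by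
      rw [hhapp]
      simp only [map_smul, LinearMap.smul_apply, smul_eq_mul]
    rw [LinearEquiv.coe_coe, this]
    exact Submodule.add_mem _ (Submodule.smul_mem _ _ (Submodule.mem_span_singleton_self r))
      (Submodule.smul_mem _ _ (Submodule.mem_span_singleton_self r))
  have hpresA' : ∀ u ∈ B.orthogonal A, (h : V →ₗ[k] V) u ∈ B.orthogonal A := by
    intro u hu
    have hur : B u r = 0 := by
      rw [← hBur]
      exact (LinearMap.BilinForm.mem_orthogonal_iff.mp hu) r (Submodule.mem_span_singleton_self r)
    have : h u = u := by rw [hhapp, hur, zero_smul, add_zero]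
    rw [LinearEquiv.coe_coe, this]
    exact hu
  have hdet := det_eq_mul_of_isCompl hcompl (h : V →ₗ[k] V) hpresA hpresA'
  have hdA : LinearMap.det ((h : V →ₗ[k] V).restrict hpresA) = -1 := by
    have hres : (h : V →ₗ[k] V).restrict hpresA = -LinearMap.id := by
      ext ⟨u, hu⟩
      obtain ⟨c, rfl⟩ := Submodule.mem_span_singleton.mp hu
      have : h (c • r) = -(c • r) := by
        rw [hhapp]
        simp only [map_smul, LinearMap.smul_apply, smul_eq_mul, hrr]
        module
      simp only [LinearMap.restrict_coe_apply, LinearEquiv.coe_coe, this,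
        LinearMap.neg_apply, LinearMap.id_apply]
      rfl
    rw [hres]
    have : (-LinearMap.id : ↥A →ₗ[k] ↥A) = (-1 : k) • LinearMap.id := by
      ext u; simp
    rw [this, LinearMap.det_smul, LinearMap.det_id, finrank_span_singleton hr0]
    ring
  have hdA' : LinearMap.det ((h : V →ₗ[k] V).restrict hpresA') = 1 := by
    have hres : (h : V →ₗ[k] V).restrict hpresA' = LinearMap.id := by
      ext ⟨u, hu⟩
      have hur : B u r = 0 := by
        rw [← hBur]
        exact (LinearMap.BilinForm.mem_orthogonal_iff.mp hu) r (Submodule.mem_span_singleton_self r)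
      have : h u = u := by rw [hhapp, hur, zero_smul, add_zero]
      simp only [LinearMap.restrict_coe_apply, LinearEquiv.coe_coe, this, LinearMap.id_apply]
    rw [hres, LinearMap.det_id]
  exact ⟨h, hiso, by rw [hdet, hdA, hdA']; ring, hhx, hfix, fun u => hhapp u⟩

end Reflection

section Flags
variable {k : Type*} [Field k] {V : Type*} [AddCommGroup V] [Module k V] [FiniteDimensional k V]
variable {B : LinearMap.BilinForm k V}

lemma IsSelfDualFlag.map_equiv {m : ℕ} {F : ℕ → Submodule k V}
    (hF : IsSelfDualFlag m B F) (g : V ≃ₗ[k] V) (hg : ∀ x y, B (g x) (g y) = B x y) :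
    IsSelfDualFlag m B (fun i => Submodule.map (g : V →ₗ[k] V) (F i)) := by
  obtain ⟨h0, hrk, hmono, hiso, horth⟩ := hF
  refine ⟨?_, ?_, ?_, ?_, ?_⟩
  · show Submodule.map (g : V →ₗ[k] V) (F 0) = ⊥
    rw [h0]
    exact Submodule.map_bot _
  · intro i h1 h2
    show Module.finrank k ↥(Submodule.map (g : V →ₗ[k] V) (F i)) = i
    rw [LinearEquiv.finrank_map_eq]
    exact hrk i h1 h2
  · intro i hi
    exact Submodule.map_mono (hmono i hi)
  · rintro x ⟨u, hu, rfl⟩ y ⟨v, hv, rfl⟩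
    simpa [hg] using hiso u hu v hv
  · intro j hj
    show Submodule.map (g : V →ₗ[k] V) (F (2 * m - j)) =
      B.orthogonal (Submodule.map (g : V →ₗ[k] V) (F j))
    rw [horth j hj]
    exact map_orthogonal g hg (F j)

lemma IsSelfDualFlag.finrank_top {m : ℕ} {F : ℕ → Submodule k V}
    (hF : IsSelfDualFlag m B F) (hm : 1 ≤ m) : Module.finrank k (F m) = m :=
  hF.2.1 m hm le_rfl

lemma IsSelfDualFlag.lagr {m : ℕ} {F : ℕ → Submodule k V}
    (hF : IsSelfDualFlag m B F) (hm : 1 ≤ m) (hdim : Module.finrank k V = 2 * m)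
    (hnd : B.Nondegenerate) (hrefl : B.IsRefl) : B.orthogonal (F m) = F m := by
  refine lagrangian_orthogonal_eq hnd hrefl hF.2.2.2.1 ?_
  rw [hF.finrank_top hm, hdim]

end Flags

section MainInduction
variable {k : Type*} [Field k] {V : Type*} [AddCommGroup V] [Module k V] [FiniteDimensional k V]
variable {B : LinearMap.BilinForm k V}

lemma det_one_of_fixes_flag_top (hsymm : ∀ x y, B x y = B y x) (hnd : B.Nondegenerate)
    (h2k : (2 : k) ≠ 0) {m : ℕ} (hm : 1 ≤ m) (hdim : Module.finrank k V = 2 * m)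
    {F : ℕ → Submodule k V} (hF : IsSelfDualFlag m B F)
    (φ : V ≃ₗ[k] V) (hiso : ∀ x y, B (φ x) (φ y) = B x y)
    (hmap : Submodule.map (φ : V →ₗ[k] V) (F m) = F m) :
    LinearMap.det (φ : V →ₗ[k] V) = 1 := by
  have hrefl : B.IsRefl := fun a b h => by rw [hsymm]; exact h
  obtain ⟨b, hb⟩ := exists_adapted_family m F hF.1 hF.2.1 hF.2.2.1
  have hspan : span k (Set.range b) = F m := by
    have := hb m le_rfl
    have hset : {j : Fin m | (j : ℕ) < m} = Set.univ := by
      ext j; simp [j.2]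
    rw [this, hset, Set.image_univ]
  have hbmem : ∀ j, b j ∈ F m := by
    intro j
    rw [← hspan]
    exact Submodule.subset_span ⟨j, rfl⟩
  obtain ⟨e, heinl, h11, h22, h12⟩ := exists_good_basis hnd hsymm h2k m hdim
    (hF.finrank_top hm) (hF.lagr hm hdim hnd hrefl) b hbmem hspan
  refine det_one_of_isometry_fixes_lagrangian hsymm e h11 h22 h12 φ hiso ?_
  intro j
  have h1 : (fun j => e (Sum.inl j)) = b := funext heinl
  rw [h1, hspan, heinl]
  rw [← hmap]
  exact ⟨b j, hbmem j, rfl⟩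

lemma exists_special_isometry (hsymm : ∀ x y, B x y = B y x) (hnd : B.Nondegenerate)
    (h2k : (2 : k) ≠ 0) {m : ℕ} (hm : 1 ≤ m) (hdim : Module.finrank k V = 2 * m)
    (d : ℕ) :
    ∀ F F' : ℕ → Submodule k V, IsSelfDualFlag m B F → IsSelfDualFlag m B F' →
      Module.finrank k ↥(F m ⊓ F' m) + d = m →
      ∃ g : V ≃ₗ[k] V, (∀ x y, B (g x) (g y) = B x y) ∧
        LinearMap.det (g : V →ₗ[k] V) = (-1 : k) ^ d ∧
        ∀ i, 1 ≤ i → i ≤ 2 * m → Submodule.map (g : V →ₗ[k] V) (F i) = F' i := by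
  have hrefl : B.IsRefl := fun a b h => by rw [hsymm]; exact h
  induction d with
  | zero =>
    intro F F' hF hF' hsum
    rw [add_zero] at hsum
    -- F m = F' m
    have hEq : F m = F' m := by
      have h1 : F m ⊓ F' m = F m := by
        refine Submodule.eq_of_le_of_finrank_le inf_le_left ?_
        rw [hsum, hF.finrank_top hm]
      have h2 : F m ⊓ F' m = F' m := by
        refine Submodule.eq_of_le_of_finrank_le inf_le_right ?_
        rw [hsum, hF'.finrank_top hm]
      rw [← h1, h2]
    obtain ⟨b, hb⟩ := exists_adapted_family m F hF.1 hF.2.1 hF.2.2.1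
    obtain ⟨b', hb'⟩ := exists_adapted_family m F' hF'.1 hF'.2.1 hF'.2.2.1
    have hset : {j : Fin m | (j : ℕ) < m} = Set.univ := by
      ext j; simp [j.2]
    have hspan : span k (Set.range b) = F m := by
      have := hb m le_rfl
      rw [this, hset, Set.image_univ]
    have hspan' : span k (Set.range b') = F m := by
      have := hb' m le_rfl
      rw [hEq, this, hset, Set.image_univ]
    have hbmem : ∀ j, b j ∈ F m := fun j => by
      rw [← hspan]; exact Submodule.subset_span ⟨j, rfl⟩
    have hbmem' : ∀ j, b' j ∈ F m := fun j => by
      rw [← hspan']; exact Submodule.subset_span ⟨j, rfl⟩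
    obtain ⟨e, heinl, h11, h22, h12⟩ := exists_good_basis hnd hsymm h2k m hdim
      (hF.finrank_top hm) (hF.lagr hm hdim hnd hrefl) b hbmem hspan
    obtain ⟨e', heinl', h11', h22', h12'⟩ := exists_good_basis hnd hsymm h2k m hdim
      (hF.finrank_top hm) (hF.lagr hm hdim hnd hrefl) b' hbmem' hspan'
    set g : V ≃ₗ[k] V := e.equiv e' (Equiv.refl _) with hg
    have hge : ∀ i, g (e i) = e' i := fun i => e.equiv_apply i e' (Equiv.refl _)
    have hiso : ∀ x y, B (g x) (g y) = B x y := by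
      have hcomp : B.comp (g : V →ₗ[k] V) (g : V →ₗ[k] V) = B := by
        refine LinearMap.BilinForm.ext_basis e ?_
        intro i j
        rw [LinearMap.BilinForm.comp_apply]
        simp only [LinearEquiv.coe_coe, hge]
        rcases i with i | i <;> rcases j with j | j
        · rw [h11, h11']
        · rw [h12, h12']
        · rw [hsymm (e' (Sum.inr i)) (e' (Sum.inl j)), hsymm (e (Sum.inr i)) (e (Sum.inl j)),
            h12, h12']
        · rw [h22, h22']
      intro x y
      have := LinearMap.congr_fun (LinearMap.congr_fun hcomp x) y
      simpa [LinearMap.BilinForm.comp_apply] using this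
    have hmaplow : ∀ i, i ≤ m → Submodule.map (g : V →ₗ[k] V) (F i) = F' i := by
      intro i him
      rw [hb i him, hb' i him, Submodule.map_span, ← Set.image_comp]
      congr 1
      apply Set.image_congr
      intro j _
      simp only [Function.comp_apply, LinearEquiv.coe_coe]
      rw [← heinl, ← heinl', hge]
    have hmap : ∀ i, 1 ≤ i → i ≤ 2 * m → Submodule.map (g : V →ₗ[k] V) (F i) = F' i := by
      intro i h1 h2
      rcases le_or_gt i m with him | him
      · exact hmaplow i him
      · set j := 2 * m - i with hj
        have hij : i = 2 * m - j := by omega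
        have hjm : j ≤ m - 1 := by omega
        rw [hij, hF.2.2.2.2 j hjm, hF'.2.2.2.2 j hjm, map_orthogonal g hiso, hmaplow j (by omega)]
    refine ⟨g, hiso, ?_, hmap⟩
    rw [pow_zero]
    exact det_one_of_fixes_flag_top hsymm hnd h2k hm hdim hF g hiso
      (by rw [hmaplow m le_rfl, ← hEq])
  | succ d IH =>
    intro F F' hF hF' hsum
    -- find x ∈ F m, y ∈ F' m with B x y = 1
    have hne : ¬ (F' m ≤ F m) := by
      intro hle
      have : F' m = F m := by
        refine Submodule.eq_of_le_of_finrank_le hle ?_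
        rw [hF.finrank_top hm, hF'.finrank_top hm]
      have : F m ⊓ F' m = F m := by rw [this, inf_idem]
      rw [this, hF.finrank_top hm] at hsum
      omega
    obtain ⟨y₀, hy₀M, hy₀L⟩ := SetLike.not_le_iff_exists.mp hne
    have hy₀notorth : y₀ ∉ B.orthogonal (F m) := by
      rw [hF.lagr hm hdim hnd hrefl]; exact hy₀L
    obtain ⟨x, hxL, hxy₀⟩ : ∃ x ∈ F m, B x y₀ ≠ 0 := by
      by_contra hcon
      push_neg at hcon
      exact hy₀notorth (LinearMap.BilinForm.mem_orthogonal_iff.mpr fun n hn => hcon n hn)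
    set y : V := (B x y₀)⁻¹ • y₀ with hy
    have hyM : y ∈ F' m := Submodule.smul_mem _ _ hy₀M
    have hxy : B x y = 1 := by
      rw [hy, map_smul, smul_eq_mul, inv_mul_cancel₀ hxy₀]
    have hxx : B x x = 0 := hF.2.2.2.1 x hxL x hxL
    have hyy : B y y = 0 := hF'.2.2.2.1 y hyM y hyM
    obtain ⟨h, hiso_h, hdet_h, hhx, hfix, happ⟩ := exists_reflection hsymm h2k hxx hyy hxy
    have hynotL : y ∉ F m := by
      intro hyL
      rw [hF.2.2.2.1 x hxL y hyL] at hxy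
      exact one_ne_zero hxy.symm
    have hy0 : y ≠ 0 := by
      intro h0
      rw [h0, map_zero] at hxy
      exact one_ne_zero hxy.symm
    -- the new flag
    set F'' : ℕ → Submodule k V := fun i => Submodule.map (h : V →ₗ[k] V) (F i) with hF''def
    have hF'' : IsSelfDualFlag m B F'' := hF.map_equiv h hiso_h
    have hWeq : F'' m ⊓ F' m = (F m ⊓ F' m) ⊔ span k {y} := by
      apply le_antisymm
      · rintro z ⟨⟨u, hu, rfl⟩, hzM⟩
        have hu_x : B u x = 0 := hF.2.2.2.1 u hu x hxL
        have hur : B u (x - y) = -(B u y) := by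
          rw [map_sub, hu_x]
          ring
        have hdecomp : (h : V →ₗ[k] V) u = (u - (B u y) • x) + (B u y) • y := by
          show h u = _
          rw [happ u, hur]
          module
        have hwL : u - (B u y) • x ∈ F m :=
          Submodule.sub_mem _ hu (Submodule.smul_mem _ _ hxL)
        have hwM : u - (B u y) • x ∈ F' m := by
          have : u - (B u y) • x = (h : V →ₗ[k] V) u - (B u y) • y := by
            rw [hdecomp]; module
          rw [this]
          exact Submodule.sub_mem _ hzM (Submodule.smul_mem _ _ hyM)
        rw [hdecomp]
        exact Submodule.add_mem _ (Submodule.mem_sup_left ⟨hwL, hwM⟩)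
          (Submodule.mem_sup_right (Submodule.smul_mem _ _ (Submodule.mem_span_singleton_self y)))
      · refine sup_le ?_ ?_
        · rintro w ⟨hwL, hwM⟩
          have hwfix : h w = w := hfix w (hF.2.2.2.1 w hwL x hxL) (hF'.2.2.2.1 w hwM y hyM)
          exact ⟨⟨w, hwL, hwfix⟩, hwM⟩
        · rw [Submodule.span_le, Set.singleton_subset_iff]
          exact ⟨⟨x, hxL, hhx⟩, hyM⟩
    have hinf0 : (F m ⊓ F' m) ⊓ span k {y} = ⊥ := by
      rw [eq_bot_iff]
      rintro z ⟨hzW, hzY⟩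
      obtain ⟨c, rfl⟩ := Submodule.mem_span_singleton.mp hzY
      rcases eq_or_ne c 0 with hc | hc
      · rw [hc, zero_smul]
        exact Submodule.zero_mem _
      · exfalso
        apply hynotL
        have : y = c⁻¹ • (c • y) := by rw [smul_smul, inv_mul_cancel₀ hc, one_smul]
        rw [this]
        exact Submodule.smul_mem _ _ hzW.1
    have hfr : Module.finrank k ↥(F'' m ⊓ F' m) + d = m := by
      rw [hWeq]
      have h1 := Submodule.finrank_sup_add_finrank_inf_eq (F m ⊓ F' m) (span k {y})
      rw [hinf0, finrank_bot, finrank_span_singleton hy0] at h1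
      omega
    obtain ⟨g', hiso', hdet', hmap'⟩ := IH F'' F' hF'' hF' hfr
    refine ⟨h.trans g', ?_, ?_, ?_⟩
    · intro u v
      show B (g' (h u)) (g' (h v)) = B u v
      rw [hiso', hiso_h]
    · have hcoe : ((h.trans g' : V ≃ₗ[k] V) : V →ₗ[k] V) = (g' : V →ₗ[k] V) ∘ₗ (h : V →ₗ[k] V) := by
        rfl
      rw [hcoe, LinearMap.det_comp, hdet', hdet_h, pow_succ]
    · intro i h1 h2
      have hcoe : ((h.trans g' : V ≃ₗ[k] V) : V →ₗ[k] V) = (g' : V →ₗ[k] V) ∘ₗ (h : V →ₗ[k] V) := by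
        rfl
      rw [hcoe, Submodule.map_comp]
      exact hmap' i h1 h2
end MainInduction


/-- Two complete self-dual flags in a `2m`-dimensional orthogonal space are
conjugate under the special orthogonal group iff `dim (V_m ∩ V'_m) ≡ m (mod 2)`. -/
theorem stmt17 {k : Type*} [Field k] (hchar : ringChar k ≠ 2)
    {V : Type*} [AddCommGroup V] [Module k V] [FiniteDimensional k V]
    (m : ℕ) (hm : 1 ≤ m) (hdim : Module.finrank k V = 2 * m)
    (B : LinearMap.BilinForm k V) (hsymm : ∀ x y, B x y = B y x)
    (hnd : B.Nondegenerate)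
    (F F' : ℕ → Submodule k V)
    (hF : IsSelfDualFlag m B F) (hF' : IsSelfDualFlag m B F') :
    (∃ g : V ≃ₗ[k] V,
        (∀ x y, B (g x) (g y) = B x y) ∧
        LinearMap.det (g : V →ₗ[k] V) = 1 ∧
        ∀ i, 1 ≤ i → i ≤ 2 * m → Submodule.map (g : V →ₗ[k] V) (F i) = F' i) ↔
      Module.finrank k ↥(F m ⊓ F' m) % 2 = m % 2 := by
  have hrefl : B.IsRefl := fun a b h => by rw [hsymm]; exact h
  have h2k : (2 : k) ≠ 0 := two_ne_zero_of_ringChar hchar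
  set n := Module.finrank k ↥(F m ⊓ F' m) with hn
  have hnm : n ≤ m := by
    have h1 := Submodule.finrank_mono (inf_le_left : F m ⊓ F' m ≤ F m)
    rw [hF.finrank_top hm] at h1
    exact h1
  set d := m - n with hd
  have hsum : n + d = m := by omega
  obtain ⟨g₀, hg₀iso, hg₀det, hg₀map⟩ :=
    exists_special_isometry hsymm hnd h2k hm hdim d F F' hF hF' hsum
  have hprod : LinearMap.det (g₀ : V →ₗ[k] V) * LinearMap.det (g₀.symm : V →ₗ[k] V) = 1 := by
    rw [← LinearMap.det_comp]
    have : ((g₀ : V →ₗ[k] V) ∘ₗ (g₀.symm : V →ₗ[k] V)) = LinearMap.id := by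
      ext v; simp
    rw [this, LinearMap.det_id]
  constructor
  · rintro ⟨g, hgiso, hgdet, hgmap⟩
    have hg₀symm_iso : ∀ x y, B (g₀.symm x) (g₀.symm y) = B x y := by
      intro x y
      calc B (g₀.symm x) (g₀.symm y) = B (g₀ (g₀.symm x)) (g₀ (g₀.symm y)) :=
            (hg₀iso _ _).symm
        _ = B x y := by rw [g₀.apply_symm_apply, g₀.apply_symm_apply]
    set φ : V ≃ₗ[k] V := g.trans g₀.symm with hφ
    have hφiso : ∀ x y, B (φ x) (φ y) = B x y := by
      intro x y
      show B (g₀.symm (g x)) (g₀.symm (g y)) = B x y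
      rw [hg₀symm_iso, hgiso]
    have hφcoe : (φ : V →ₗ[k] V) = (g₀.symm : V →ₗ[k] V) ∘ₗ (g : V →ₗ[k] V) := rfl
    have hφmap : Submodule.map (φ : V →ₗ[k] V) (F m) = F m := by
      rw [hφcoe, Submodule.map_comp, hgmap m hm (by omega)]
      have h2 := hg₀map m hm (by omega)
      have h3 : Submodule.map (g₀.symm : V →ₗ[k] V)
          (Submodule.map (g₀ : V →ₗ[k] V) (F m)) = F m := by
        rw [← Submodule.map_comp]
        have : ((g₀.symm : V →ₗ[k] V) ∘ₗ (g₀ : V →ₗ[k] V)) = LinearMap.id := by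
          ext v; simp
        rw [this, Submodule.map_id]
      rw [← h2, h3]
    have hφdet : LinearMap.det (φ : V →ₗ[k] V) = 1 :=
      det_one_of_fixes_flag_top hsymm hnd h2k hm hdim hF φ hφiso hφmap
    have hdet₀ : LinearMap.det (g₀ : V →ₗ[k] V) = 1 := by
      rw [hφcoe, LinearMap.det_comp, hgdet, mul_one] at hφdet
      rw [← hprod, hφdet, mul_one]
    rw [hg₀det] at hdet₀
    have heven : Even d := by
      rcases Nat.even_or_odd d with he | ho
      · exact he
      · exfalso
        rw [ho.neg_one_pow] at hdet₀
        exact h2k (by linear_combination -hdet₀)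
    obtain ⟨t, ht⟩ := heven
    omega
  · intro hpar
    have heven : Even d := by
      rw [Nat.even_iff]
      omega
    exact ⟨g₀, hg₀iso, by rw [hg₀det]; exact heven.neg_one_pow, hg₀map⟩
end

section
/- Let 𝕜 be a field of characteristic ≠ 2 and V a 2m-dimensional 𝕜-vector space with a nondegenerate symmetric bilinear form. Let W ⊆ V be a totally isotropic subspace of dimension m−1 that is contained in at least one totally isotropic subspace of dimension m. Then there are exactly two totally isotropic subspaces of V of dimension m containing W, and both are contained in W^⊥. -/
open Module Submodule

/-- finrank of `W ⊔ span {v}` for `v ∉ W`. -/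
lemma aux_finrank_sup {k V : Type*} [Field k] [AddCommGroup V] [Module k V]
    [FiniteDimensional k V] (W : Submodule k V) (v : V) (hv : v ∉ W) :
    Module.finrank k ↥(W ⊔ (k ∙ v)) = Module.finrank k W + 1 := by
  have hv0 : v ≠ 0 := fun h => hv (h ▸ W.zero_mem)
  have hinf : W ⊓ (k ∙ v) = ⊥ := by
    rw [Submodule.eq_bot_iff]
    rintro x ⟨hxW, hxv⟩
    obtain ⟨a, rfl⟩ := Submodule.mem_span_singleton.mp hxv
    rcases eq_or_ne a 0 with rfl | ha
    · simp
    · exact absurd ((Submodule.smul_mem_iff _ ha).mp hxW) hv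
  have := Submodule.finrank_sup_add_finrank_inf_eq W (k ∙ v)
  rw [hinf, finrank_bot, finrank_span_singleton hv0] at this
  omega

/-- In a `2m`-dimensional orthogonal space, a totally isotropic subspace `W` of
dimension `m−1` contained in some totally isotropic subspace of dimension `m` is
contained in exactly two such, and both lie in `W^⊥`. -/
theorem stmt18 {k : Type*} [Field k] (hchar : ringChar k ≠ 2)
    {V : Type*} [AddCommGroup V] [Module k V] [FiniteDimensional k V]
    (m : ℕ) (hm : 1 ≤ m) (hdim : Module.finrank k V = 2 * m)
    (B : LinearMap.BilinForm k V) (hsymm : ∀ x y, B x y = B y x)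
    (hnd : B.Nondegenerate)
    (W : Submodule k V) (hWiso : ∀ x ∈ W, ∀ y ∈ W, B x y = 0)
    (hWdim : Module.finrank k W = m - 1)
    (hext : ∃ U : Submodule k V,
      (∀ x ∈ U, ∀ y ∈ U, B x y = 0) ∧ Module.finrank k U = m ∧ W ≤ U) :
    ∃ U₁ U₂ : Submodule k V, U₁ ≠ U₂ ∧
      ((∀ x ∈ U₁, ∀ y ∈ U₁, B x y = 0) ∧ Module.finrank k U₁ = m ∧
        W ≤ U₁ ∧ U₁ ≤ B.orthogonal W) ∧
      ((∀ x ∈ U₂, ∀ y ∈ U₂, B x y = 0) ∧ Module.finrank k U₂ = m ∧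
        W ≤ U₂ ∧ U₂ ≤ B.orthogonal W) ∧
      (∀ U : Submodule k V, (∀ x ∈ U, ∀ y ∈ U, B x y = 0) →
        Module.finrank k U = m → W ≤ U → U = U₁ ∨ U = U₂) := by
  have h2 : (2 : k) ≠ 0 := Ring.two_ne_zero hchar
  have hrefl : B.IsRefl := fun x y h => (hsymm x y).symm ▸ h
  obtain ⟨U₀, hU₀iso, hU₀dim, hWU₀⟩ := hext
  -- any isotropic subspace containing W lies in W^⊥
  have horth : ∀ U : Submodule k V, (∀ x ∈ U, ∀ y ∈ U, B x y = 0) → W ≤ U →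
      U ≤ B.orthogonal W := fun U hUiso hWU u hu =>
    LinearMap.BilinForm.mem_orthogonal_iff.mpr fun w hw => hUiso w (hWU hw) u hu
  have hWN : W ≤ B.orthogonal W := horth W hWiso le_rfl
  set N := B.orthogonal W with hN
  have hNdim : Module.finrank k ↥N = m + 1 := by
    rw [hN, LinearMap.BilinForm.finrank_orthogonal hnd, hdim, hWdim]; omega
  -- pick u₀ ∈ U₀ \ W
  have hWltU₀ : W < U₀ := lt_of_le_of_ne hWU₀ (fun h => by
    rw [h, hU₀dim] at hWdim; omega)
  obtain ⟨u₀, hu₀U₀, hu₀W⟩ := SetLike.exists_of_lt hWltU₀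
  have hu₀N : u₀ ∈ N := horth U₀ hU₀iso hWU₀ hu₀U₀
  have hBu₀u₀ : B u₀ u₀ = 0 := hU₀iso u₀ hu₀U₀ u₀ hu₀U₀
  have hBu₀W : ∀ w ∈ W, B u₀ w = 0 := fun w hw => hU₀iso u₀ hu₀U₀ w (hWU₀ hw)
  -- find v₁ ∈ N with B u₀ v₁ ≠ 0
  have : ∃ v₁ ∈ N, B u₀ v₁ ≠ 0 := by
    by_contra h
    push_neg at h
    have : u₀ ∈ B.orthogonal N := LinearMap.BilinForm.mem_orthogonal_iff.mpr
      fun n hn => hrefl _ _ (h n hn)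
    rw [hN, LinearMap.BilinForm.orthogonal_orthogonal hnd hrefl] at this
    exact hu₀W this
  obtain ⟨v₁, hv₁N, hv₁ne⟩ := this
  -- normalize
  set v₂ : V := (B u₀ v₁)⁻¹ • v₁ with hv₂def
  have hv₂N : v₂ ∈ N := N.smul_mem _ hv₁N
  have hBu₀v₂ : B u₀ v₂ = 1 := by
    simp [hv₂def, inv_mul_cancel₀ hv₁ne]
  set v : V := v₂ - (B v₂ v₂ / 2) • u₀ with hvdef
  have hvN : v ∈ N := N.sub_mem hv₂N (N.smul_mem _ hu₀N)
  have hBu₀v : B u₀ v = 1 := by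
    simp [hvdef, hBu₀v₂, hBu₀u₀]
  have hBvu₀ : B v u₀ = 1 := (hsymm v u₀).trans hBu₀v
  have hBvv : B v v = 0 := by
    have h1 : B v₂ u₀ = 1 := (hsymm v₂ u₀).trans hBu₀v₂
    simp only [hvdef, map_sub, map_smul, LinearMap.sub_apply, LinearMap.smul_apply,
      smul_eq_mul, hBu₀v₂, hBu₀u₀, h1]
    field_simp
    ring
  -- orthogonality of members of N with W
  have hBWN : ∀ w ∈ W, ∀ n ∈ N, B w n = 0 := fun w hw n hn => hn w hw
  have hBNW : ∀ n ∈ N, ∀ w ∈ W, B n w = 0 := fun n hn w hw => hrefl _ _ (hn w hw)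
  have hvW : v ∉ W := fun h => by
    have := hWiso v h v h  -- not needed, use B u₀ v
    have : B u₀ v = 0 := hBu₀W v h
    rw [hBu₀v] at this; exact one_ne_zero this
  -- the two subspaces
  set U₂ : Submodule k V := W ⊔ (k ∙ v) with hU₂def
  have hU₂dim : Module.finrank k ↥U₂ = m := by
    rw [hU₂def, aux_finrank_sup W v hvW, hWdim]; omega
  have hmemU₂ : ∀ x ∈ U₂, ∃ w ∈ W, ∃ a : k, x = w + a • v := by
    intro x hx
    obtain ⟨w, hw, y, hy, rfl⟩ := Submodule.mem_sup.mp hx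
    obtain ⟨a, rfl⟩ := Submodule.mem_span_singleton.mp hy
    exact ⟨w, hw, a, rfl⟩
  have hU₂iso : ∀ x ∈ U₂, ∀ y ∈ U₂, B x y = 0 := by
    intro x hx y hy
    obtain ⟨w, hw, a, rfl⟩ := hmemU₂ x hx
    obtain ⟨w', hw', b, rfl⟩ := hmemU₂ y hy
    simp only [map_add, map_smul, LinearMap.add_apply, LinearMap.smul_apply, smul_eq_mul,
      hWiso w hw w' hw', hBWN w hw v hvN, hBNW v hvN w' hw', hBvv]
    ring
  have hWU₂ : W ≤ U₂ := le_sup_left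
  have hvU₂ : v ∈ U₂ := Submodule.mem_sup_right (Submodule.mem_span_singleton_self v)
  have hne : U₀ ≠ U₂ := by
    intro h
    have : B u₀ v = 0 := hU₀iso u₀ hu₀U₀ v (h ▸ hvU₂)
    rw [hBu₀v] at this; exact one_ne_zero this
  refine ⟨U₀, U₂, hne, ⟨hU₀iso, hU₀dim, hWU₀, horth U₀ hU₀iso hWU₀⟩,
    ⟨hU₂iso, hU₂dim, hWU₂, horth U₂ hU₂iso hWU₂⟩, ?_⟩
  -- uniqueness
  -- first: N = (W ⊔ span u₀) ⊔ span v
  have hvWu₀ : v ∉ W ⊔ (k ∙ u₀) := by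
    intro h
    obtain ⟨w, hw, y, hy, hveq⟩ := Submodule.mem_sup.mp h
    obtain ⟨a, rfl⟩ := Submodule.mem_span_singleton.mp hy
    have : B u₀ v = 0 := by
      rw [← hveq]
      simp [hBu₀W w hw, hBu₀u₀]
    rw [hBu₀v] at this; exact one_ne_zero this
  have hPdim : Module.finrank k ↥((W ⊔ (k ∙ u₀)) ⊔ (k ∙ v)) = m + 1 := by
    rw [aux_finrank_sup _ v hvWu₀, aux_finrank_sup W u₀ hu₀W, hWdim]; omega
  have hPN : (W ⊔ (k ∙ u₀)) ⊔ (k ∙ v) = N := by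
    apply Submodule.eq_of_le_of_finrank_eq
    · refine sup_le (sup_le hWN ?_) ?_
      · exact (Submodule.span_singleton_le_iff_mem _ _).mpr hu₀N
      · exact (Submodule.span_singleton_le_iff_mem _ _).mpr hvN
    · rw [hPdim, hNdim]
  have hU₀eq : U₀ = W ⊔ (k ∙ u₀) := by
    refine (Submodule.eq_of_le_of_finrank_eq
      (sup_le hWU₀ ((Submodule.span_singleton_le_iff_mem _ _).mpr hu₀U₀)) ?_).symm
    rw [aux_finrank_sup W u₀ hu₀W, hWdim, hU₀dim]; omega
  intro U hUiso hUdim hWU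
  have hUN : U ≤ N := horth U hUiso hWU
  have hWltU : W < U := lt_of_le_of_ne hWU (fun h => by rw [h, hUdim] at hWdim; omega)
  obtain ⟨u, huU, huW⟩ := SetLike.exists_of_lt hWltU
  have huP : u ∈ (W ⊔ (k ∙ u₀)) ⊔ (k ∙ v) := hPN ▸ hUN huU
  obtain ⟨x, hx, y, hy, hueq⟩ := Submodule.mem_sup.mp huP
  obtain ⟨w, hw, z, hz, hxeq⟩ := Submodule.mem_sup.mp hx
  obtain ⟨a, rfl⟩ := Submodule.mem_span_singleton.mp hz
  obtain ⟨b, rfl⟩ := Submodule.mem_span_singleton.mp hy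
  subst hxeq
  -- compute B u u = 2 a b
  have hBuu : B u u = 0 := hUiso u huU u huU
  have key : a * b = 0 := by
    rw [← hueq] at hBuu
    simp only [map_add, map_smul, LinearMap.add_apply, LinearMap.smul_apply, smul_eq_mul,
      hWiso w hw w hw, hBu₀u₀, hBvv, hBu₀v, hBvu₀,
      hBu₀W w hw, hrefl _ _ (hBu₀W w hw), hBWN w hw v hvN, hBNW v hvN w hw] at hBuu
    have : 2 * (a * b) = 0 := by linear_combination hBuu
    rcases mul_eq_zero.mp this with h | h
    · exact absurd h h2
    · exact h
  rcases mul_eq_zero.mp key with ha | hb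
  · -- a = 0 : u = w + b • v, so v ∈ U and U = U₂
    right
    subst ha
    have hb : b ≠ 0 := by
      rintro rfl
      apply huW
      rw [← hueq]; simpa using hw
    have hvU : v ∈ U := by
      have : v = b⁻¹ • (u - w) := by
        rw [← hueq]; simp [smul_smul, inv_mul_cancel₀ hb]
      rw [this]
      exact U.smul_mem _ (U.sub_mem huU (hWU hw))
    exact (Submodule.eq_of_le_of_finrank_eq
      (sup_le hWU ((Submodule.span_singleton_le_iff_mem _ _).mpr hvU)) (by
        rw [aux_finrank_sup W v hvW, hWdim, hUdim]; omega)).symm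
  · -- b = 0 : u = w + a • u₀, so u₀ ∈ U and U = U₀
    left
    subst hb
    have ha : a ≠ 0 := by
      rintro rfl
      apply huW
      rw [← hueq]; simpa using hw
    have hu₀U : u₀ ∈ U := by
      have : u₀ = a⁻¹ • (u - w) := by
        rw [← hueq]; simp [smul_smul, inv_mul_cancel₀ ha]
      rw [this]
      exact U.smul_mem _ (U.sub_mem huU (hWU hw))
    rw [hU₀eq]
    exact (Submodule.eq_of_le_of_finrank_eq
      (sup_le hWU ((Submodule.span_singleton_le_iff_mem _ _).mpr hu₀U)) (by
        rw [aux_finrank_sup W u₀ hu₀W, hWdim, hUdim]; omega)).symm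
end
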